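/- arXiv:1705.05934 — 5 statements merged into one kernel-verified Lean document; each statement's English description precedes it below -/
import Mathlib

section
/- Let ψ be a hyperexponential Laplace exponent that is not identically zero (i.e. σ > 0, or a ≠ 0, or N + N̂ ≥ 1), and let q > 0 be real. Then every solution z ∈ ℂ of the equation ψ(z) = q is real and is a simple zero of ψ − q (in particular ψ′(z) ≠ 0 at every solution), and the solutions are located as follows: there is exactly one solution in each interval (ρ_{ℓ−1}, ρ_ℓ) for 1 ≤ ℓ ≤ N; exactly one solution in each interval (−ρ̂_ℓ, −ρ̂_{ℓ−1}) for 1 ≤ ℓ ≤ N̂; exactly one solution in (ρ_N, ∞) if σ > 0 or (σ = 0 and a > 0), and none otherwise; exactly one solution in (−∞, −ρ̂_N̂) if σ > 0 or (σ = 0 and a < 0), and none otherwise; and there are no other solutions. -/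
open Finset Set Filter Topology Complex


/-- The Laplace exponent of a hyperexponential Lévy process, extended to a rational
function on `ℂ`.  The positive-jump parameters are `aa ℓ, ρ ℓ` for `ℓ ∈ {1, …, N}` and the
negative-jump parameters are `ah ℓ, ρh ℓ` for `ℓ ∈ {1, …, Nh}`. -/
noncomputable def psi (σ A : ℝ) (N Nh : ℕ) (aa ρ ah ρh : ℕ → ℝ) (z : ℂ) : ℂ :=
  (σ : ℂ) ^ 2 * z ^ 2 / 2 + (A : ℂ) * z
    + z * ∑ ℓ ∈ Finset.Icc 1 N, (aa ℓ : ℂ) / ((ρ ℓ : ℂ) - z)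
    - z * ∑ ℓ ∈ Finset.Icc 1 Nh, (ah ℓ : ℂ) / ((ρh ℓ : ℂ) + z)

namespace HyperexpAux

/-- On the reals, `x ↦ c/(b - x)` tends to `+∞` as `x → b⁻`, for `c > 0`. -/
lemma tendsto_sing_left {c b : ℝ} (hc : 0 < c) :
    Tendsto (fun x => c / (b - x)) (𝓝[<] b) atTop := by
  have h1 : Tendsto (fun x : ℝ => b - x) (𝓝[<] b) (𝓝[>] 0) := by
    rw [tendsto_nhdsWithin_iff]
    constructor
    · have : Tendsto (fun x : ℝ => b - x) (𝓝 b) (𝓝 (b - b)) :=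
        (tendsto_const_nhds.sub tendsto_id)
      simpa using this.mono_left nhdsWithin_le_nhds
    · filter_upwards [self_mem_nhdsWithin] with x hx
      exact mem_Ioi.mpr (by simp at hx ⊢; linarith)
  have h2 : Tendsto (fun y : ℝ => y⁻¹) (𝓝[>] (0:ℝ)) atTop := tendsto_inv_nhdsGT_zero
  have := (h2.comp h1).const_mul_atTop hc
  simpa [div_eq_mul_inv, Function.comp] using this

lemma tendsto_sing_right {c b : ℝ} (hc : 0 < c) :
    Tendsto (fun x => c / (b - x)) (𝓝[>] b) atBot := by
  have key := tendsto_sing_left (b := -b) hc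
  have hmap : Tendsto (fun x : ℝ => -x) (𝓝[>] b) (𝓝[<] (-b)) := by
    rw [tendsto_nhdsWithin_iff]
    refine ⟨(tendsto_neg _).mono_left nhdsWithin_le_nhds, ?_⟩
    · filter_upwards [self_mem_nhdsWithin] with x hx
      simp at hx ⊢; linarith
  have := tendsto_neg_atTop_atBot.comp (key.comp hmap)
  refine this.congr fun x => ?_
  simp only [Function.comp_apply]
  rw [div_eq_mul_inv, div_eq_mul_inv, show b - x = -(-b - -x) by ring, inv_neg, mul_neg]


lemma existsUnique_zero_Ioo {f : ℝ → ℝ} {a b : ℝ} (hab : a < b)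
    (hm : StrictMonoOn f (Ioo a b)) (hc : ContinuousOn f (Ioo a b))
    (h1 : Tendsto f (𝓝[>] a) atBot) (h2 : Tendsto f (𝓝[<] b) atTop) :
    ∃! x, x ∈ Ioo a b ∧ f x = 0 := by
  obtain ⟨u, hu, hfu⟩ : ∃ u, u ∈ Ioo a b ∧ f u < 0 := by
    have : ∀ᶠ x in 𝓝[>] a, x ∈ Ioo a b ∧ f x < 0 := by
      filter_upwards [(Ioo_mem_nhdsGT hab),
        h1.eventually_lt_atBot 0] with x hx hx' using ⟨hx, hx'⟩
    exact this.exists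
  obtain ⟨v, hv, hfv⟩ : ∃ v, v ∈ Ioo a b ∧ 0 < f v := by
    have : ∀ᶠ x in 𝓝[<] b, x ∈ Ioo a b ∧ 0 < f x := by
      filter_upwards [(Ioo_mem_nhdsLT hab),
        h2.eventually_gt_atTop 0] with x hx hx' using ⟨hx, hx'⟩
    exact this.exists
  have huv : u < v := by
    by_contra h
    push_neg at h
    have := hm.monotoneOn hv hu h
    linarith
  have hsub : Icc u v ⊆ Ioo a b := fun x hx => ⟨lt_of_lt_of_le hu.1 hx.1, lt_of_le_of_lt hx.2 hv.2⟩
  obtain ⟨x, hx, hfx⟩ := intermediate_value_Ioo huv.le (hc.mono hsub) (Set.mem_Ioo.mpr ⟨hfu, hfv⟩)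
  have hxmem : x ∈ Ioo a b := hsub ⟨hx.1.le, hx.2.le⟩
  refine ⟨x, ⟨hxmem, hfx⟩, fun y ⟨hy, hfy⟩ => ?_⟩
  exact hm.injOn hy hxmem (by rw [hfy, hfx])

lemma existsUnique_zero_Ioi {f : ℝ → ℝ} {a : ℝ}
    (hm : StrictMonoOn f (Ioi a)) (hc : ContinuousOn f (Ioi a))
    (h1 : Tendsto f (𝓝[>] a) atBot) (h2 : ∃ v ∈ Ioi a, 0 < f v) :
    ∃! x, x ∈ Ioi a ∧ f x = 0 := by
  obtain ⟨v, hv, hfv⟩ := h2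
  obtain ⟨u, hu, hfu⟩ : ∃ u, u ∈ Ioo a v ∧ f u < 0 := by
    have : ∀ᶠ x in 𝓝[>] a, x ∈ Ioo a v ∧ f x < 0 := by
      filter_upwards [(Ioo_mem_nhdsGT hv),
        h1.eventually_lt_atBot 0] with x hx hx' using ⟨hx, hx'⟩
    exact this.exists
  have hsub : Icc u v ⊆ Ioi a := fun x hx => lt_of_lt_of_le hu.1 hx.1
  obtain ⟨x, hx, hfx⟩ := intermediate_value_Ioo hu.2.le (hc.mono hsub) (Set.mem_Ioo.mpr ⟨hfu, hfv⟩)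
  have hxmem : x ∈ Ioi a := hsub ⟨hx.1.le, hx.2.le⟩
  refine ⟨x, ⟨hxmem, hfx⟩, fun y ⟨hy, hfy⟩ => ?_⟩
  exact hm.injOn hy hxmem (by rw [hfy, hfx])

lemma existsUnique_zero_Iio {f : ℝ → ℝ} {b : ℝ}
    (hm : StrictMonoOn f (Iio b)) (hc : ContinuousOn f (Iio b))
    (h1 : ∃ u ∈ Iio b, f u < 0) (h2 : Tendsto f (𝓝[<] b) atTop) :
    ∃! x, x ∈ Iio b ∧ f x = 0 := by
  obtain ⟨u, hu, hfu⟩ := h1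
  obtain ⟨v, hv, hfv⟩ : ∃ v, v ∈ Ioo u b ∧ 0 < f v := by
    have : ∀ᶠ x in 𝓝[<] b, x ∈ Ioo u b ∧ 0 < f x := by
      filter_upwards [(Ioo_mem_nhdsLT hu),
        h2.eventually_gt_atTop 0] with x hx hx' using ⟨hx, hx'⟩
    exact this.exists
  have hsub : Icc u v ⊆ Iio b := fun x hx => lt_of_le_of_lt hx.2 hv.2
  obtain ⟨x, hx, hfx⟩ := intermediate_value_Ioo hv.1.le (hc.mono hsub) (Set.mem_Ioo.mpr ⟨hfu, hfv⟩)
  have hxmem : x ∈ Iio b := hsub ⟨hx.1.le, hx.2.le⟩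
  refine ⟨x, ⟨hxmem, hfx⟩, fun y ⟨hy, hfy⟩ => ?_⟩
  exact hm.injOn hy hxmem (by rw [hfy, hfx])

lemma no_zero_Ioi {f : ℝ → ℝ} {a L : ℝ} (hm : StrictMonoOn f (Ioi a))
    (h2 : Tendsto f atTop (𝓝 L)) (hL : L ≤ 0) : ∀ x ∈ Ioi a, f x < 0 := by
  intro x hx
  have hx1 : x + 1 ∈ Ioi a := by simp at hx ⊢; linarith
  have hle : f (x + 1) ≤ L := by
    refine ge_of_tendsto h2 ?_
    filter_upwards [eventually_ge_atTop (x + 1)] with w hw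
    rcases eq_or_lt_of_le hw with h | h
    · rw [h]
    · exact (hm hx1 (lt_of_lt_of_le hx1 hw) h).le
  calc f x < f (x + 1) := hm hx hx1 (by linarith)
    _ ≤ 0 := hle.trans hL

lemma no_zero_Iio {f : ℝ → ℝ} {b L : ℝ} (hm : StrictMonoOn f (Iio b))
    (h2 : Tendsto f atBot (𝓝 L)) (hL : 0 ≤ L) : ∀ x ∈ Iio b, 0 < f x := by
  intro x hx
  have hx1 : x - 1 ∈ Iio b := by simp at hx ⊢; linarith
  have hle : L ≤ f (x - 1) := by
    refine le_of_tendsto h2 ?_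
    filter_upwards [eventually_le_atBot (x - 1)] with w hw
    rcases eq_or_lt_of_le hw with h | h
    · rw [← h]
    · exact (hm (lt_of_le_of_lt hw hx1) hx1 h).le
  calc (0:ℝ) ≤ f (x - 1) := hL.trans hle
    _ < f x := hm hx1 hx (by linarith)


/-- Real version of `(psi - q)/z`, with general index sets. -/
noncomputable def phiF (σ A : ℝ) (s sh : Finset ℕ) (aa ρ ah ρh : ℕ → ℝ) (q x : ℝ) : ℝ :=
  σ^2*x/2 + A + (∑ ℓ ∈ s, aa ℓ/(ρ ℓ - x))
    - (∑ ℓ ∈ sh, ah ℓ/(ρh ℓ + x)) - q/x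

lemma phiF_split_pos (σ A : ℝ) (s sh : Finset ℕ) (aa ρ ah ρh : ℕ → ℝ) (q x : ℝ)
    {m : ℕ} (hm : m ∈ s) :
    phiF σ A s sh aa ρ ah ρh q x
      = aa m / (ρ m - x) + phiF σ A (s.erase m) sh aa ρ ah ρh q x := by
  unfold phiF
  rw [← Finset.add_sum_erase _ _ hm]
  ring

lemma phiF_split_neg (σ A : ℝ) (s sh : Finset ℕ) (aa ρ ah ρh : ℕ → ℝ) (q x : ℝ)
    {m : ℕ} (hm : m ∈ sh) :
    phiF σ A s sh aa ρ ah ρh q x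
      = ah m / ((-ρh m) - x) + phiF σ A s (sh.erase m) aa ρ ah ρh q x := by
  unfold phiF
  rw [← Finset.add_sum_erase _ _ hm]
  rw [show (-ρh m) - x = -(ρh m + x) by ring, div_neg]
  ring

lemma phiF_split_zero (σ A : ℝ) (s sh : Finset ℕ) (aa ρ ah ρh : ℕ → ℝ) (q x : ℝ) :
    phiF σ A s sh aa ρ ah ρh q x
      = q / ((0:ℝ) - x) + phiF σ A s sh aa ρ ah ρh 0 x := by
  unfold phiF
  rw [zero_sub, div_neg]
  ring

lemma continuousAt_phiF (σ A : ℝ) (s sh : Finset ℕ) (aa ρ ah ρh : ℕ → ℝ) (q b : ℝ)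
    (hb : b ≠ 0 ∨ q = 0)
    (h1 : ∀ ℓ ∈ s, ρ ℓ - b ≠ 0) (h2 : ∀ ℓ ∈ sh, ρh ℓ + b ≠ 0) :
    ContinuousAt (phiF σ A s sh aa ρ ah ρh q) b := by
  unfold phiF
  have c1 : ContinuousAt (fun x : ℝ => ∑ ℓ ∈ s, aa ℓ/(ρ ℓ - x)) b := by
    exact tendsto_finset_sum _ fun ℓ hℓ =>
      continuousAt_const.div (continuousAt_const.sub continuousAt_id) (h1 ℓ hℓ)
  have c2 : ContinuousAt (fun x : ℝ => ∑ ℓ ∈ sh, ah ℓ/(ρh ℓ + x)) b := by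
    exact tendsto_finset_sum _ fun ℓ hℓ =>
      continuousAt_const.div (continuousAt_const.add continuousAt_id) (h2 ℓ hℓ)
  have c3 : ContinuousAt (fun x : ℝ => q/x) b := by
    rcases hb with hb | hb
    · exact continuousAt_const.div continuousAt_id hb
    · subst hb
      simpa [zero_div] using (continuousAt_const : ContinuousAt (fun _ : ℝ => (0:ℝ)) b)
  exact ((((continuousAt_id.const_mul _).div_const _).add continuousAt_const).add c1).sub c2
    |>.sub c3

lemma hasDerivAt_phiF (σ A : ℝ) (s sh : Finset ℕ) (aa ρ ah ρh : ℕ → ℝ) (q x : ℝ)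
    (hx : x ≠ 0) (h1 : ∀ ℓ ∈ s, ρ ℓ - x ≠ 0) (h2 : ∀ ℓ ∈ sh, ρh ℓ + x ≠ 0) :
    HasDerivAt (phiF σ A s sh aa ρ ah ρh q)
      (σ^2/2 + (∑ ℓ ∈ s, aa ℓ/(ρ ℓ - x)^2) + (∑ ℓ ∈ sh, ah ℓ/(ρh ℓ + x)^2) + q/x^2) x := by
  have t1 : HasDerivAt (fun x : ℝ => σ^2*x/2 + A) (σ^2/2) x := by
    simpa using (((hasDerivAt_id x).const_mul (σ^2)).div_const 2).add_const A
  have t2 : HasDerivAt (fun x : ℝ => ∑ ℓ ∈ s, aa ℓ/(ρ ℓ - x))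
      (∑ ℓ ∈ s, aa ℓ/(ρ ℓ - x)^2) x := by
    apply HasDerivAt.fun_sum
    intro ℓ hℓ
    have := (hasDerivAt_const x (aa ℓ)).div ((hasDerivAt_const x (ρ ℓ)).sub (hasDerivAt_id x))
      (h1 ℓ hℓ)
    refine this.congr_deriv ?_
    simp only [Pi.sub_apply, Pi.add_apply, id]
    field_simp
    ring
  have t3 : HasDerivAt (fun x : ℝ => ∑ ℓ ∈ sh, ah ℓ/(ρh ℓ + x))
      (∑ ℓ ∈ sh, -(ah ℓ/(ρh ℓ + x)^2)) x := by
    apply HasDerivAt.fun_sum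
    intro ℓ hℓ
    have := (hasDerivAt_const x (ah ℓ)).div ((hasDerivAt_const x (ρh ℓ)).add (hasDerivAt_id x))
      (h2 ℓ hℓ)
    refine this.congr_deriv ?_
    simp only [Pi.sub_apply, Pi.add_apply, id]
    field_simp
    ring
  have t4 : HasDerivAt (fun x : ℝ => q/x) (-(q/x^2)) x := by
    have := (hasDerivAt_const x q).div (hasDerivAt_id x) hx
    refine this.congr_deriv ?_
    simp only [Pi.sub_apply, Pi.add_apply, id]
    field_simp
    ring
  have := ((t1.add t2).sub t3).sub t4
  refine this.congr_deriv ?_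
  rw [Finset.sum_neg_distrib]
  ring


lemma tendsto_inv_atBot_zero : Tendsto (fun x : ℝ => x⁻¹) atBot (𝓝 0) := by
  have hn : Tendsto (fun x : ℝ => -x) atBot atTop := tendsto_neg_atBot_atTop
  have := ((tendsto_inv_atTop_zero (𝕜 := ℝ)).comp hn).neg
  simp only [neg_zero] at this
  refine this.congr fun x => ?_
  simp only [Function.comp_apply]
  rw [inv_neg, neg_neg]

lemma phiF_mono_cont (σ A : ℝ) (s sh : Finset ℕ) (aa ρ ah ρh : ℕ → ℝ) (q : ℝ)
    (hq : 0 < q) (hpos : ∀ ℓ ∈ s, 0 < aa ℓ) (hposh : ∀ ℓ ∈ sh, 0 < ah ℓ)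
    (D : Set ℝ) (hconv : Convex ℝ D) (hopen : IsOpen D)
    (hD : ∀ x ∈ D, x ≠ 0 ∧ (∀ ℓ ∈ s, ρ ℓ - x ≠ 0) ∧ (∀ ℓ ∈ sh, ρh ℓ + x ≠ 0)) :
    StrictMonoOn (phiF σ A s sh aa ρ ah ρh q) D ∧
      ContinuousOn (phiF σ A s sh aa ρ ah ρh q) D := by
  have hdiff : ∀ x ∈ D, HasDerivAt (phiF σ A s sh aa ρ ah ρh q)
      (σ^2/2 + (∑ ℓ ∈ s, aa ℓ/(ρ ℓ - x)^2) + (∑ ℓ ∈ sh, ah ℓ/(ρh ℓ + x)^2) + q/x^2) x :=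
    fun x hx => hasDerivAt_phiF σ A s sh aa ρ ah ρh q x (hD x hx).1 (hD x hx).2.1 (hD x hx).2.2
  have hcont : ContinuousOn (phiF σ A s sh aa ρ ah ρh q) D :=
    fun x hx => ((hdiff x hx).differentiableAt.continuousAt).continuousWithinAt
  refine ⟨strictMonoOn_of_deriv_pos hconv hcont ?_, hcont⟩
  intro x hx
  rw [hopen.interior_eq] at hx
  rw [(hdiff x hx).deriv]
  have hx0 : x ≠ 0 := (hD x hx).1
  have e1 : (0:ℝ) ≤ σ^2/2 := by positivity
  have e2 : (0:ℝ) ≤ ∑ ℓ ∈ s, aa ℓ/(ρ ℓ - x)^2 :=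
    Finset.sum_nonneg fun ℓ hℓ => div_nonneg (hpos ℓ hℓ).le (sq_nonneg _)
  have e3 : (0:ℝ) ≤ ∑ ℓ ∈ sh, ah ℓ/(ρh ℓ + x)^2 :=
    Finset.sum_nonneg fun ℓ hℓ => div_nonneg (hposh ℓ hℓ).le (sq_nonneg _)
  have e4 : (0:ℝ) < q/x^2 := div_pos hq (by positivity)
  linarith

lemma tendsto_phiF_atTop (σ A : ℝ) (s sh : Finset ℕ) (aa ρ ah ρh : ℕ → ℝ) (q : ℝ) :
    Tendsto (fun x => phiF σ A s sh aa ρ ah ρh q x - σ^2*x/2) atTop (𝓝 A) := by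
  have h1 : Tendsto (fun x : ℝ => ∑ ℓ ∈ s, aa ℓ/(ρ ℓ - x)) atTop (𝓝 0) := by
    rw [show (0:ℝ) = ∑ ℓ ∈ s, (0:ℝ) by simp]
    refine tendsto_finset_sum _ fun ℓ _ => ?_
    have hb : Tendsto (fun x : ℝ => ρ ℓ - x) atTop atBot :=
      tendsto_atBot_add_const_left _ _ tendsto_neg_atTop_atBot
    simpa [div_eq_mul_inv] using (tendsto_inv_atBot_zero.comp hb).const_mul (aa ℓ)
  have h2 : Tendsto (fun x : ℝ => ∑ ℓ ∈ sh, ah ℓ/(ρh ℓ + x)) atTop (𝓝 0) := by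
    rw [show (0:ℝ) = ∑ ℓ ∈ sh, (0:ℝ) by simp]
    refine tendsto_finset_sum _ fun ℓ _ => ?_
    have hb : Tendsto (fun x : ℝ => ρh ℓ + x) atTop atTop :=
      tendsto_atTop_add_const_left _ _ tendsto_id
    simpa [div_eq_mul_inv] using (tendsto_inv_atTop_zero.comp hb).const_mul (ah ℓ)
  have h3 : Tendsto (fun x : ℝ => q/x) atTop (𝓝 0) := by
    simpa [div_eq_mul_inv] using tendsto_inv_atTop_zero.const_mul q
  have := (((tendsto_const_nhds : Tendsto (fun _ : ℝ => A) atTop (𝓝 A)).add h1).sub h2).sub h3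
  simp only [add_zero, sub_zero] at this
  refine this.congr fun x => ?_
  unfold phiF
  ring

lemma tendsto_phiF_atBot (σ A : ℝ) (s sh : Finset ℕ) (aa ρ ah ρh : ℕ → ℝ) (q : ℝ) :
    Tendsto (fun x => phiF σ A s sh aa ρ ah ρh q x - σ^2*x/2) atBot (𝓝 A) := by
  have h1 : Tendsto (fun x : ℝ => ∑ ℓ ∈ s, aa ℓ/(ρ ℓ - x)) atBot (𝓝 0) := by
    rw [show (0:ℝ) = ∑ ℓ ∈ s, (0:ℝ) by simp]
    refine tendsto_finset_sum _ fun ℓ _ => ?_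
    have hb : Tendsto (fun x : ℝ => ρ ℓ - x) atBot atTop :=
      tendsto_atTop_add_const_left _ _ tendsto_neg_atBot_atTop
    simpa [div_eq_mul_inv] using (tendsto_inv_atTop_zero.comp hb).const_mul (aa ℓ)
  have h2 : Tendsto (fun x : ℝ => ∑ ℓ ∈ sh, ah ℓ/(ρh ℓ + x)) atBot (𝓝 0) := by
    rw [show (0:ℝ) = ∑ ℓ ∈ sh, (0:ℝ) by simp]
    refine tendsto_finset_sum _ fun ℓ _ => ?_
    have hb : Tendsto (fun x : ℝ => ρh ℓ + x) atBot atBot :=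
      tendsto_atBot_add_const_left _ _ tendsto_id
    simpa [div_eq_mul_inv] using (tendsto_inv_atBot_zero.comp hb).const_mul (ah ℓ)
  have h3 : Tendsto (fun x : ℝ => q/x) atBot (𝓝 0) := by
    simpa [div_eq_mul_inv] using tendsto_inv_atBot_zero.const_mul q
  have := (((tendsto_const_nhds : Tendsto (fun _ : ℝ => A) atBot (𝓝 A)).add h1).sub h2).sub h3
  simp only [add_zero, sub_zero] at this
  refine this.congr fun x => ?_
  unfold phiF
  ring


section Complexside

variable (σ A : ℝ) (N Nh : ℕ) (aa ρ ah ρh : ℕ → ℝ)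

lemma div_ofReal_sub_im (c r : ℝ) (z : ℂ) :
    ((c:ℂ)/((r:ℂ) - z)).im = c * z.im / normSq ((r:ℂ) - z) := by
  rw [Complex.div_im]
  simp [Complex.sub_im, Complex.ofReal_im, Complex.ofReal_re, Complex.sub_re]
  ring

lemma div_ofReal_add_im (c r : ℝ) (z : ℂ) :
    ((c:ℂ)/((r:ℂ) + z)).im = -(c * z.im) / normSq ((r:ℂ) + z) := by
  rw [Complex.div_im]
  simp [Complex.add_im, Complex.ofReal_im, Complex.ofReal_re, Complex.add_re]
  ring

lemma psi_eq_mul (z : ℂ) :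
    psi σ A N Nh aa ρ ah ρh z
      = z * (((σ^2/2 : ℝ):ℂ) * z + (A:ℂ)
          + (∑ ℓ ∈ Finset.Icc 1 N, (aa ℓ : ℂ) / ((ρ ℓ : ℂ) - z))
          - (∑ ℓ ∈ Finset.Icc 1 Nh, (ah ℓ : ℂ) / ((ρh ℓ : ℂ) + z))) := by
  unfold psi
  push_cast
  ring

lemma root_im_zero {q : ℝ} (hq : 0 < q)
    (hpos : ∀ ℓ ∈ Finset.Icc 1 N, 0 < aa ℓ) (hposh : ∀ ℓ ∈ Finset.Icc 1 Nh, 0 < ah ℓ)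
    {z : ℂ} (hz : psi σ A N Nh aa ρ ah ρh z = (q:ℂ)) : z.im = 0 := by
  have h0 : ((psi σ A N Nh aa ρ ah ρh z - (q:ℂ)) * (starRingEnd ℂ) z).im = 0 := by
    rw [hz]; simp
  set S1 : ℂ := ∑ ℓ ∈ Finset.Icc 1 N, (aa ℓ : ℂ) / ((ρ ℓ : ℂ) - z) with hS1
  set S2 : ℂ := ∑ ℓ ∈ Finset.Icc 1 Nh, (ah ℓ : ℂ) / ((ρh ℓ : ℂ) + z) with hS2
  have key : (psi σ A N Nh aa ρ ah ρh z - (q:ℂ)) * (starRingEnd ℂ) z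
      = ((normSq z : ℝ):ℂ) * (((σ^2/2 : ℝ):ℂ) * z + (A:ℂ) + S1 - S2)
        - (q:ℂ) * (starRingEnd ℂ) z := by
    rw [psi_eq_mul]
    rw [← Complex.mul_conj]
    ring
  rw [key] at h0
  have himS1 : S1.im = z.im * ∑ ℓ ∈ Finset.Icc 1 N, aa ℓ / normSq ((ρ ℓ : ℂ) - z) := by
    rw [hS1, Complex.im_sum, Finset.mul_sum]
    exact Finset.sum_congr rfl fun ℓ _ => by rw [div_ofReal_sub_im]; ring
  have himS2 : S2.im = -(z.im * ∑ ℓ ∈ Finset.Icc 1 Nh, ah ℓ / normSq ((ρh ℓ : ℂ) + z)) := by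
    rw [hS2, Complex.im_sum, Finset.mul_sum]
    rw [← Finset.sum_neg_distrib]
    exact Finset.sum_congr rfl fun ℓ _ => by rw [div_ofReal_add_im]; ring
  have himtot : (((normSq z : ℝ):ℂ) * (((σ^2/2 : ℝ):ℂ) * z + (A:ℂ) + S1 - S2)
        - (q:ℂ) * (starRingEnd ℂ) z).im
      = z.im * (normSq z * (σ^2/2)
          + normSq z * (∑ ℓ ∈ Finset.Icc 1 N, aa ℓ / normSq ((ρ ℓ : ℂ) - z))
          + normSq z * (∑ ℓ ∈ Finset.Icc 1 Nh, ah ℓ / normSq ((ρh ℓ : ℂ) + z))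
          + q) := by
    rw [Complex.sub_im, Complex.mul_im, Complex.mul_im]
    simp only [Complex.ofReal_re, Complex.ofReal_im, Complex.conj_re, Complex.conj_im,
      Complex.add_im, Complex.sub_im, Complex.add_re, Complex.sub_re, Complex.mul_im,
      Complex.mul_re]
    rw [himS1, himS2]
    ring
  rw [himtot] at h0
  rcases mul_eq_zero.mp h0 with h | h
  · exact h
  · exfalso
    have e1 : (0:ℝ) ≤ normSq z * (σ^2/2) := mul_nonneg (normSq_nonneg z) (by positivity)
    have e2 : (0:ℝ) ≤ normSq z * ∑ ℓ ∈ Finset.Icc 1 N, aa ℓ / normSq ((ρ ℓ : ℂ) - z) :=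
      mul_nonneg (normSq_nonneg z) (Finset.sum_nonneg fun ℓ hℓ =>
        div_nonneg (hpos ℓ hℓ).le (normSq_nonneg _))
    have e3 : (0:ℝ) ≤ normSq z * ∑ ℓ ∈ Finset.Icc 1 Nh, ah ℓ / normSq ((ρh ℓ : ℂ) + z) :=
      mul_nonneg (normSq_nonneg z) (Finset.sum_nonneg fun ℓ hℓ =>
        div_nonneg (hposh ℓ hℓ).le (normSq_nonneg _))
    linarith

lemma psi_ofReal (x : ℝ) :
    psi σ A N Nh aa ρ ah ρh (x:ℂ)
      = ((σ^2*x^2/2 + A*x + x*(∑ ℓ ∈ Finset.Icc 1 N, aa ℓ/(ρ ℓ - x))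
          - x*(∑ ℓ ∈ Finset.Icc 1 Nh, ah ℓ/(ρh ℓ + x)) : ℝ) : ℂ) := by
  unfold psi
  push_cast
  ring

lemma psi_root_iff (q : ℝ) (x : ℝ) (hx : x ≠ 0) :
    psi σ A N Nh aa ρ ah ρh (x:ℂ) = (q:ℂ)
      ↔ phiF σ A (Finset.Icc 1 N) (Finset.Icc 1 Nh) aa ρ ah ρh q x = 0 := by
  rw [psi_ofReal, Complex.ofReal_inj]
  have hid : x * phiF σ A (Finset.Icc 1 N) (Finset.Icc 1 Nh) aa ρ ah ρh q x + q
      = σ^2*x^2/2 + A*x + x*(∑ ℓ ∈ Finset.Icc 1 N, aa ℓ/(ρ ℓ - x))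
          - x*(∑ ℓ ∈ Finset.Icc 1 Nh, ah ℓ/(ρh ℓ + x)) := by
    unfold phiF
    field_simp
    ring
  rw [← hid]
  constructor
  · intro h
    have : x * phiF σ A (Finset.Icc 1 N) (Finset.Icc 1 Nh) aa ρ ah ρh q x = 0 := by linarith
    rcases mul_eq_zero.mp this with h' | h'
    · exact absurd h' hx
    · exact h'
  · intro h
    rw [h]
    ring


lemma tendsto_pole_pos (q : ℝ) (s sh : Finset ℕ) {m : ℕ} (hm : m ∈ s) (hc : 0 < aa m)
    (hb : ρ m ≠ 0) (h1 : ∀ j ∈ s.erase m, ρ j - ρ m ≠ 0) (h2 : ∀ j ∈ sh, ρh j + ρ m ≠ 0) :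
    Tendsto (phiF σ A s sh aa ρ ah ρh q) (𝓝[<] (ρ m)) atTop ∧
      Tendsto (phiF σ A s sh aa ρ ah ρh q) (𝓝[>] (ρ m)) atBot := by
  have hcont : ContinuousAt (phiF σ A (s.erase m) sh aa ρ ah ρh q) (ρ m) :=
    continuousAt_phiF σ A _ _ aa ρ ah ρh q (ρ m) (Or.inl hb) h1 h2
  have e : ∀ x, phiF σ A s sh aa ρ ah ρh q x
      = aa m/(ρ m - x) + phiF σ A (s.erase m) sh aa ρ ah ρh q x :=
    fun x => phiF_split_pos σ A s sh aa ρ ah ρh q x hm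
  constructor
  · exact (((tendsto_sing_left hc).atTop_add
      (hcont.tendsto.mono_left nhdsWithin_le_nhds)).congr fun x => (e x).symm)
  · exact (((tendsto_sing_right hc).atBot_add
      (hcont.tendsto.mono_left nhdsWithin_le_nhds)).congr fun x => (e x).symm)

lemma tendsto_pole_neg (q : ℝ) (s sh : Finset ℕ) {m : ℕ} (hm : m ∈ sh) (hc : 0 < ah m)
    (hb : ρh m ≠ 0) (h1 : ∀ j ∈ s, ρ j + ρh m ≠ 0) (h2 : ∀ j ∈ sh.erase m, ρh j - ρh m ≠ 0) :
    Tendsto (phiF σ A s sh aa ρ ah ρh q) (𝓝[<] (-ρh m)) atTop ∧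
      Tendsto (phiF σ A s sh aa ρ ah ρh q) (𝓝[>] (-ρh m)) atBot := by
  have hcont : ContinuousAt (phiF σ A s (sh.erase m) aa ρ ah ρh q) (-ρh m) := by
    refine continuousAt_phiF σ A _ _ aa ρ ah ρh q (-ρh m) (Or.inl (by simpa using hb))
      (fun j hj => ?_) (fun j hj => ?_)
    · have := h1 j hj; intro h; apply this; linarith
    · have := h2 j hj; intro h; apply this; linarith
  have e : ∀ x, phiF σ A s sh aa ρ ah ρh q x
      = ah m/((-ρh m) - x) + phiF σ A s (sh.erase m) aa ρ ah ρh q x :=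
    fun x => phiF_split_neg σ A s sh aa ρ ah ρh q x hm
  constructor
  · exact (((tendsto_sing_left hc).atTop_add
      (hcont.tendsto.mono_left nhdsWithin_le_nhds)).congr fun x => (e x).symm)
  · exact (((tendsto_sing_right hc).atBot_add
      (hcont.tendsto.mono_left nhdsWithin_le_nhds)).congr fun x => (e x).symm)

lemma tendsto_pole_zero (q : ℝ) (hq : 0 < q) (s sh : Finset ℕ)
    (h1 : ∀ j ∈ s, ρ j ≠ 0) (h2 : ∀ j ∈ sh, ρh j ≠ 0) :
    Tendsto (phiF σ A s sh aa ρ ah ρh q) (𝓝[<] (0:ℝ)) atTop ∧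
      Tendsto (phiF σ A s sh aa ρ ah ρh q) (𝓝[>] (0:ℝ)) atBot := by
  have hcont : ContinuousAt (phiF σ A s sh aa ρ ah ρh 0) (0:ℝ) := by
    refine continuousAt_phiF σ A _ _ aa ρ ah ρh 0 0 (Or.inr rfl)
      (fun j hj => by simpa using h1 j hj) (fun j hj => by simpa using h2 j hj)
  have e : ∀ x, phiF σ A s sh aa ρ ah ρh q x
      = q/((0:ℝ) - x) + phiF σ A s sh aa ρ ah ρh 0 x :=
    fun x => phiF_split_zero σ A s sh aa ρ ah ρh q x
  constructor
  · exact (((tendsto_sing_left hq).atTop_add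
      (hcont.tendsto.mono_left nhdsWithin_le_nhds)).congr fun x => (e x).symm)
  · exact (((tendsto_sing_right hq).atBot_add
      (hcont.tendsto.mono_left nhdsWithin_le_nhds)).congr fun x => (e x).symm)

lemma hasDerivAt_psi (z : ℂ)
    (h1 : ∀ ℓ ∈ Finset.Icc 1 N, (ρ ℓ:ℂ) - z ≠ 0)
    (h2 : ∀ ℓ ∈ Finset.Icc 1 Nh, (ρh ℓ:ℂ) + z ≠ 0) :
    HasDerivAt (psi σ A N Nh aa ρ ah ρh)
      ((σ:ℂ)^2*z + (A:ℂ)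
        + ((∑ ℓ ∈ Finset.Icc 1 N, (aa ℓ:ℂ)/((ρ ℓ:ℂ) - z))
            + z * ∑ ℓ ∈ Finset.Icc 1 N, (aa ℓ:ℂ)/((ρ ℓ:ℂ) - z)^2)
        - ((∑ ℓ ∈ Finset.Icc 1 Nh, (ah ℓ:ℂ)/((ρh ℓ:ℂ) + z))
            - z * ∑ ℓ ∈ Finset.Icc 1 Nh, (ah ℓ:ℂ)/((ρh ℓ:ℂ) + z)^2)) z := by
  have u1 : HasDerivAt (fun z : ℂ => (σ:ℂ)^2*z^2/2 + (A:ℂ)*z) ((σ:ℂ)^2*z + (A:ℂ)) z := by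
    have := (((hasDerivAt_pow 2 z).const_mul ((σ:ℂ)^2)).div_const 2).add
      ((hasDerivAt_id z).const_mul (A:ℂ))
    refine this.congr_deriv ?_
    ring
  have u2 : HasDerivAt (fun z : ℂ => ∑ ℓ ∈ Finset.Icc 1 N, (aa ℓ:ℂ)/((ρ ℓ:ℂ) - z))
      (∑ ℓ ∈ Finset.Icc 1 N, (aa ℓ:ℂ)/((ρ ℓ:ℂ) - z)^2) z := by
    apply HasDerivAt.fun_sum
    intro ℓ hℓ
    have := (hasDerivAt_const z ((aa ℓ:ℂ))).div
      ((hasDerivAt_const z ((ρ ℓ:ℂ))).sub (hasDerivAt_id z)) (h1 ℓ hℓ)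
    refine this.congr_deriv ?_
    simp only [Pi.sub_apply, Pi.add_apply, id]
    field_simp
    ring
  have u3 : HasDerivAt (fun z : ℂ => ∑ ℓ ∈ Finset.Icc 1 Nh, (ah ℓ:ℂ)/((ρh ℓ:ℂ) + z))
      (∑ ℓ ∈ Finset.Icc 1 Nh, -((ah ℓ:ℂ)/((ρh ℓ:ℂ) + z)^2)) z := by
    apply HasDerivAt.fun_sum
    intro ℓ hℓ
    have := (hasDerivAt_const z ((ah ℓ:ℂ))).div
      ((hasDerivAt_const z ((ρh ℓ:ℂ))).add (hasDerivAt_id z)) (h2 ℓ hℓ)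
    refine this.congr_deriv ?_
    simp only [Pi.sub_apply, Pi.add_apply, id]
    field_simp
    ring
  have utot := (u1.add ((hasDerivAt_id z).mul u2)).sub ((hasDerivAt_id z).mul u3)
  have : HasDerivAt (psi σ A N Nh aa ρ ah ρh)
      ((σ:ℂ)^2*z + (A:ℂ)
        + (1 * (∑ ℓ ∈ Finset.Icc 1 N, (aa ℓ:ℂ)/((ρ ℓ:ℂ) - z))
            + z * ∑ ℓ ∈ Finset.Icc 1 N, (aa ℓ:ℂ)/((ρ ℓ:ℂ) - z)^2)
        - (1 * (∑ ℓ ∈ Finset.Icc 1 Nh, (ah ℓ:ℂ)/((ρh ℓ:ℂ) + z))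
            + z * ∑ ℓ ∈ Finset.Icc 1 Nh, -((ah ℓ:ℂ)/((ρh ℓ:ℂ) + z)^2))) z := utot
  convert this using 1
  rw [Finset.sum_neg_distrib]
  ring

lemma deriv_psi_ne_zero (q : ℝ) (hq : 0 < q)
    (hpos : ∀ ℓ ∈ Finset.Icc 1 N, 0 < aa ℓ) (hposh : ∀ ℓ ∈ Finset.Icc 1 Nh, 0 < ah ℓ)
    (x : ℝ) (hx : x ≠ 0)
    (hne1 : ∀ ℓ ∈ Finset.Icc 1 N, ρ ℓ - x ≠ 0)
    (hne2 : ∀ ℓ ∈ Finset.Icc 1 Nh, ρh ℓ + x ≠ 0)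
    (hroot : psi σ A N Nh aa ρ ah ρh (x:ℂ) = (q:ℂ)) :
    deriv (psi σ A N Nh aa ρ ah ρh) (x:ℂ) ≠ 0 := by
  have h1 : ∀ ℓ ∈ Finset.Icc 1 N, (ρ ℓ:ℂ) - (x:ℂ) ≠ 0 := fun ℓ hℓ => by
    rw [show (ρ ℓ:ℂ) - (x:ℂ) = ((ρ ℓ - x : ℝ):ℂ) by push_cast; ring]
    exact Complex.ofReal_ne_zero.mpr (hne1 ℓ hℓ)
  have h2 : ∀ ℓ ∈ Finset.Icc 1 Nh, (ρh ℓ:ℂ) + (x:ℂ) ≠ 0 := fun ℓ hℓ => by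
    rw [show (ρh ℓ:ℂ) + (x:ℂ) = ((ρh ℓ + x : ℝ):ℂ) by push_cast; ring]
    exact Complex.ofReal_ne_zero.mpr (hne2 ℓ hℓ)
  have hD := hasDerivAt_psi σ A N Nh aa ρ ah ρh (x:ℂ) h1 h2
  rw [hD.deriv]
  -- rewrite the complex sums as coercions of real sums
  have c1 : (∑ ℓ ∈ Finset.Icc 1 N, (aa ℓ:ℂ)/((ρ ℓ:ℂ) - (x:ℂ)))
      = ((∑ ℓ ∈ Finset.Icc 1 N, aa ℓ/(ρ ℓ - x) : ℝ) : ℂ) := by push_cast; rfl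
  have c2 : (∑ ℓ ∈ Finset.Icc 1 Nh, (ah ℓ:ℂ)/((ρh ℓ:ℂ) + (x:ℂ)))
      = ((∑ ℓ ∈ Finset.Icc 1 Nh, ah ℓ/(ρh ℓ + x) : ℝ) : ℂ) := by push_cast; rfl
  have c1s : (∑ ℓ ∈ Finset.Icc 1 N, (aa ℓ:ℂ)/((ρ ℓ:ℂ) - (x:ℂ))^2)
      = ((∑ ℓ ∈ Finset.Icc 1 N, aa ℓ/(ρ ℓ - x)^2 : ℝ) : ℂ) := by push_cast; rfl
  have c2s : (∑ ℓ ∈ Finset.Icc 1 Nh, (ah ℓ:ℂ)/((ρh ℓ:ℂ) + (x:ℂ))^2)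
      = ((∑ ℓ ∈ Finset.Icc 1 Nh, ah ℓ/(ρh ℓ + x)^2 : ℝ) : ℂ) := by push_cast; rfl
  rw [c1, c2, c1s, c2s]
  set T1 := ∑ ℓ ∈ Finset.Icc 1 N, aa ℓ/(ρ ℓ - x) with hT1
  set T2 := ∑ ℓ ∈ Finset.Icc 1 Nh, ah ℓ/(ρh ℓ + x) with hT2
  set U1 := ∑ ℓ ∈ Finset.Icc 1 N, aa ℓ/(ρ ℓ - x)^2 with hU1
  set U2 := ∑ ℓ ∈ Finset.Icc 1 Nh, ah ℓ/(ρh ℓ + x)^2 with hU2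
  have hcast : (σ:ℂ)^2*(x:ℂ) + (A:ℂ) + ((T1:ℂ) + (x:ℂ)*(U1:ℂ)) - ((T2:ℂ) - (x:ℂ)*(U2:ℂ))
      = ((σ^2*x + A + (T1 + x*U1) - (T2 - x*U2) : ℝ) : ℂ) := by push_cast; ring
  rw [hcast]
  rw [Complex.ofReal_ne_zero]
  -- the real equation satisfied at the root
  have hE : σ^2*x^2/2 + A*x + x*T1 - x*T2 = q := by
    rw [psi_ofReal] at hroot
    exact_mod_cast hroot
  have hU1nn : (0:ℝ) ≤ U1 := Finset.sum_nonneg fun ℓ hℓ =>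
    div_nonneg (hpos ℓ hℓ).le (sq_nonneg _)
  have hU2nn : (0:ℝ) ≤ U2 := Finset.sum_nonneg fun ℓ hℓ =>
    div_nonneg (hposh ℓ hℓ).le (sq_nonneg _)
  intro hzero
  have hprod : (σ^2*x + A + (T1 + x*U1) - (T2 - x*U2)) * x = 0 := by rw [hzero]; ring
  have hval : (σ^2*x + A + (T1 + x*U1) - (T2 - x*U2)) * x
      = σ^2*x^2/2 + q + x^2*U1 + x^2*U2 := by
    linear_combination hE
  rw [hval] at hprod
  have hx2 : (0:ℝ) < x^2 := by positivity
  nlinarith [sq_nonneg x, mul_nonneg hx2.le hU1nn, mul_nonneg hx2.le hU2nn]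

lemma locate (ρ : ℕ → ℝ) (N : ℕ) (x : ℝ) (h0 : ρ 0 < x)
    (hne : ∀ ℓ ∈ Finset.Icc 1 N, x ≠ ρ ℓ) :
    (∃ ℓ ∈ Finset.Icc 1 N, x ∈ Set.Ioo (ρ (ℓ - 1)) (ρ ℓ)) ∨ ρ N < x := by
  induction N with
  | zero => exact Or.inr h0
  | succ n ih =>
    rcases lt_or_ge (ρ (n+1)) x with h | h
    · exact Or.inr h
    · have hxne : x ≠ ρ (n+1) := hne (n+1) (Finset.mem_Icc.mpr ⟨Nat.succ_le_succ (Nat.zero_le n), le_rfl⟩)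
      have hlt : x < ρ (n+1) := lt_of_le_of_ne h hxne
      rcases ih (fun ℓ hℓ => hne ℓ (Finset.mem_Icc.mpr
          ⟨(Finset.mem_Icc.mp hℓ).1, le_trans (Finset.mem_Icc.mp hℓ).2 (Nat.le_succ n)⟩)) with
        ⟨ℓ, hℓ, hx⟩ | h'
      · exact Or.inl ⟨ℓ, Finset.mem_Icc.mpr
          ⟨(Finset.mem_Icc.mp hℓ).1, le_trans (Finset.mem_Icc.mp hℓ).2 (Nat.le_succ n)⟩, hx⟩
      · refine Or.inl ⟨n+1, Finset.mem_Icc.mpr ⟨Nat.succ_le_succ (Nat.zero_le n), le_rfl⟩, ?_⟩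
        simpa using Set.mem_Ioo.mpr ⟨h', hlt⟩

end Complexside

end HyperexpAux

/-- Interlacing property: for `q > 0` all solutions of `ψ(z) = q` are real and simple, there
is exactly one in each interval `(ρ_{ℓ-1}, ρ_ℓ)` and `(-ρ̂_ℓ, -ρ̂_{ℓ-1})`, exactly one in
`(ρ_N, ∞)` iff `σ > 0` or (`σ = 0` and `a > 0`), exactly one in `(-∞, -ρ̂_N̂)` iff `σ > 0` or
(`σ = 0` and `a < 0`), and there are no other solutions. -/
theorem hyperexponential_roots_real_simple_interlacing
    (σ A : ℝ) (N Nh : ℕ) (aa ρ ah ρh : ℕ → ℝ)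
    (hσ : 0 ≤ σ)
    (hpos : ∀ ℓ ∈ Finset.Icc 1 N, 0 < aa ℓ)
    (hposh : ∀ ℓ ∈ Finset.Icc 1 Nh, 0 < ah ℓ)
    (hρ0 : ρ 0 = 0) (hρh0 : ρh 0 = 0)
    (hmono : ∀ i j, i < j → j ≤ N → ρ i < ρ j)
    (hmonoh : ∀ i j, i < j → j ≤ Nh → ρh i < ρh j)
    (hnondeg : 0 < σ ∨ A ≠ 0 ∨ 1 ≤ N + Nh)
    (q : ℝ) (hq : 0 < q) :
    -- every solution (away from the poles) is real, is a simple zero of ψ - q,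
    -- and lies in one of the prescribed intervals
    (∀ z : ℂ,
      (∀ ℓ ∈ Finset.Icc 1 N, z ≠ (ρ ℓ : ℂ)) →
      (∀ ℓ ∈ Finset.Icc 1 Nh, z ≠ (-(ρh ℓ : ℝ) : ℂ)) →
      psi σ A N Nh aa ρ ah ρh z = (q : ℂ) →
      deriv (psi σ A N Nh aa ρ ah ρh) z ≠ 0 ∧
      ∃ x : ℝ, z = (x : ℂ) ∧
        ((∃ ℓ ∈ Finset.Icc 1 N, x ∈ Set.Ioo (ρ (ℓ - 1)) (ρ ℓ)) ∨
         (∃ ℓ ∈ Finset.Icc 1 Nh, x ∈ Set.Ioo (-(ρh ℓ)) (-(ρh (ℓ - 1)))) ∨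
         ((0 < σ ∨ (σ = 0 ∧ 0 < A)) ∧ x ∈ Set.Ioi (ρ N)) ∨
         ((0 < σ ∨ (σ = 0 ∧ A < 0)) ∧ x ∈ Set.Iio (-(ρh Nh))))) ∧
    -- exactly one solution in each interval (ρ_{ℓ-1}, ρ_ℓ)
    (∀ ℓ ∈ Finset.Icc 1 N, ∃! x : ℝ,
        x ∈ Set.Ioo (ρ (ℓ - 1)) (ρ ℓ) ∧ psi σ A N Nh aa ρ ah ρh (x : ℂ) = (q : ℂ)) ∧
    -- exactly one solution in each interval (-ρ̂_ℓ, -ρ̂_{ℓ-1})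
    (∀ ℓ ∈ Finset.Icc 1 Nh, ∃! x : ℝ,
        x ∈ Set.Ioo (-(ρh ℓ)) (-(ρh (ℓ - 1))) ∧ psi σ A N Nh aa ρ ah ρh (x : ℂ) = (q : ℂ)) ∧
    -- exactly one solution in (ρ_N, ∞) iff σ > 0 or (σ = 0 and a > 0)
    ((0 < σ ∨ (σ = 0 ∧ 0 < A)) →
        ∃! x : ℝ, x ∈ Set.Ioi (ρ N) ∧ psi σ A N Nh aa ρ ah ρh (x : ℂ) = (q : ℂ)) ∧
    (¬(0 < σ ∨ (σ = 0 ∧ 0 < A)) →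
        ¬∃ x : ℝ, x ∈ Set.Ioi (ρ N) ∧ psi σ A N Nh aa ρ ah ρh (x : ℂ) = (q : ℂ)) ∧
    -- exactly one solution in (-∞, -ρ̂_N̂) iff σ > 0 or (σ = 0 and a < 0)
    ((0 < σ ∨ (σ = 0 ∧ A < 0)) →
        ∃! x : ℝ, x ∈ Set.Iio (-(ρh Nh)) ∧ psi σ A N Nh aa ρ ah ρh (x : ℂ) = (q : ℂ)) ∧
    (¬(0 < σ ∨ (σ = 0 ∧ A < 0)) →
        ¬∃ x : ℝ, x ∈ Set.Iio (-(ρh Nh)) ∧ psi σ A N Nh aa ρ ah ρh (x : ℂ) = (q : ℂ)) := by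
  classical
  set P := HyperexpAux.phiF σ A (Finset.Icc 1 N) (Finset.Icc 1 Nh) aa ρ ah ρh q with hPdef
  have hρpos : ∀ j ∈ Finset.Icc 1 N, 0 < ρ j := fun j hj => by
    obtain ⟨h1, h2⟩ := Finset.mem_Icc.mp hj
    have := hmono 0 j (by omega) h2
    rwa [hρ0] at this
  have hρhpos : ∀ j ∈ Finset.Icc 1 Nh, 0 < ρh j := fun j hj => by
    obtain ⟨h1, h2⟩ := Finset.mem_Icc.mp hj
    have := hmonoh 0 j (by omega) h2
    rwa [hρh0] at this
  have hρmono' : ∀ i j, i ≤ j → j ≤ N → ρ i ≤ ρ j := fun i j hij hjN => by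
    rcases eq_or_lt_of_le hij with h | h
    · rw [h]
    · exact (hmono i j h hjN).le
  have hρhmono' : ∀ i j, i ≤ j → j ≤ Nh → ρh i ≤ ρh j := fun i j hij hjN => by
    rcases eq_or_lt_of_le hij with h | h
    · rw [h]
    · exact (hmonoh i j h hjN).le
  have hρNnn : 0 ≤ ρ N := by
    rcases Nat.eq_zero_or_pos N with h | h
    · rw [h, hρ0]
    · exact (hρpos N (Finset.mem_Icc.mpr ⟨h, le_rfl⟩)).le
  have hρhNnn : 0 ≤ ρh Nh := by
    rcases Nat.eq_zero_or_pos Nh with h | h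
    · rw [h, hρh0]
    · exact (hρhpos Nh (Finset.mem_Icc.mpr ⟨h, le_rfl⟩)).le
  have hcondpos : ∀ x : ℝ, 0 < x → (∀ j ∈ Finset.Icc 1 N, ρ j - x ≠ 0) →
      (x ≠ 0 ∧ (∀ j ∈ Finset.Icc 1 N, ρ j - x ≠ 0) ∧ (∀ j ∈ Finset.Icc 1 Nh, ρh j + x ≠ 0)) :=
    fun x hx h => ⟨ne_of_gt hx, h,
      fun j hj => by have := hρhpos j hj; intro hc; linarith⟩
  have hcondneg : ∀ x : ℝ, x < 0 → (∀ j ∈ Finset.Icc 1 Nh, ρh j + x ≠ 0) →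
      (x ≠ 0 ∧ (∀ j ∈ Finset.Icc 1 N, ρ j - x ≠ 0) ∧ (∀ j ∈ Finset.Icc 1 Nh, ρh j + x ≠ 0)) :=
    fun x hx h => ⟨ne_of_lt hx,
      fun j hj => by have := hρpos j hj; intro hc; linarith, h⟩
  have hmc := fun (D : Set ℝ) hconv hopen hD =>
    HyperexpAux.phiF_mono_cont σ A (Finset.Icc 1 N) (Finset.Icc 1 Nh) aa ρ ah ρh q hq
      hpos hposh D hconv hopen hD
  -- good-set conditions for each region
  have hDioo : ∀ ℓ ∈ Finset.Icc 1 N, ∀ x ∈ Set.Ioo (ρ (ℓ-1)) (ρ ℓ),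
      x ≠ 0 ∧ (∀ j ∈ Finset.Icc 1 N, ρ j - x ≠ 0) ∧ (∀ j ∈ Finset.Icc 1 Nh, ρh j + x ≠ 0) := by
    intro ℓ hℓ x hx
    obtain ⟨h1ℓ, hℓN⟩ := Finset.mem_Icc.mp hℓ
    have hleft : 0 ≤ ρ (ℓ-1) := by
      rcases Nat.eq_or_lt_of_le h1ℓ with h | h
      · rw [← h]; simp [hρ0]
      · exact (hρpos (ℓ-1) (Finset.mem_Icc.mpr ⟨by omega, by omega⟩)).le
    have hx0 : 0 < x := lt_of_le_of_lt hleft hx.1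
    refine hcondpos x hx0 ?_
    intro j hj
    obtain ⟨h1j, hjN⟩ := Finset.mem_Icc.mp hj
    rcases le_or_gt j (ℓ-1) with h | h
    · have h2 : ρ j ≤ ρ (ℓ-1) := hρmono' j (ℓ-1) h (by omega)
      have := hx.1; intro hc; linarith
    · have hℓj : ℓ ≤ j := by omega
      have h2 : ρ ℓ ≤ ρ j := hρmono' ℓ j hℓj hjN
      have := hx.2; intro hc; linarith
  have hDiooN : ∀ ℓ ∈ Finset.Icc 1 Nh, ∀ x ∈ Set.Ioo (-(ρh ℓ)) (-(ρh (ℓ-1))),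
      x ≠ 0 ∧ (∀ j ∈ Finset.Icc 1 N, ρ j - x ≠ 0) ∧ (∀ j ∈ Finset.Icc 1 Nh, ρh j + x ≠ 0) := by
    intro ℓ hℓ x hx
    obtain ⟨h1ℓ, hℓN⟩ := Finset.mem_Icc.mp hℓ
    have hright : 0 ≤ ρh (ℓ-1) := by
      rcases Nat.eq_or_lt_of_le h1ℓ with h | h
      · rw [← h]; simp [hρh0]
      · exact (hρhpos (ℓ-1) (Finset.mem_Icc.mpr ⟨by omega, by omega⟩)).le
    have hx0 : x < 0 := lt_of_lt_of_le hx.2 (by linarith)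
    refine hcondneg x hx0 ?_
    intro j hj
    obtain ⟨h1j, hjN⟩ := Finset.mem_Icc.mp hj
    rcases le_or_gt j (ℓ-1) with h | h
    · have h2 : ρh j ≤ ρh (ℓ-1) := hρhmono' j (ℓ-1) h (by omega)
      have := hx.2; intro hc; linarith
    · have hℓj : ℓ ≤ j := by omega
      have h2 : ρh ℓ ≤ ρh j := hρhmono' ℓ j hℓj hjN
      have := hx.1; intro hc; linarith
  have hDIoi : ∀ x ∈ Set.Ioi (ρ N),
      x ≠ 0 ∧ (∀ j ∈ Finset.Icc 1 N, ρ j - x ≠ 0) ∧ (∀ j ∈ Finset.Icc 1 Nh, ρh j + x ≠ 0) := by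
    intro x hx
    have hx' : ρ N < x := hx
    refine hcondpos x (lt_of_le_of_lt hρNnn hx') ?_
    intro j hj
    have h2 : ρ j ≤ ρ N := hρmono' j N (Finset.mem_Icc.mp hj).2 le_rfl
    intro hc; linarith
  have hDIio : ∀ x ∈ Set.Iio (-(ρh Nh)),
      x ≠ 0 ∧ (∀ j ∈ Finset.Icc 1 N, ρ j - x ≠ 0) ∧ (∀ j ∈ Finset.Icc 1 Nh, ρh j + x ≠ 0) := by
    intro x hx
    have hx' : x < -(ρh Nh) := hx
    refine hcondneg x (by linarith) ?_
    intro j hj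
    have h2 : ρh j ≤ ρh Nh := hρhmono' j Nh (Finset.mem_Icc.mp hj).2 le_rfl
    intro hc; linarith
  -- pole limits
  have hpoleP : ∀ m ∈ Finset.Icc 1 N,
      Tendsto P (𝓝[<] (ρ m)) atTop ∧ Tendsto P (𝓝[>] (ρ m)) atBot := by
    intro m hm
    refine HyperexpAux.tendsto_pole_pos σ A aa ρ ah ρh q _ _ hm (hpos m hm)
      (ne_of_gt (hρpos m hm)) ?_ ?_
    · intro j hj
      obtain ⟨hjm, hjs⟩ := Finset.mem_erase.mp hj
      obtain ⟨h1j, hjN⟩ := Finset.mem_Icc.mp hjs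
      rcases lt_or_gt_of_ne hjm with h | h
      · exact ne_of_lt (by have := hmono j m h (Finset.mem_Icc.mp hm).2; linarith)
      · exact ne_of_gt (by have := hmono m j h hjN; linarith)
    · exact fun j hj => ne_of_gt (add_pos (hρhpos j hj) (hρpos m hm))
  have hpoleN : ∀ m ∈ Finset.Icc 1 Nh,
      Tendsto P (𝓝[<] (-(ρh m))) atTop ∧ Tendsto P (𝓝[>] (-(ρh m))) atBot := by
    intro m hm
    refine HyperexpAux.tendsto_pole_neg σ A aa ρ ah ρh q _ _ hm (hposh m hm)
      (ne_of_gt (hρhpos m hm)) ?_ ?_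
    · exact fun j hj => ne_of_gt (add_pos (hρpos j hj) (hρhpos m hm))
    · intro j hj
      obtain ⟨hjm, hjs⟩ := Finset.mem_erase.mp hj
      obtain ⟨h1j, hjN⟩ := Finset.mem_Icc.mp hjs
      rcases lt_or_gt_of_ne hjm with h | h
      · exact ne_of_lt (by have := hmonoh j m h (Finset.mem_Icc.mp hm).2; linarith)
      · exact ne_of_gt (by have := hmonoh m j h hjN; linarith)
  have hpole0 : Tendsto P (𝓝[<] (0:ℝ)) atTop ∧ Tendsto P (𝓝[>] (0:ℝ)) atBot :=
    HyperexpAux.tendsto_pole_zero σ A aa ρ ah ρh q hq _ _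
      (fun j hj => ne_of_gt (hρpos j hj)) (fun j hj => ne_of_gt (hρhpos j hj))
  have hleftlim : ∀ ℓ ∈ Finset.Icc 1 N, Tendsto P (𝓝[>] (ρ (ℓ-1))) atBot := by
    intro ℓ hℓ
    obtain ⟨h1ℓ, hℓN⟩ := Finset.mem_Icc.mp hℓ
    rcases Nat.eq_or_lt_of_le h1ℓ with h | h
    · rw [← h]; simpa [hρ0] using hpole0.2
    · exact (hpoleP (ℓ-1) (Finset.mem_Icc.mpr ⟨by omega, by omega⟩)).2
  have hrightlimN : ∀ ℓ ∈ Finset.Icc 1 Nh, Tendsto P (𝓝[<] (-(ρh (ℓ-1)))) atTop := by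
    intro ℓ hℓ
    obtain ⟨h1ℓ, hℓN⟩ := Finset.mem_Icc.mp hℓ
    rcases Nat.eq_or_lt_of_le h1ℓ with h | h
    · rw [← h]; simpa [hρh0] using hpole0.1
    · exact (hpoleN (ℓ-1) (Finset.mem_Icc.mpr ⟨by omega, by omega⟩)).1
  have hleftIoi : Tendsto P (𝓝[>] (ρ N)) atBot := by
    rcases Nat.eq_zero_or_pos N with h | h
    · rw [h]; simpa [hρ0] using hpole0.2
    · exact (hpoleP N (Finset.mem_Icc.mpr ⟨h, le_rfl⟩)).2
  have hrightIio : Tendsto P (𝓝[<] (-(ρh Nh))) atTop := by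
    rcases Nat.eq_zero_or_pos Nh with h | h
    · rw [h]; simpa [hρh0] using hpole0.1
    · exact (hpoleN Nh (Finset.mem_Icc.mpr ⟨h, le_rfl⟩)).1
  have hTop := HyperexpAux.tendsto_phiF_atTop σ A (Finset.Icc 1 N) (Finset.Icc 1 Nh) aa ρ ah ρh q
  have hBot := HyperexpAux.tendsto_phiF_atBot σ A (Finset.Icc 1 N) (Finset.Icc 1 Nh) aa ρ ah ρh q
  obtain ⟨hmIoi, hcIoi⟩ := hmc (Set.Ioi (ρ N)) (convex_Ioi _) isOpen_Ioi hDIoi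
  obtain ⟨hmIio, hcIio⟩ := hmc (Set.Iio (-(ρh Nh))) (convex_Iio _) isOpen_Iio hDIio
  have htrans : ∀ (R : Set ℝ), (∀ x ∈ R, x ≠ 0) →
      (∃! x, x ∈ R ∧ P x = 0) →
      (∃! x : ℝ, x ∈ R ∧ psi σ A N Nh aa ρ ah ρh (x:ℂ) = (q:ℂ)) := by
    intro R hR hEU
    obtain ⟨x, ⟨hxR, hxP⟩, huniq⟩ := hEU
    exact ⟨x, ⟨hxR, (HyperexpAux.psi_root_iff σ A N Nh aa ρ ah ρh q x (hR x hxR)).mpr hxP⟩,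
      fun y hy => huniq y ⟨hy.1,
        (HyperexpAux.psi_root_iff σ A N Nh aa ρ ah ρh q y (hR y hy.1)).mp hy.2⟩⟩
  have part2 : ∀ ℓ ∈ Finset.Icc 1 N, ∃! x : ℝ,
      x ∈ Set.Ioo (ρ (ℓ - 1)) (ρ ℓ) ∧ psi σ A N Nh aa ρ ah ρh (x : ℂ) = (q : ℂ) := by
    intro ℓ hℓ
    obtain ⟨h1ℓ, hℓN⟩ := Finset.mem_Icc.mp hℓ
    have hab : ρ (ℓ-1) < ρ ℓ := hmono (ℓ-1) ℓ (by omega) hℓN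
    obtain ⟨hm', hc'⟩ := hmc (Set.Ioo (ρ (ℓ-1)) (ρ ℓ)) (convex_Ioo _ _) isOpen_Ioo (hDioo ℓ hℓ)
    exact htrans _ (fun x hx => (hDioo ℓ hℓ x hx).1)
      (HyperexpAux.existsUnique_zero_Ioo hab hm' hc' (hleftlim ℓ hℓ) (hpoleP ℓ hℓ).1)
  have part3 : ∀ ℓ ∈ Finset.Icc 1 Nh, ∃! x : ℝ,
      x ∈ Set.Ioo (-(ρh ℓ)) (-(ρh (ℓ - 1))) ∧ psi σ A N Nh aa ρ ah ρh (x : ℂ) = (q : ℂ) := by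
    intro ℓ hℓ
    obtain ⟨h1ℓ, hℓN⟩ := Finset.mem_Icc.mp hℓ
    have hab : -(ρh ℓ) < -(ρh (ℓ-1)) := neg_lt_neg (hmonoh (ℓ-1) ℓ (by omega) hℓN)
    obtain ⟨hm', hc'⟩ := hmc (Set.Ioo (-(ρh ℓ)) (-(ρh (ℓ-1)))) (convex_Ioo _ _) isOpen_Ioo
      (hDiooN ℓ hℓ)
    exact htrans _ (fun x hx => (hDiooN ℓ hℓ x hx).1)
      (HyperexpAux.existsUnique_zero_Ioo hab hm' hc' (hpoleN ℓ hℓ).2 (hrightlimN ℓ hℓ))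
  have part4 : (0 < σ ∨ (σ = 0 ∧ 0 < A)) →
      ∃! x : ℝ, x ∈ Set.Ioi (ρ N) ∧ psi σ A N Nh aa ρ ah ρh (x : ℂ) = (q : ℂ) := by
    intro hcase
    have hv : ∃ v ∈ Set.Ioi (ρ N), 0 < P v := by
      rcases hcase with hσ' | ⟨hσ0, hA⟩
      · have h1 : Tendsto (fun x : ℝ => σ^2/2 * x) atTop atTop :=
          Tendsto.const_mul_atTop (by positivity) tendsto_id
        have hPtop : Tendsto P atTop atTop :=
          (h1.atTop_add hTop).congr fun x => by rw [hPdef]; ring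
        obtain ⟨v, hv⟩ :=
          ((hPtop.eventually_gt_atTop 0).and (eventually_gt_atTop (ρ N))).exists
        exact ⟨v, hv.2, hv.1⟩
      · have hPA : Tendsto P atTop (𝓝 A) := hTop.congr fun x => by rw [hPdef, hσ0]; ring
        obtain ⟨v, hv⟩ :=
          ((hPA.eventually (lt_mem_nhds hA)).and (eventually_gt_atTop (ρ N))).exists
        exact ⟨v, hv.2, hv.1⟩
    exact htrans _ (fun x hx => (hDIoi x hx).1)
      (HyperexpAux.existsUnique_zero_Ioi hmIoi hcIoi hleftIoi hv)
  have part5 : ¬(0 < σ ∨ (σ = 0 ∧ 0 < A)) →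
      ¬∃ x : ℝ, x ∈ Set.Ioi (ρ N) ∧ psi σ A N Nh aa ρ ah ρh (x : ℂ) = (q : ℂ) := by
    intro hcase hex
    obtain ⟨x, hx, hroot⟩ := hex
    push_neg at hcase
    obtain ⟨hc1, hc2⟩ := hcase
    have hσ0 : σ = 0 := le_antisymm hc1 hσ
    have hA0 : A ≤ 0 := hc2 hσ0
    have hPA : Tendsto P atTop (𝓝 A) := hTop.congr fun x => by rw [hPdef, hσ0]; ring
    have hlt := HyperexpAux.no_zero_Ioi hmIoi hPA hA0 x hx
    have h0 := (HyperexpAux.psi_root_iff σ A N Nh aa ρ ah ρh q x (hDIoi x hx).1).mp hroot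
    rw [← hPdef] at h0
    linarith
  have part6 : (0 < σ ∨ (σ = 0 ∧ A < 0)) →
      ∃! x : ℝ, x ∈ Set.Iio (-(ρh Nh)) ∧ psi σ A N Nh aa ρ ah ρh (x : ℂ) = (q : ℂ) := by
    intro hcase
    have hu : ∃ u ∈ Set.Iio (-(ρh Nh)), P u < 0 := by
      rcases hcase with hσ' | ⟨hσ0, hA⟩
      · have h1 : Tendsto (fun x : ℝ => σ^2/2 * x) atBot atBot :=
          Tendsto.const_mul_atBot (by positivity) tendsto_id
        have hPbot : Tendsto P atBot atBot :=
          (h1.atBot_add hBot).congr fun x => by rw [hPdef]; ring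
        obtain ⟨u, hu⟩ :=
          ((hPbot.eventually_lt_atBot 0).and (eventually_lt_atBot (-(ρh Nh)))).exists
        exact ⟨u, hu.2, hu.1⟩
      · have hPA : Tendsto P atBot (𝓝 A) := hBot.congr fun x => by rw [hPdef, hσ0]; ring
        obtain ⟨u, hu⟩ :=
          ((hPA.eventually (gt_mem_nhds hA)).and (eventually_lt_atBot (-(ρh Nh)))).exists
        exact ⟨u, hu.2, hu.1⟩
    exact htrans _ (fun x hx => (hDIio x hx).1)
      (HyperexpAux.existsUnique_zero_Iio hmIio hcIio hu hrightIio)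
  have part7 : ¬(0 < σ ∨ (σ = 0 ∧ A < 0)) →
      ¬∃ x : ℝ, x ∈ Set.Iio (-(ρh Nh)) ∧ psi σ A N Nh aa ρ ah ρh (x : ℂ) = (q : ℂ) := by
    intro hcase hex
    obtain ⟨x, hx, hroot⟩ := hex
    push_neg at hcase
    obtain ⟨hc1, hc2⟩ := hcase
    have hσ0 : σ = 0 := le_antisymm hc1 hσ
    have hA0 : 0 ≤ A := hc2 hσ0
    have hPA : Tendsto P atBot (𝓝 A) := hBot.congr fun x => by rw [hPdef, hσ0]; ring
    have hgt := HyperexpAux.no_zero_Iio hmIio hPA hA0 x hx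
    have h0 := (HyperexpAux.psi_root_iff σ A N Nh aa ρ ah ρh q x (hDIio x hx).1).mp hroot
    rw [← hPdef] at h0
    linarith
  have part1 : ∀ z : ℂ,
      (∀ ℓ ∈ Finset.Icc 1 N, z ≠ (ρ ℓ : ℂ)) →
      (∀ ℓ ∈ Finset.Icc 1 Nh, z ≠ (-(ρh ℓ : ℝ) : ℂ)) →
      psi σ A N Nh aa ρ ah ρh z = (q : ℂ) →
      deriv (psi σ A N Nh aa ρ ah ρh) z ≠ 0 ∧
      ∃ x : ℝ, z = (x : ℂ) ∧
        ((∃ ℓ ∈ Finset.Icc 1 N, x ∈ Set.Ioo (ρ (ℓ - 1)) (ρ ℓ)) ∨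
         (∃ ℓ ∈ Finset.Icc 1 Nh, x ∈ Set.Ioo (-(ρh ℓ)) (-(ρh (ℓ - 1)))) ∨
         ((0 < σ ∨ (σ = 0 ∧ 0 < A)) ∧ x ∈ Set.Ioi (ρ N)) ∨
         ((0 < σ ∨ (σ = 0 ∧ A < 0)) ∧ x ∈ Set.Iio (-(ρh Nh)))) := by
    intro z hz1 hz2 hzroot
    have him : z.im = 0 :=
      HyperexpAux.root_im_zero σ A N Nh aa ρ ah ρh hq hpos hposh hzroot
    set x := z.re with hxdef
    have hzx : z = (x : ℂ) := by
      apply Complex.ext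
      · simp [hxdef]
      · simp [him]
    rw [hzx] at hzroot hz1 hz2 ⊢
    have hx0 : x ≠ 0 := by
      intro h
      rw [h] at hzroot
      have h2 : q = 0 := by simpa [psi] using hzroot.symm
      linarith
    have hne1 : ∀ j ∈ Finset.Icc 1 N, ρ j - x ≠ 0 := by
      intro j hj hc
      exact hz1 j hj (by rw [show x = ρ j from by linarith])
    have hne2 : ∀ j ∈ Finset.Icc 1 Nh, ρh j + x ≠ 0 := by
      intro j hj hc
      refine hz2 j hj ?_
      rw [show x = -(ρh j) from by linarith]
      push_cast
      ring
    have hProot : P x = 0 := by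
      have := (HyperexpAux.psi_root_iff σ A N Nh aa ρ ah ρh q x hx0).mp hzroot
      rwa [← hPdef] at this
    constructor
    · exact HyperexpAux.deriv_psi_ne_zero σ A N Nh aa ρ ah ρh q hq hpos hposh x hx0
        hne1 hne2 hzroot
    · refine ⟨x, rfl, ?_⟩
      rcases lt_trichotomy x 0 with hneg | h00 | hposx
      · have hlocate := HyperexpAux.locate ρh Nh (-x) (by rw [hρh0]; linarith)
          (fun ℓ hℓ hc => hne2 ℓ hℓ (by linarith))
        rcases hlocate with ⟨ℓ, hℓ, hmem⟩ | hout
        · refine Or.inr (Or.inl ⟨ℓ, hℓ, ?_⟩)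
          constructor
          · have := hmem.2; linarith
          · have := hmem.1; linarith
        · have hxout : x ∈ Set.Iio (-(ρh Nh)) := by
            simp only [Set.mem_Iio]; linarith
          by_cases hcase : 0 < σ ∨ (σ = 0 ∧ A < 0)
          · exact Or.inr (Or.inr (Or.inr ⟨hcase, hxout⟩))
          · exfalso
            push_neg at hcase
            obtain ⟨hc1, hc2⟩ := hcase
            have hσ0 : σ = 0 := le_antisymm hc1 hσ
            have hA0 : 0 ≤ A := hc2 hσ0
            have hPA : Tendsto P atBot (𝓝 A) := hBot.congr fun x => by rw [hPdef, hσ0]; ring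
            have := HyperexpAux.no_zero_Iio hmIio hPA hA0 x hxout
            rw [hPdef] at hProot
            linarith
      · exact absurd h00 hx0
      · have hlocate := HyperexpAux.locate ρ N x (by rw [hρ0]; exact hposx)
          (fun ℓ hℓ hc => hne1 ℓ hℓ (by linarith))
        rcases hlocate with ⟨ℓ, hℓ, hmem⟩ | hout
        · exact Or.inl ⟨ℓ, hℓ, hmem⟩
        · by_cases hcase : 0 < σ ∨ (σ = 0 ∧ 0 < A)
          · exact Or.inr (Or.inr (Or.inl ⟨hcase, hout⟩))
          · exfalso
            push_neg at hcase
            obtain ⟨hc1, hc2⟩ := hcase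
            have hσ0 : σ = 0 := le_antisymm hc1 hσ
            have hA0 : A ≤ 0 := hc2 hσ0
            have hPA : Tendsto P atTop (𝓝 A) := hTop.congr fun x => by rw [hPdef, hσ0]; ring
            have := HyperexpAux.no_zero_Ioi hmIoi hPA hA0 x hout
            rw [hPdef] at hProot
            linarith
  exact ⟨part1, part2, part3, part4, part5, part6, part7⟩
end

section
/- Assume σ > 0. Then there exist R > 0 and a sequence (c_i)_{i≥1} of real numbers with c_1 = σ/√2 such that the series ∑_{i=1}^∞ c_i q^{−i/2} converges absolutely for every q ∈ ℂ with |q| > R, and for every real q > R one has 1/ζ_{N+1}(q) = ∑_{i=1}^∞ c_i q^{−i/2} and 1/ζ̂_{N̂+1}(q) = −∑_{i=1}^∞ (−1)^i c_i q^{−i/2}. -/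
open Filter Finset
open scoped NNReal ENNReal Topology

set_option maxHeartbeats 2000000

lemma local_inverse_series (G : ℂ → ℂ) (hG : AnalyticAt ℂ G 0) (hG0 : G 0 = 0)
    (hg0 : deriv G 0 ≠ 0) :
    ∃ δ > (0:ℝ), ∃ p : FormalMultilinearSeries ℂ ℂ ℂ, ∃ H : ℂ → ℂ,
      p.coeff 0 = 0 ∧ p.coeff 1 = (deriv G 0)⁻¹ ∧
      Summable (fun n : ℕ => ‖p n‖ * δ ^ n) ∧
      (∀ w : ℂ, ‖w‖ < δ → HasSum (fun n : ℕ => p.coeff n * w ^ n) (H w)) ∧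
      (∀ u : ℂ, ‖u‖ < δ → H (G u) = u) := by
  obtain ⟨pG, hpG⟩ := hG
  have hstrict : HasStrictDerivAt G (deriv G 0) 0 := by
    have h := hpG.hasStrictDerivAt
    rwa [← hpG.deriv] at h
  set i := ContinuousLinearEquiv.unitsEquivAut ℂ (Units.mk0 _ hg0) with hi
  have hfd := hstrict.hasStrictFDerivAt_equiv hg0
  set f := hfd.toOpenPartialHomeomorph G with hf
  have h0 : (0:ℂ) ∈ f.source := hfd.mem_toOpenPartialHomeomorph_source
  have hp1 : pG 1 = (continuousMultilinearCurryFin1 ℂ ℂ ℂ).symm (i : ℂ →L[ℂ] ℂ) := by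
    have h' : fderiv ℂ G 0 = (i : ℂ →L[ℂ] ℂ) := hfd.hasFDerivAt.fderiv
    simp [← h', hpG.fderiv_eq]
  have hGf : HasFPowerSeriesAt (↑f) pG 0 := by
    rwa [hfd.toOpenPartialHomeomorph_coe]
  have hsymm : HasFPowerSeriesAt f.symm (pG.leftInv i 0) 0 := by
    have h := f.hasFPowerSeriesAt_symm h0 hGf hp1
    have : (f : ℂ → ℂ) 0 = 0 := by rw [hfd.toOpenPartialHomeomorph_coe]; exact hG0
    rwa [this] at h
  set p := pG.leftInv i 0 with hp
  have hc0 : p.coeff 0 = 0 := by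
    simp [hp, FormalMultilinearSeries.coeff, FormalMultilinearSeries.leftInv_coeff_zero]
  have hc1 : p.coeff 1 = (deriv G 0)⁻¹ := by
    simp [hp, FormalMultilinearSeries.coeff, FormalMultilinearSeries.leftInv_coeff_one, hi]
  obtain ⟨r, hball⟩ := hsymm
  obtain ⟨δ1, hδ1pos, hδ1r⟩ := ENNReal.lt_iff_exists_nnreal_btwn.1 hball.r_pos
  obtain ⟨δ2, hδ2pos, hδ2sub⟩ := Metric.isOpen_iff.1 f.open_source 0 h0
  refine ⟨min δ1 δ2, lt_min (by exact_mod_cast hδ1pos) hδ2pos, p, f.symm, hc0, hc1, ?_, ?_, ?_⟩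
  · have hsum := p.summable_norm_mul_pow (hδ1r.trans_le hball.r_le)
    refine hsum.of_nonneg_of_le (fun n => by positivity) (fun n => ?_)
    exact mul_le_mul_of_nonneg_left
      (pow_le_pow_left₀ (le_min (by positivity) hδ2pos.le) (min_le_left _ _) n) (norm_nonneg _)
  · intro w hw
    have hmem : w ∈ EMetric.ball (0:ℂ) r := by
      change edist w 0 < r
      rw [edist_zero_right]
      calc (‖w‖₊ : ℝ≥0∞) < δ1 := by
            exact_mod_cast (lt_of_lt_of_le hw (min_le_left _ _) : ‖w‖ < δ1)
        _ < r := hδ1r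
    have h := hball.hasSum hmem
    simp only [zero_add] at h
    simpa [FormalMultilinearSeries.apply_eq_pow_smul_coeff, smul_eq_mul, mul_comm] using h
  · intro u hu
    have hus : u ∈ f.source := hδ2sub (by
      simp only [Metric.mem_ball, dist_zero_right]
      exact lt_of_lt_of_le hu (min_le_right _ _))
    have := f.left_inv hus
    rwa [hfd.toOpenPartialHomeomorph_coe] at this

noncomputable def Faux (σ A : ℝ) (N Nh : ℕ) (aa ρ ah ρh : ℕ → ℝ) (u : ℂ) : ℂ :=
  (σ : ℂ) ^ 2 / 2 + (A : ℂ) * u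
    + ∑ ℓ ∈ Finset.Icc 1 N, (aa ℓ : ℂ) * u ^ 2 / ((ρ ℓ : ℂ) * u - 1)
    - ∑ ℓ ∈ Finset.Icc 1 Nh, (ah ℓ : ℂ) * u ^ 2 / ((ρh ℓ : ℂ) * u + 1)

lemma Faux_analyticAt (σ A : ℝ) (N Nh : ℕ) (aa ρ ah ρh : ℕ → ℝ) :
    AnalyticAt ℂ (Faux σ A N Nh aa ρ ah ρh) 0 := by
  unfold Faux
  apply AnalyticAt.sub
  · apply AnalyticAt.add
    · exact analyticAt_const.add (analyticAt_const.mul analyticAt_id)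
    · apply Finset.analyticAt_fun_sum
      intro ℓ _
      exact (analyticAt_const.mul (analyticAt_id.pow 2)).div
        ((analyticAt_const.mul analyticAt_id).sub analyticAt_const) (by simp)
  · apply Finset.analyticAt_fun_sum
    intro ℓ _
    exact (analyticAt_const.mul (analyticAt_id.pow 2)).div
      ((analyticAt_const.mul analyticAt_id).add analyticAt_const) (by simp)

lemma Faux_zero (σ A : ℝ) (N Nh : ℕ) (aa ρ ah ρh : ℕ → ℝ) :
    Faux σ A N Nh aa ρ ah ρh 0 = ((σ ^ 2 / 2 : ℝ) : ℂ) := by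
  simp [Faux]

lemma Faux_eq_psi (σ A : ℝ) (N Nh : ℕ) (aa ρ ah ρh : ℕ → ℝ) (x q : ℝ) (hx : x ≠ 0)
    (h1 : ∀ ℓ ∈ Finset.Icc 1 N, ρ ℓ - x ≠ 0)
    (h2 : ∀ ℓ ∈ Finset.Icc 1 Nh, ρh ℓ + x ≠ 0)
    (hpsi : psi σ A N Nh aa ρ ah ρh ((x : ℝ) : ℂ) = (q : ℂ)) :
    Faux σ A N Nh aa ρ ah ρh ((x⁻¹ : ℝ) : ℂ) = (((x⁻¹) ^ 2 * q : ℝ) : ℂ) := by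
  have hX : (x : ℂ) ≠ 0 := by exact_mod_cast hx
  have e1 : ∑ ℓ ∈ Finset.Icc 1 N, (aa ℓ : ℂ) * ((x : ℂ)⁻¹) ^ 2 / ((ρ ℓ : ℂ) * (x : ℂ)⁻¹ - 1)
      = ((x : ℂ)⁻¹) ^ 2 * ((x : ℂ) * ∑ ℓ ∈ Finset.Icc 1 N, (aa ℓ : ℂ) / ((ρ ℓ : ℂ) - x)) := by
    rw [Finset.mul_sum, Finset.mul_sum]
    apply Finset.sum_congr rfl
    intro ℓ hℓ
    have hd : (ρ ℓ : ℂ) - x ≠ 0 := by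
      have h := h1 ℓ hℓ
      intro hc
      apply h
      have : ((ρ ℓ - x : ℝ) : ℂ) = 0 := by push_cast; linear_combination hc
      exact_mod_cast this
    field_simp
  have e2 : ∑ ℓ ∈ Finset.Icc 1 Nh, (ah ℓ : ℂ) * ((x : ℂ)⁻¹) ^ 2 / ((ρh ℓ : ℂ) * (x : ℂ)⁻¹ + 1)
      = ((x : ℂ)⁻¹) ^ 2 * ((x : ℂ) * ∑ ℓ ∈ Finset.Icc 1 Nh, (ah ℓ : ℂ) / ((ρh ℓ : ℂ) + x)) := by
    rw [Finset.mul_sum, Finset.mul_sum]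
    apply Finset.sum_congr rfl
    intro ℓ hℓ
    have hd : (ρh ℓ : ℂ) + x ≠ 0 := by
      have h := h2 ℓ hℓ
      intro hc
      apply h
      have : ((ρh ℓ + x : ℝ) : ℂ) = 0 := by push_cast; linear_combination hc
      exact_mod_cast this
    field_simp
  have key : Faux σ A N Nh aa ρ ah ρh ((x : ℂ)⁻¹)
      = ((x : ℂ)⁻¹) ^ 2 * psi σ A N Nh aa ρ ah ρh (x : ℂ) := by
    unfold Faux psi
    rw [e1, e2]
    field_simp
  rw [Complex.ofReal_inv, key, hpsi]
  push_cast
  ring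

lemma cpow_ofReal_exp (q : ℝ) (hq : 0 < q) (n : ℕ) :
    (q : ℂ) ^ (-((n : ℂ) + 1) / 2) = (((q ^ (-(1/2) : ℝ)) ^ (n + 1) : ℝ) : ℂ) := by
  have h1 : (q ^ (-(1/2):ℝ)) ^ (n+1) = q ^ ((-(1/2):ℝ) * ((n:ℝ)+1)) := by
    rw [← Real.rpow_natCast (q ^ (-(1/2):ℝ)) (n+1), ← Real.rpow_mul hq.le]
    norm_num
  rw [h1, Complex.ofReal_cpow hq.le]
  congr 1
  push_cast
  ring

lemma norm_cpow_exp (q : ℂ) (n : ℕ) :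
    ‖q ^ (-((n : ℂ) + 1) / 2)‖ = (‖q‖ ^ (-(1/2) : ℝ)) ^ (n + 1) := by
  have he : (-((n : ℂ) + 1) / 2) = (((-(1/2) * ((n:ℝ)+1)) : ℝ) : ℂ) := by push_cast; ring
  rw [he, Complex.norm_cpow_real]
  have h1 : (‖q‖ ^ (-(1/2):ℝ)) ^ (n+1) = ‖q‖ ^ ((-(1/2):ℝ) * ((n:ℝ)+1)) := by
    rw [← Real.rpow_natCast (‖q‖ ^ (-(1/2):ℝ)) (n+1), ← Real.rpow_mul (norm_nonneg q)]
    norm_num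
  rw [h1]

/-- For `σ > 0`, `1/ζ_{N+1}(q) = ∑_{i≥1} c_i q^{-i/2}` and
`1/ζ̂_{N̂+1}(q) = -∑_{i≥1} (-1)^i c_i q^{-i/2}` with `c_1 = σ/√2`, the series converging
absolutely for `|q| > R`.  Here `c n` denotes the paper's `c_{n+1}`. -/
theorem reciprocal_extra_roots_series_sigma_pos
    (σ A : ℝ) (N Nh : ℕ) (aa ρ ah ρh : ℕ → ℝ)
    (hσ : 0 < σ)
    (hpos : ∀ ℓ ∈ Finset.Icc 1 N, 0 < aa ℓ)
    (hposh : ∀ ℓ ∈ Finset.Icc 1 Nh, 0 < ah ℓ)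
    (hρ0 : ρ 0 = 0) (hρh0 : ρh 0 = 0)
    (hmono : ∀ i j, i < j → j ≤ N → ρ i < ρ j)
    (hmonoh : ∀ i j, i < j → j ≤ Nh → ρh i < ρh j)
    (ζM ζhM : ℝ → ℝ)
    (hζM : ∀ q : ℝ, 0 < q → ρ N < ζM q ∧ psi σ A N Nh aa ρ ah ρh (ζM q : ℂ) = (q : ℂ))
    (hζhM : ∀ q : ℝ, 0 < q → ρh Nh < ζhM q ∧
        psi σ A N Nh aa ρ ah ρh (-(ζhM q : ℝ) : ℂ) = (q : ℂ)) :
    ∃ R > (0 : ℝ), ∃ c : ℕ → ℝ, c 0 = σ / Real.sqrt 2 ∧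
      (∀ q : ℂ, R < ‖q‖ →
        Summable (fun n : ℕ => ‖(c n : ℂ) * q ^ (-((n : ℂ) + 1) / 2)‖)) ∧
      (∀ q : ℝ, R < q →
        ((1 / ζM q : ℝ) : ℂ) = ∑' n : ℕ, (c n : ℂ) * (q : ℂ) ^ (-((n : ℂ) + 1) / 2) ∧
        ((1 / ζhM q : ℝ) : ℂ)
          = -∑' n : ℕ, (((-1 : ℝ) ^ (n + 1) * c n : ℝ) : ℂ) * (q : ℂ) ^ (-((n : ℂ) + 1) / 2)) := by
  -- basic facts about the poles
  have hρle : ∀ ℓ ∈ Finset.Icc 1 N, 0 < ρ ℓ ∧ ρ ℓ ≤ ρ N := by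
    intro ℓ hℓ
    obtain ⟨h1, h2⟩ := Finset.mem_Icc.1 hℓ
    constructor
    · have := hmono 0 ℓ h1 h2; linarith [hρ0 ▸ this]
    · rcases eq_or_lt_of_le h2 with h | h
      · exact h ▸ le_rfl
      · exact (hmono ℓ N h le_rfl).le
  have hρhle : ∀ ℓ ∈ Finset.Icc 1 Nh, 0 < ρh ℓ ∧ ρh ℓ ≤ ρh Nh := by
    intro ℓ hℓ
    obtain ⟨h1, h2⟩ := Finset.mem_Icc.1 hℓ
    constructor
    · have := hmonoh 0 ℓ h1 h2; linarith [hρh0 ▸ this]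
    · rcases eq_or_lt_of_le h2 with h | h
      · exact h ▸ le_rfl
      · exact (hmonoh ℓ Nh h le_rfl).le
  have hρN : 0 ≤ ρ N := by
    rcases Nat.eq_zero_or_pos N with h | h
    · rw [h, hρ0]
    · exact (hρle N (Finset.mem_Icc.2 ⟨h, le_rfl⟩)).1.le
  have hρhN : 0 ≤ ρh Nh := by
    rcases Nat.eq_zero_or_pos Nh with h | h
    · rw [h, hρh0]
    · exact (hρhle Nh (Finset.mem_Icc.2 ⟨h, le_rfl⟩)).1.le
  -- set up the analytic machinery
  set F := Faux σ A N Nh aa ρ ah ρh with hFdef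
  set φ : ℂ → ℂ := fun u => F u ^ ((1:ℂ)/2) with hφdef
  have hφanal : AnalyticAt ℂ φ 0 := by
    apply (Faux_analyticAt σ A N Nh aa ρ ah ρh).cpow analyticAt_const
    rw [Faux_zero]
    refine Complex.mem_slitPlane_iff.2 (Or.inl ?_)
    simp only [Complex.ofReal_re]
    positivity
  have hφreal : ∀ t s : ℝ, 0 ≤ s → F (t : ℂ) = ((s : ℝ) : ℂ) →
      φ (t : ℂ) = ((Real.sqrt s : ℝ) : ℂ) := by
    intro t s hs hFs
    simp only [hφdef, hFs]
    rw [Real.sqrt_eq_rpow, Complex.ofReal_cpow hs]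
    norm_num
  have hφ0 : φ 0 = ((σ / Real.sqrt 2 : ℝ) : ℂ) := by
    have h := hφreal 0 (σ^2/2) (by positivity) (by
      rw [Complex.ofReal_zero, hFdef, Faux_zero])
    rw [Complex.ofReal_zero] at h
    rw [h]
    congr 1
    rw [show (σ^2/2 : ℝ) = (σ / Real.sqrt 2)^2 by
      rw [div_pow, Real.sq_sqrt (by norm_num : (0:ℝ) ≤ 2)]]
    exact Real.sqrt_sq (by positivity)
  have hsqrt2 : 0 < σ / Real.sqrt 2 := by positivity
  have hφ0ne : φ 0 ≠ 0 := by
    rw [hφ0]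
    exact_mod_cast hsqrt2.ne'
  set G : ℂ → ℂ := fun u => u * (φ u)⁻¹ with hGdef
  have hGanal : AnalyticAt ℂ G 0 := analyticAt_id.mul (hφanal.inv hφ0ne)
  have hG0 : G 0 = 0 := by simp [hGdef]
  have hd : HasDerivAt G ((φ 0)⁻¹) 0 := by
    have hinv : AnalyticAt ℂ (fun u => (φ u)⁻¹) 0 := hφanal.inv hφ0ne
    have h1 := (hasDerivAt_id (0:ℂ)).mul hinv.differentiableAt.hasDerivAt
    have h2 : HasDerivAt G (1 * (φ 0)⁻¹ + (0:ℂ) * deriv (fun u => (φ u)⁻¹) 0) 0 := h1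
    simpa using h2
  have hg0 : deriv G 0 ≠ 0 := by
    rw [hd.deriv]
    exact inv_ne_zero hφ0ne
  obtain ⟨δ, hδ, p, H, hc0, hc1, hsum, hHsum, hHinv⟩ := local_inverse_series G hGanal hG0 hg0
  set c : ℕ → ℝ := fun n => (p.coeff (n+1)).re with hcdef
  have hcc0 : c 0 = σ / Real.sqrt 2 := by
    simp only [hcdef]
    rw [hc1, hd.deriv, inv_inv, hφ0, Complex.ofReal_re]
  set R : ℝ := max (σ^2 * δ⁻¹^2/2 + |A| * δ⁻¹) (δ⁻¹^2) + 1 with hRdef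
  have hR0 : 0 < R := by
    rw [hRdef]
    have : (0:ℝ) ≤ max (σ^2 * δ⁻¹^2/2 + |A| * δ⁻¹) (δ⁻¹^2) :=
      le_trans (sq_nonneg δ⁻¹) (le_max_right _ _)
    linarith
  refine ⟨R, hR0, c, hcc0, ?_, ?_⟩
  · -- summability
    intro q hq
    rw [hRdef] at hq
    have hq0 : q ≠ 0 := by
      intro h
      rw [h, norm_zero] at hq
      have : (0:ℝ) ≤ max (σ^2 * δ⁻¹^2/2 + |A| * δ⁻¹) (δ⁻¹^2) :=
        le_trans (sq_nonneg δ⁻¹) (le_max_right _ _)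
      linarith
    set rr : ℝ := ‖q‖ ^ (-(1/2) : ℝ) with hrr
    have hrr0 : 0 ≤ rr := Real.rpow_nonneg (norm_nonneg q) _
    have hnq : δ⁻¹^2 < ‖q‖ := by
      have : δ⁻¹^2 ≤ max (σ^2 * δ⁻¹^2/2 + |A| * δ⁻¹) (δ⁻¹^2) := le_max_right _ _
      linarith
    have hrrδ : rr < δ := by
      have h2 : rr = (Real.sqrt ‖q‖)⁻¹ := by
        rw [hrr, Real.rpow_neg (norm_nonneg q), ← Real.sqrt_eq_rpow]
      have h3 : δ⁻¹ < Real.sqrt ‖q‖ := by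
        have h := Real.sqrt_lt_sqrt (sq_nonneg δ⁻¹) hnq
        rwa [Real.sqrt_sq (by positivity)] at h
      rw [h2, ← inv_inv δ]
      exact inv_strictAnti₀ (by positivity) h3
    have hb := (summable_nat_add_iff 1).2 hsum
    refine hb.of_nonneg_of_le (fun n => norm_nonneg _) (fun n => ?_)
    rw [norm_mul, norm_cpow_exp q n]
    have h4 : ‖(c n : ℂ)‖ ≤ ‖p (n+1)‖ := by
      rw [p.norm_apply_eq_norm_coef, Complex.norm_real]
      exact Complex.abs_re_le_norm _
    calc ‖(c n : ℂ)‖ * rr ^ (n+1) ≤ ‖p (n+1)‖ * δ ^ (n+1) :=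
          mul_le_mul h4 (pow_le_pow_left₀ hrr0 hrrδ.le _) (by positivity) (norm_nonneg _)
      _ = ‖p (n+1)‖ * δ ^ (n+1) := rfl
  · -- the two series identities
    intro q hq
    have hq0 : 0 < q := lt_trans hR0 hq
    rw [hRdef] at hq
    have hsq : δ⁻¹ < Real.sqrt q := by
      have hnq : δ⁻¹^2 < q := by
        have : δ⁻¹^2 ≤ max (σ^2 * δ⁻¹^2/2 + |A| * δ⁻¹) (δ⁻¹^2) := le_max_right _ _
        linarith
      have h := Real.sqrt_lt_sqrt (sq_nonneg δ⁻¹) hnq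
      rwa [Real.sqrt_sq (by positivity)] at h
    have hsqpos : 0 < Real.sqrt q := lt_trans (by positivity) hsq
    -- the general bound: any positive x with q ≤ σ²x²/2 + |A|x must exceed δ⁻¹
    have hgen : ∀ x : ℝ, 0 < x → q ≤ σ^2*x^2/2 + |A| * x → δ⁻¹ < x := by
      intro x hx hle
      by_contra hcon
      push_neg at hcon
      have hx2 : x^2 ≤ δ⁻¹^2 := pow_le_pow_left₀ hx.le hcon 2
      have h1 : σ^2*x^2/2 + |A| * x ≤ σ^2*δ⁻¹^2/2 + |A| * δ⁻¹ := by
        have hA := abs_nonneg A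
        nlinarith [sq_nonneg σ]
      have h2 : σ^2*δ⁻¹^2/2 + |A| * δ⁻¹ ≤ max (σ^2 * δ⁻¹^2/2 + |A| * δ⁻¹) (δ⁻¹^2) :=
        le_max_left _ _
      linarith
    -- real form of psi at real arguments
    have hcast : ∀ y : ℝ, psi σ A N Nh aa ρ ah ρh ((y : ℝ) : ℂ)
        = ((σ^2*y^2/2 + A*y + y * (∑ ℓ ∈ Finset.Icc 1 N, aa ℓ/(ρ ℓ - y))
            - y * ∑ ℓ ∈ Finset.Icc 1 Nh, ah ℓ/(ρh ℓ + y) : ℝ) : ℂ) := by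
      intro y
      unfold psi
      push_cast
      ring
    -- the master hasSum lemma
    have main : ∀ t : ℝ, t ≠ 0 → |t| < δ → F (t : ℂ) = ((t^2*q : ℝ) : ℂ) →
        HasSum (fun n : ℕ => c n * (t / (abs t * Real.sqrt q))^(n+1)) t := by
      intro t ht htδ hFt
      set s : ℝ := t / (abs t * Real.sqrt q) with hs
      have htabs : (0:ℝ) < |t| := abs_pos.2 ht
      have habs : |s| = (Real.sqrt q)⁻¹ := by
        rw [hs, abs_div, abs_mul, abs_abs, abs_of_pos hsqpos]
        rw [div_mul_eq_div_div, div_self htabs.ne', one_div]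
      have hsδ : ‖(s : ℂ)‖ < δ := by
        rw [Complex.norm_real, Real.norm_eq_abs, habs]
        have h := inv_strictAnti₀ (by positivity : (0:ℝ) < δ⁻¹) hsq
        rwa [inv_inv] at h
      have htδc : ‖(t : ℂ)‖ < δ := by rw [Complex.norm_real, Real.norm_eq_abs]; exact htδ
      have hφt : φ (t : ℂ) = ((|t| * Real.sqrt q : ℝ) : ℂ) := by
        have h := hφreal t (t^2*q) (by positivity) hFt
        rw [h]
        congr 1
        rw [Real.sqrt_mul (sq_nonneg t), Real.sqrt_sq_eq_abs]
      have hGt : G (t : ℂ) = ((s : ℝ) : ℂ) := by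
        show (t : ℂ) * (φ (t : ℂ))⁻¹ = _
        rw [hφt, hs, div_eq_mul_inv]
        push_cast
        ring
      have hHt : H ((s : ℝ) : ℂ) = (t : ℂ) := by rw [← hGt]; exact hHinv _ htδc
      have h4 := hHsum ((s : ℝ) : ℂ) hsδ
      rw [hHt] at h4
      have h5 : HasSum (fun n : ℕ => p.coeff (n+1) * (s:ℂ)^(n+1)) (t : ℂ) := by
        have h := (hasSum_nat_add_iff' 1).2 h4
        simpa [hc0] using h
      have h6 : HasSum (fun n : ℕ => c n * s^(n+1)) t := by
        have h := Complex.hasSum_re h5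
        simp only [Complex.ofReal_re] at h
        convert h using 2 with n
        simp [hcdef, ← Complex.ofReal_pow, Complex.mul_re]
      exact h6
    constructor
    · -- the first root
      set x := ζM q with hxdef
      have hx := (hζM q hq0).1
      have hxpos : 0 < x := lt_of_le_of_lt hρN hx
      have hpsix := (hζM q hq0).2
      have hreal : σ^2*x^2/2 + A*x + x * (∑ ℓ ∈ Finset.Icc 1 N, aa ℓ/(ρ ℓ - x))
          - x * ∑ ℓ ∈ Finset.Icc 1 Nh, ah ℓ/(ρh ℓ + x) = q := by
        have h := hpsix
        rw [hcast x] at h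
        exact_mod_cast h
      have hS1 : x * (∑ ℓ ∈ Finset.Icc 1 N, aa ℓ/(ρ ℓ - x)) ≤ 0 := by
        apply mul_nonpos_of_nonneg_of_nonpos hxpos.le
        apply Finset.sum_nonpos
        intro ℓ hℓ
        have h := hρle ℓ hℓ
        exact div_nonpos_iff.2 (Or.inl ⟨(hpos ℓ hℓ).le, by linarith⟩)
      have hS2 : 0 ≤ x * ∑ ℓ ∈ Finset.Icc 1 Nh, ah ℓ/(ρh ℓ + x) := by
        apply mul_nonneg hxpos.le
        apply Finset.sum_nonneg
        intro ℓ hℓ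
        have h := hρhle ℓ hℓ
        exact div_nonneg (hposh ℓ hℓ).le (by linarith)
      have hxbig : δ⁻¹ < x := by
        apply hgen x hxpos
        have hAx : A * x ≤ |A| * x := mul_le_mul_of_nonneg_right (le_abs_self A) hxpos.le
        linarith
      have ht : x⁻¹ ≠ 0 := inv_ne_zero hxpos.ne'
      have htδ : |x⁻¹| < δ := by
        rw [abs_of_pos (inv_pos.2 hxpos)]
        have h := inv_strictAnti₀ (by positivity : (0:ℝ) < δ⁻¹) hxbig
        rwa [inv_inv] at h
      have hFt : F ((x⁻¹ : ℝ) : ℂ) = (((x⁻¹)^2 * q : ℝ) : ℂ) := by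
        rw [hFdef]
        apply Faux_eq_psi σ A N Nh aa ρ ah ρh x q hxpos.ne'
        · intro ℓ hℓ
          have h := hρle ℓ hℓ
          intro hcon
          linarith [(by linarith : ρ ℓ < x)]
        · intro ℓ hℓ
          have h := hρhle ℓ hℓ
          intro hcon
          linarith
        · exact hpsix
      have hmain := main x⁻¹ ht htδ hFt
      have hsval : x⁻¹ / (|x⁻¹| * Real.sqrt q) = q ^ (-(1/2) : ℝ) := by
        rw [abs_of_pos (inv_pos.2 hxpos), Real.rpow_neg hq0.le, ← Real.sqrt_eq_rpow]
        rw [div_mul_eq_div_div, div_self (inv_pos.2 hxpos).ne', one_div]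
      rw [hsval] at hmain
      have h7 : HasSum (fun n : ℕ => ((c n * (q ^ (-(1/2):ℝ))^(n+1) : ℝ) : ℂ))
          ((x⁻¹ : ℝ) : ℂ) := Complex.ofRealCLM.hasSum hmain
      have h8 : HasSum (fun n : ℕ => (c n : ℂ) * (q : ℂ) ^ (-((n:ℂ)+1)/2))
          ((x⁻¹ : ℝ) : ℂ) := by
        have heq : (fun n : ℕ => (c n : ℂ) * (q : ℂ) ^ (-((n:ℂ)+1)/2))
            = fun n : ℕ => ((c n * (q ^ (-(1/2):ℝ))^(n+1) : ℝ) : ℂ) := by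
          funext n
          rw [cpow_ofReal_exp q hq0 n]
          push_cast
          ring
        rw [heq]
        exact h7
      rw [one_div]
      exact h8.tsum_eq.symm
    · -- the second root
      set y := ζhM q with hydef
      have hy := (hζhM q hq0).1
      have hypos : 0 < y := lt_of_le_of_lt hρhN hy
      have hpsiy : psi σ A N Nh aa ρ ah ρh (((-y : ℝ)) : ℂ) = (q : ℂ) := by
        have h := (hζhM q hq0).2
        convert h using 2
        push_cast
        ring
      have hreal : σ^2*(-y)^2/2 + A*(-y) + (-y) * (∑ ℓ ∈ Finset.Icc 1 N, aa ℓ/(ρ ℓ - (-y)))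
          - (-y) * ∑ ℓ ∈ Finset.Icc 1 Nh, ah ℓ/(ρh ℓ + (-y)) = q := by
        have h := hpsiy
        rw [hcast (-y)] at h
        exact_mod_cast h
      have hS1 : (-y) * (∑ ℓ ∈ Finset.Icc 1 N, aa ℓ/(ρ ℓ - (-y))) ≤ 0 := by
        apply mul_nonpos_of_nonpos_of_nonneg (by linarith)
        apply Finset.sum_nonneg
        intro ℓ hℓ
        have h := hρle ℓ hℓ
        exact div_nonneg (hpos ℓ hℓ).le (by linarith)
      have hS2 : (-y) * ∑ ℓ ∈ Finset.Icc 1 Nh, ah ℓ/(ρh ℓ + (-y)) ≥ 0 := by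
        have hsum : ∑ ℓ ∈ Finset.Icc 1 Nh, ah ℓ/(ρh ℓ + (-y)) ≤ 0 := by
          apply Finset.sum_nonpos
          intro ℓ hℓ
          have h := hρhle ℓ hℓ
          exact div_nonpos_iff.2 (Or.inl ⟨(hposh ℓ hℓ).le, by linarith⟩)
        nlinarith
      have hybig : δ⁻¹ < y := by
        apply hgen y hypos
        nlinarith [neg_abs_le A, hS1, hS2, hreal]
      have hyne : (-y) ≠ 0 := by linarith
      have ht : (-y)⁻¹ ≠ 0 := inv_ne_zero hyne
      have htδ : |(-y)⁻¹| < δ := by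
        rw [abs_inv, abs_neg, abs_of_pos hypos]
        have h := inv_strictAnti₀ (by positivity : (0:ℝ) < δ⁻¹) hybig
        rwa [inv_inv] at h
      have hFt : F (((-y)⁻¹ : ℝ) : ℂ) = ((((-y)⁻¹)^2 * q : ℝ) : ℂ) := by
        rw [hFdef]
        apply Faux_eq_psi σ A N Nh aa ρ ah ρh (-y) q hyne
        · intro ℓ hℓ
          have h := hρle ℓ hℓ
          intro hcon
          linarith
        · intro ℓ hℓ
          have h := hρhle ℓ hℓ
          intro hcon
          linarith
        · exact hpsiy
      have hmain := main ((-y)⁻¹) ht htδ hFt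
      have hsval : (-y)⁻¹ / (|(-y)⁻¹| * Real.sqrt q) = -(q ^ (-(1/2) : ℝ)) := by
        rw [abs_inv, abs_neg, abs_of_pos hypos, Real.rpow_neg hq0.le, ← Real.sqrt_eq_rpow,
          inv_neg]
        rw [neg_div, div_mul_eq_div_div, div_self (inv_pos.2 hypos).ne', one_div]
      rw [hsval] at hmain
      have h7 : HasSum (fun n : ℕ => ((c n * (-(q ^ (-(1/2):ℝ)))^(n+1) : ℝ) : ℂ))
          (((-y)⁻¹ : ℝ) : ℂ) := Complex.ofRealCLM.hasSum hmain
      have h8 : HasSum (fun n : ℕ => (((-1 : ℝ) ^ (n + 1) * c n : ℝ) : ℂ)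
          * (q : ℂ) ^ (-((n:ℂ)+1)/2)) (((-y)⁻¹ : ℝ) : ℂ) := by
        have heq : (fun n : ℕ => (((-1 : ℝ) ^ (n + 1) * c n : ℝ) : ℂ)
            * (q : ℂ) ^ (-((n:ℂ)+1)/2))
            = fun n : ℕ => ((c n * (-(q ^ (-(1/2):ℝ)))^(n+1) : ℝ) : ℂ) := by
          funext n
          rw [cpow_ofReal_exp q hq0 n, neg_pow]
          push_cast
          ring
        rw [heq]
        exact h7
      rw [h8.tsum_eq, inv_neg]
      push_cast
      ring
end

section
/- Assume σ > 0. Then there exist R > 0 and sequences (d_n)_{n≥1}, (e_n)_{n≥1} of real numbers with d_1 = e_1 = σ/√2 such that both series ∑_{n=1}^∞ d_n q^{−n/2} and ∑_{n=1}^∞ e_n q^{−n/2} converge absolutely for every q ∈ ℂ with |q| > R, and for every real q > R one has 1/(ζ_{N+1}(q) − 1) = ∑_{n=1}^∞ d_n q^{−n/2} and 1/(ζ̂_{N̂+1}(q) + 1) = ∑_{n=1}^∞ e_n q^{−n/2}. -/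
section AuxSeries
open Filter Complex


lemma aux_series (σ : ℝ) (hσ : 0 < σ) (G : ℂ → ℂ) (hG : AnalyticAt ℂ G 0) (hG0 : G 0 = 0)
    (hG1 : deriv G 0 = ((σ / Real.sqrt 2 : ℝ) : ℂ)) (Z : ℝ → ℝ)
    (hZ : ∀ᶠ q in atTop, ((Z q : ℝ) : ℂ) = G (((q ^ (-(1:ℝ)/2) : ℝ) : ℂ))) :
    ∃ R > (0:ℝ), ∃ d : ℕ → ℝ, d 0 = σ / Real.sqrt 2 ∧
      (∀ q : ℂ, R < ‖q‖ → Summable (fun n : ℕ => ‖(d n : ℂ) * q ^ (-((n:ℂ)+1)/2)‖)) ∧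
      (∀ q : ℝ, R < q → ((Z q : ℝ) : ℂ) = ∑' n : ℕ, (d n : ℂ) * (q:ℂ) ^ (-((n:ℂ)+1)/2)) := by
  obtain ⟨p, hp⟩ := hG
  obtain ⟨r, hpr⟩ := hp
  obtain ⟨r0, hr00, hr0r⟩ := ENNReal.lt_iff_exists_nnreal_btwn.1 hpr.r_pos
  have hr0pos : (0:ℝ) < (r0:ℝ) := by exact_mod_cast hr00
  obtain ⟨C, hC, hCb⟩ := p.norm_mul_pow_le_of_lt_radius (lt_of_lt_of_le hr0r hpr.r_le)
  obtain ⟨q0, hq0⟩ := eventually_atTop.1 hZ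
  set d : ℕ → ℝ := fun n => (p.coeff (n+1)).re with hd
  -- coefficient bound
  have hdb : ∀ n : ℕ, |d n| ≤ C * ((r0:ℝ)⁻¹)^(n+1) := by
    intro n
    have h1 : |d n| ≤ ‖p.coeff (n+1)‖ := Complex.abs_re_le_norm _
    have h2 : ‖p.coeff (n+1)‖ = ‖p (n+1)‖ :=
      (FormalMultilinearSeries.norm_apply_eq_norm_coef (p := p) (n := n + 1)).symm
    have h3 := hCb (n+1)
    have : ‖p (n+1)‖ ≤ C * ((r0:ℝ)⁻¹)^(n+1) := by
      rw [inv_pow, ← div_eq_mul_inv, le_div_iff₀ (pow_pos hr0pos _)]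
      linarith [h3]
    linarith [h1, h2.le, h2.ge, this]
  set R : ℝ := max q0 (((r0:ℝ)⁻¹)^2 + 1) with hR
  have hRpos : 0 < R := lt_of_lt_of_le (by positivity) (le_max_right _ _)
  refine ⟨R, hRpos, d, ?_, ?_, ?_⟩
  · have h1 : deriv G 0 = p.coeff 1 := by
      rw [hpr.hasFPowerSeriesAt.deriv, FormalMultilinearSeries.apply_eq_pow_smul_coeff]; simp
    simp [hd, ← h1, hG1]
  · -- summability
    intro q hq
    have hq1 : (1:ℝ) < ‖q‖ := lt_of_le_of_lt (by
      calc (1:ℝ) ≤ ((r0:ℝ)⁻¹)^2 + 1 := by nlinarith [sq_nonneg ((r0:ℝ)⁻¹)]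
      _ ≤ R := le_max_right _ _) hq
    have hqpos : (0:ℝ) < ‖q‖ := by linarith
    have hqne : q ≠ 0 := by simpa using norm_pos_iff.1 hqpos
    -- ‖q‖^(1/2) > r0⁻¹
    have hgt : ((r0:ℝ)⁻¹) < ‖q‖ ^ ((1:ℝ)/2) := by
      have h2 : (((r0:ℝ)⁻¹)^2 : ℝ) < ‖q‖ := lt_of_le_of_lt (by
        linarith [le_max_right q0 (((r0:ℝ)⁻¹)^2 + 1)] : ((r0:ℝ)⁻¹)^2 ≤ R) hq
      have := Real.rpow_lt_rpow (by positivity) h2 (by norm_num : (0:ℝ) < 1/2)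
      calc ((r0:ℝ)⁻¹) = ((((r0:ℝ)⁻¹)^2) ^ ((1:ℝ)/2)) := by
            rw [← Real.rpow_natCast ((r0:ℝ)⁻¹) 2, ← Real.rpow_mul (by positivity)]
            norm_num
        _ < ‖q‖ ^ ((1:ℝ)/2) := this
    set t : ℝ := (r0:ℝ)⁻¹ * ‖q‖ ^ (-(1:ℝ)/2) with ht
    have ht0 : 0 ≤ t := by positivity
    have ht1 : t < 1 := by
      rw [ht]
      have : ‖q‖ ^ (-(1:ℝ)/2) = (‖q‖ ^ ((1:ℝ)/2))⁻¹ := by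
        rw [← Real.rpow_neg hqpos.le]; norm_num
      rw [this, mul_inv_lt_iff₀ (by positivity), one_mul]
      exact hgt
    have hterm : ∀ n : ℕ, ‖(d n : ℂ) * q ^ (-((n:ℂ)+1)/2)‖ ≤ (C * t) * t ^ n := by
      intro n
      have hexp : (-((n:ℂ)+1)/2) = (((-((n:ℝ)+1)/2 : ℝ)) : ℂ) := by push_cast; ring
      have habs : ‖q ^ (-((n:ℂ)+1)/2)‖ = ‖q‖ ^ (-((n:ℝ)+1)/2) := by
        rw [hexp]
        rw [Complex.norm_cpow_of_ne_zero hqne]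
        simp [norm_nonneg]
      have hpow : ‖q‖ ^ (-((n:ℝ)+1)/2) = (‖q‖ ^ (-(1:ℝ)/2)) ^ (n+1) := by
        rw [← Real.rpow_natCast (‖q‖ ^ (-(1:ℝ)/2)) (n+1), ← Real.rpow_mul hqpos.le]
        congr 1
        push_cast; ring
      rw [norm_mul, habs, hpow]
      have h1 : ‖(d n : ℂ)‖ = |d n| := by simp
      rw [h1]
      calc |d n| * (‖q‖ ^ (-(1:ℝ)/2)) ^ (n+1)
          ≤ (C * ((r0:ℝ)⁻¹)^(n+1)) * (‖q‖ ^ (-(1:ℝ)/2)) ^ (n+1) := by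
            apply mul_le_mul_of_nonneg_right (hdb n) (by positivity)
        _ = (C * t) * t ^ n := by rw [ht, mul_pow]; ring
    apply Summable.of_nonneg_of_le (fun n => norm_nonneg _) hterm
    exact (summable_geometric_of_lt_one ht0 ht1).mul_left _
  · -- equality
    intro q hq
    have hqq0 : q0 ≤ q := le_trans (le_max_left _ _) hq.le
    have hq1 : (1:ℝ) < q := lt_of_le_of_lt (by
      calc (1:ℝ) ≤ ((r0:ℝ)⁻¹)^2 + 1 := by nlinarith [sq_nonneg ((r0:ℝ)⁻¹)]
      _ ≤ R := le_max_right _ _) hq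
    have hqpos : (0:ℝ) < q := by linarith
    set x : ℝ := q ^ (-(1:ℝ)/2) with hx
    have hx0 : 0 < x := Real.rpow_pos_of_pos hqpos _
    have hxr0 : x < (r0:ℝ) := by
      have h2 : (((r0:ℝ)⁻¹)^2 : ℝ) < q := lt_of_le_of_lt (by
        linarith [le_max_right q0 (((r0:ℝ)⁻¹)^2 + 1)] : ((r0:ℝ)⁻¹)^2 ≤ R) hq
      have hgt : ((r0:ℝ)⁻¹) < q ^ ((1:ℝ)/2) := by
        have := Real.rpow_lt_rpow (by positivity) h2 (by norm_num : (0:ℝ) < 1/2)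
        calc ((r0:ℝ)⁻¹) = ((((r0:ℝ)⁻¹)^2) ^ ((1:ℝ)/2)) := by
              rw [← Real.rpow_natCast ((r0:ℝ)⁻¹) 2, ← Real.rpow_mul (by positivity)]
              norm_num
          _ < q ^ ((1:ℝ)/2) := this
      have hxinv : x = (q ^ ((1:ℝ)/2))⁻¹ := by
        rw [hx, ← Real.rpow_neg hqpos.le]; norm_num
      rw [hxinv]
      rw [inv_lt_comm₀ (by positivity) hr0pos]
      exact hgt
    -- membership in ball
    have hmem : (x:ℂ) ∈ Metric.eball (0:ℂ) r := by
      rw [Metric.mem_eball, edist_zero_right]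
      refine lt_of_lt_of_le ?_ hr0r.le
      have h : ‖(x:ℂ)‖₊ < r0 := by
        rw [← NNReal.coe_lt_coe]
        simpa [abs_of_pos hx0] using hxr0
      exact_mod_cast h
    have hsum0 := hpr.hasSum hmem
    simp only [zero_add] at hsum0
    have hsum1 : HasSum (fun n : ℕ => (x:ℂ) ^ n * p.coeff n) (G x) := by
      refine hsum0.congr_fun ?_
      intro n
      rw [FormalMultilinearSeries.apply_eq_pow_smul_coeff, smul_eq_mul]
    have hc0 : p.coeff 0 = 0 := by
      have h := hpr.coeff_zero (fun _ => (1:ℂ))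
      rw [hG0] at h
      exact h
    have hsum2 : HasSum (fun n : ℕ => (x:ℂ) ^ (n+1) * p.coeff (n+1)) (G x) := by
      rw [← hasSum_nat_add_iff' 1] at hsum1
      simpa [hc0] using hsum1
    have hre : HasSum (fun n : ℕ => x ^ (n+1) * d n) (Z q) := by
      have h1 := hsum2.mapL Complex.reCLM
      have h2 : G (x:ℂ) = ((Z q : ℝ) : ℂ) := (hq0 q hqq0).symm
      rw [h2] at h1
      simpa [hd, ← Complex.ofReal_pow, Complex.re_ofReal_mul] using h1
    have hcsum : HasSum (fun n : ℕ => ((x ^ (n+1) * d n : ℝ) : ℂ)) ((Z q : ℝ) : ℂ) :=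
      hre.mapL Complex.ofRealCLM
    have hfinal : HasSum (fun n : ℕ => (d n : ℂ) * (q:ℂ) ^ (-((n:ℂ)+1)/2)) ((Z q : ℝ) : ℂ) := by
      refine hcsum.congr_fun ?_
      intro n
      have hexp : (-((n:ℂ)+1)/2) = (((-((n:ℝ)+1)/2 : ℝ)) : ℂ) := by push_cast; ring
      have hq' : (q:ℂ) ^ (-((n:ℂ)+1)/2) = ((q ^ (-((n:ℝ)+1)/2) : ℝ) : ℂ) := by
        rw [hexp, Complex.ofReal_cpow hqpos.le]
      have hqx : q ^ (-((n:ℝ)+1)/2) = x ^ (n+1) := by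
        rw [hx, ← Real.rpow_natCast (q ^ (-(1:ℝ)/2)) (n+1), ← Real.rpow_mul hqpos.le]
        congr 1
        push_cast; ring
      rw [hq', hqx]
      push_cast
      ring
    exact hfinal.tsum_eq.symm

lemma side_series (σ s : ℝ) (hσ : 0 < σ) (Q : ℂ → ℂ) (hQ : AnalyticAt ℂ Q 0)
    (hQ0 : Q 0 = ((σ^2/2 : ℝ) : ℂ)) (ζf : ℝ → ℝ)
    (hζt : Tendsto ζf atTop atTop)
    (hQζ : ∀ᶠ q in atTop, 0 < q ∧ Q ((((ζf q)⁻¹ : ℝ)) : ℂ) = ((q / (ζf q)^2 : ℝ) : ℂ)) :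
    ∃ R > (0:ℝ), ∃ d : ℕ → ℝ, d 0 = σ / Real.sqrt 2 ∧
      (∀ q : ℂ, R < ‖q‖ → Summable (fun n : ℕ => ‖(d n : ℂ) * q ^ (-((n:ℂ)+1)/2)‖)) ∧
      (∀ q : ℝ, R < q →
        ((1 / (ζf q + s) : ℝ) : ℂ) = ∑' n : ℕ, (d n : ℂ) * (q:ℂ) ^ (-((n:ℂ)+1)/2)) := by
  have hc0r : (0:ℝ) < σ / Real.sqrt 2 := by positivity
  set c0 : ℂ := ((σ / Real.sqrt 2 : ℝ) : ℂ) with hc0def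
  have hc0ne : c0 ≠ 0 := by
    simp only [hc0def, ne_eq, Complex.ofReal_eq_zero]
    exact hc0r.ne'
  -- square root of Q
  set sq : ℂ → ℂ := fun u => Complex.exp (Complex.log (Q u) / 2) with hsqdef
  have hm : Q 0 ∈ Complex.slitPlane := by
    rw [hQ0]
    exact Complex.ofReal_mem_slitPlane.2 (by positivity)
  have hlog : AnalyticAt ℂ (fun u => Complex.log (Q u)) 0 := (analyticAt_clog hm).comp hQ
  have hsq_an : AnalyticAt ℂ sq 0 := by
    apply analyticAt_cexp.comp
    exact hlog.div analyticAt_const (by norm_num)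
  have hsq_val : ∀ (y : ℝ), 0 < y → ∀ u : ℂ, Q u = (y : ℂ) →
      sq u = ((Real.sqrt y : ℝ) : ℂ) := by
    intro y hy u hu
    have h1 : Real.sqrt y = Real.exp (Real.log y / 2) := by
      rw [Real.sqrt_eq_rpow, Real.rpow_def_of_pos hy]
      ring_nf
    simp only [hsqdef, hu, ← Complex.ofReal_log hy.le]
    rw [h1]
    rw [show ((Real.log y : ℝ) : ℂ) / 2 = ((Real.log y / 2 : ℝ) : ℂ) by push_cast; ring]
    rw [← Complex.ofReal_exp]
  have hsq0 : sq 0 = c0 := by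
    have h := hsq_val (σ^2/2) (by positivity) 0 hQ0
    rw [h, hc0def]
    congr 1
    rw [Real.sqrt_div (sq_nonneg σ) 2, Real.sqrt_sq hσ.le]
  have hsqne : sq 0 ≠ 0 := by rw [hsq0]; exact hc0ne
  -- the function h
  set hfun : ℂ → ℂ := fun u => u * (sq u)⁻¹ with hhdef
  have hh_an : AnalyticAt ℂ hfun 0 := (analyticAt_id.mul (hsq_an.inv hsqne))
  have hh0 : hfun 0 = 0 := by simp [hhdef]
  have hder : HasDerivAt hfun c0⁻¹ 0 := by
    have h2 : DifferentiableAt ℂ (fun u => (sq u)⁻¹) 0 := (hsq_an.inv hsqne).differentiableAt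
    have h3 := (hasDerivAt_id (0:ℂ)).fun_mul h2.hasDerivAt
    simpa [hsq0] using h3
  have hstrict : HasStrictDerivAt hfun c0⁻¹ 0 := by
    obtain ⟨ph, hph⟩ := hh_an
    have h1 := hph.hasStrictDerivAt
    have h2 : (ph 1 fun _ => (1:ℂ)) = c0⁻¹ := by
      rw [← hph.deriv]; exact hder.deriv
    rwa [h2] at h1
  have hc0invne : c0⁻¹ ≠ 0 := inv_ne_zero hc0ne
  set hF := hstrict.hasStrictFDerivAt_equiv hc0invne with hFdef
  set Φ := HasStrictFDerivAt.toOpenPartialHomeomorph hfun hF with hΦdef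
  have hΦcoe : ⇑Φ = hfun := rfl
  have hmemsrc : (0:ℂ) ∈ Φ.source := HasStrictFDerivAt.mem_toOpenPartialHomeomorph_source hF
  have hΦ0 : Φ 0 = 0 := by rw [hΦcoe, hh0]
  set Ψ : ℂ → ℂ := ⇑Φ.symm with hΨdef
  have hΨ0 : Ψ 0 = 0 := by
    have := Φ.left_inv hmemsrc
    rwa [hΦ0] at this
  have hΨ_an : AnalyticAt ℂ Ψ 0 := by
    have h1 : AnalyticAt ℂ (⇑Φ) 0 := by rw [hΦcoe]; exact hh_an
    have h2 : fderiv ℂ (⇑Φ) 0 = (ContinuousLinearEquiv.unitsEquivAut ℂ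
        (Units.mk0 c0⁻¹ hc0invne) : ℂ →L[ℂ] ℂ) := (HasStrictFDerivAt.hasFDerivAt hF).fderiv
    have := Φ.analyticAt_symm' hmemsrc h1 h2
    rwa [hΦ0] at this
  have hΨder : HasDerivAt Ψ c0 0 := by
    have h1 := hstrict.to_localInverse hc0invne
    have h2 : hstrict.localInverse hfun c0⁻¹ 0 hc0invne = Ψ := rfl
    rw [h2, hh0, inv_inv] at h1
    exact h1.hasDerivAt
  -- the composite G
  set G : ℂ → ℂ := fun w => Ψ w / (1 + (s:ℂ) * Ψ w) with hGdef
  have hG_an : AnalyticAt ℂ G 0 := by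
    apply hΨ_an.div (analyticAt_const.add (analyticAt_const.mul hΨ_an))
    simp [hΨ0]
  have hG0 : G 0 = 0 := by simp [hGdef, hΨ0]
  have hG1 : deriv G 0 = c0 := by
    have hden : HasDerivAt (fun w => 1 + (s:ℂ) * Ψ w) ((s:ℂ) * c0) 0 :=
      (hΨder.const_mul (s:ℂ)).const_add 1
    have h1 := hΨder.fun_div hden (by simp [hΨ0])
    have := h1.deriv
    rw [this]
    simp [hΨ0]
  -- eventual identity
  obtain ⟨ε, hε, hball⟩ := Metric.isOpen_iff.1 Φ.open_source 0 hmemsrc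
  set B : ℝ := max (|s| + 1) (ε⁻¹ + 1) with hBdef
  have hZ : ∀ᶠ q in atTop, ((1 / (ζf q + s) : ℝ) : ℂ) = G (((q ^ (-(1:ℝ)/2) : ℝ) : ℂ)) := by
    filter_upwards [hζt.eventually_ge_atTop B, hQζ] with q hζB hQq
    obtain ⟨hqpos, hQval⟩ := hQq
    set ζ : ℝ := ζf q with hζdef
    have hζpos : 0 < ζ := lt_of_lt_of_le (by positivity : (0:ℝ) < |s| + 1)
      (le_trans (le_max_left _ _) hζB)
    have hζne : ζ ≠ 0 := hζpos.ne'
    have hsqq : Real.sqrt q ≠ 0 := by positivity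
    -- sq at 1/ζ
    have hb : sq ((ζ⁻¹ : ℝ) : ℂ) = ((Real.sqrt q / ζ : ℝ) : ℂ) := by
      rw [hsq_val (q / ζ^2) (by positivity) _ hQval]
      congr 1
      rw [Real.sqrt_div hqpos.le, Real.sqrt_sq hζpos.le]
    -- h at 1/ζ
    have hc : hfun ((ζ⁻¹ : ℝ) : ℂ) = ((q ^ (-(1:ℝ)/2) : ℝ) : ℂ) := by
      have hx : (q ^ (-(1:ℝ)/2) : ℝ) = (Real.sqrt q)⁻¹ := by
        rw [Real.sqrt_eq_rpow, ← Real.rpow_neg hqpos.le]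
        norm_num
      show ((ζ⁻¹ : ℝ) : ℂ) * (sq ((ζ⁻¹ : ℝ) : ℂ))⁻¹ = _
      rw [hb, hx]
      have hζc : (ζ:ℂ) ≠ 0 := by exact_mod_cast hζne
      have hsc : ((Real.sqrt q : ℝ):ℂ) ≠ 0 := by exact_mod_cast hsqq
      push_cast
      field_simp
    -- membership
    have hmem2 : ((ζ⁻¹ : ℝ) : ℂ) ∈ Φ.source := by
      apply hball
      simp only [Metric.mem_ball, dist_zero_right]
      have h1 : ‖((ζ⁻¹ : ℝ) : ℂ)‖ = ζ⁻¹ := by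
        rw [Complex.norm_real, Real.norm_eq_abs]
        exact abs_of_pos (by positivity)
      rw [h1]
      have hεinv : ε⁻¹ + 1 ≤ ζ := le_trans (le_max_right _ _) hζB
      have : ε⁻¹ < ζ := by linarith
      calc ζ⁻¹ < (ε⁻¹)⁻¹ := by
            exact inv_strictAnti₀ (by positivity) this
        _ = ε := inv_inv ε
    have hΨval : Ψ (((q ^ (-(1:ℝ)/2) : ℝ)) : ℂ) = ((ζ⁻¹ : ℝ) : ℂ) := by
      rw [← hc, ← hΦcoe]
      exact Φ.left_inv hmem2
    -- final identity
    have hζs : ζ + s ≠ 0 := by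
      have h1 : |s| + 1 ≤ ζ := le_trans (le_max_left _ _) hζB
      have := abs_lt.1 (lt_of_lt_of_le (lt_add_one |s|) h1)
      intro h; linarith [this.1, this.2]
    rw [hGdef]
    simp only [hΨval]
    rw [← Complex.ofReal_mul, ← Complex.ofReal_one, ← Complex.ofReal_add, ← Complex.ofReal_div]
    congr 1
    field_simp
  have := aux_series σ hσ G hG_an hG0 (by rw [hG1, hc0def]) (fun q => 1 / (ζf q + s)) hZ
  exact this

end AuxSeries

/-- For `σ > 0`, `1/(ζ_{N+1}(q) - 1) = ∑_{n≥1} d_n q^{-n/2}` and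
`1/(ζ̂_{N̂+1}(q) + 1) = ∑_{n≥1} e_n q^{-n/2}` with `d_1 = e_1 = σ/√2`, both series
converging absolutely for `|q| > R`.  Here `d n, e n` denote the paper's `d_{n+1}, e_{n+1}`. -/
theorem shifted_reciprocal_extra_roots_series_sigma_pos
    (σ A : ℝ) (N Nh : ℕ) (aa ρ ah ρh : ℕ → ℝ)
    (hσ : 0 < σ)
    (hpos : ∀ ℓ ∈ Finset.Icc 1 N, 0 < aa ℓ)
    (hposh : ∀ ℓ ∈ Finset.Icc 1 Nh, 0 < ah ℓ)
    (hρ0 : ρ 0 = 0) (hρh0 : ρh 0 = 0)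
    (hmono : ∀ i j, i < j → j ≤ N → ρ i < ρ j)
    (hmonoh : ∀ i j, i < j → j ≤ Nh → ρh i < ρh j)
    (ζM ζhM : ℝ → ℝ)
    (hζM : ∀ q : ℝ, 0 < q → ρ N < ζM q ∧ psi σ A N Nh aa ρ ah ρh (ζM q : ℂ) = (q : ℂ))
    (hζhM : ∀ q : ℝ, 0 < q → ρh Nh < ζhM q ∧
        psi σ A N Nh aa ρ ah ρh (-(ζhM q : ℝ) : ℂ) = (q : ℂ)) :
    ∃ R > (0 : ℝ), ∃ d e : ℕ → ℝ, d 0 = σ / Real.sqrt 2 ∧ e 0 = σ / Real.sqrt 2 ∧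
      (∀ q : ℂ, R < ‖q‖ →
        Summable (fun n : ℕ => ‖(d n : ℂ) * q ^ (-((n : ℂ) + 1) / 2)‖) ∧
        Summable (fun n : ℕ => ‖(e n : ℂ) * q ^ (-((n : ℂ) + 1) / 2)‖)) ∧
      (∀ q : ℝ, R < q →
        ((1 / (ζM q - 1) : ℝ) : ℂ) = ∑' n : ℕ, (d n : ℂ) * (q : ℂ) ^ (-((n : ℂ) + 1) / 2) ∧
        ((1 / (ζhM q + 1) : ℝ) : ℂ) = ∑' n : ℕ, (e n : ℂ) * (q : ℂ) ^ (-((n : ℂ) + 1) / 2)) := by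
  -- basic positivity facts
  have hρN0 : 0 ≤ ρ N := by
    rcases Nat.eq_zero_or_pos N with h | h
    · rw [h, hρ0]
    · exact (hρ0 ▸ hmono 0 N h le_rfl).le
  have hρhN0 : 0 ≤ ρh Nh := by
    rcases Nat.eq_zero_or_pos Nh with h | h
    · rw [h, hρh0]
    · exact (hρh0 ▸ hmonoh 0 Nh h le_rfl).le
  have hρle : ∀ ℓ ∈ Finset.Icc 1 N, ρ ℓ ≤ ρ N := by
    intro ℓ hℓ
    rcases lt_or_eq_of_le (Finset.mem_Icc.1 hℓ).2 with h | h
    · exact (hmono ℓ N h le_rfl).le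
    · rw [h]
  have hρpos : ∀ ℓ ∈ Finset.Icc 1 N, 0 < ρ ℓ := fun ℓ hℓ =>
    hρ0 ▸ hmono 0 ℓ (Finset.mem_Icc.1 hℓ).1 (Finset.mem_Icc.1 hℓ).2
  have hρhle : ∀ ℓ ∈ Finset.Icc 1 Nh, ρh ℓ ≤ ρh Nh := by
    intro ℓ hℓ
    rcases lt_or_eq_of_le (Finset.mem_Icc.1 hℓ).2 with h | h
    · exact (hmonoh ℓ Nh h le_rfl).le
    · rw [h]
  have hρhpos : ∀ ℓ ∈ Finset.Icc 1 Nh, 0 < ρh ℓ := fun ℓ hℓ =>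
    hρh0 ▸ hmonoh 0 ℓ (Finset.mem_Icc.1 hℓ).1 (Finset.mem_Icc.1 hℓ).2
  -- the rational function P with P (1/z) = psi z / z^2
  set P : ℂ → ℂ := fun u => (σ:ℂ)^2/2 + (A:ℂ)*u
      + u^2 * ∑ ℓ ∈ Finset.Icc 1 N, (aa ℓ:ℂ)/(u*(ρ ℓ:ℂ) - 1)
      - u^2 * ∑ ℓ ∈ Finset.Icc 1 Nh, (ah ℓ:ℂ)/(u*(ρh ℓ:ℂ) + 1) with hPdef
  have hP_an : AnalyticAt ℂ P 0 := by
    have hs1 : AnalyticAt ℂ (fun u : ℂ => ∑ ℓ ∈ Finset.Icc 1 N, (aa ℓ:ℂ)/(u*(ρ ℓ:ℂ) - 1)) 0 := by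
      apply Finset.analyticAt_fun_sum
      intro ℓ _
      exact analyticAt_const.div ((analyticAt_id.mul analyticAt_const).sub analyticAt_const)
        (by simp)
    have hs2 : AnalyticAt ℂ (fun u : ℂ => ∑ ℓ ∈ Finset.Icc 1 Nh, (ah ℓ:ℂ)/(u*(ρh ℓ:ℂ) + 1)) 0 := by
      apply Finset.analyticAt_fun_sum
      intro ℓ _
      exact analyticAt_const.div ((analyticAt_id.mul analyticAt_const).add analyticAt_const)
        (by simp)
    exact ((analyticAt_const.add (analyticAt_const.mul analyticAt_id)).add
      ((analyticAt_id.pow 2).mul hs1)).sub ((analyticAt_id.pow 2).mul hs2)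
  have hP0 : P 0 = ((σ^2/2 : ℝ) : ℂ) := by
    simp [hPdef]
  -- key algebraic identity
  have key : ∀ z : ℂ, z ≠ 0 → (∀ ℓ ∈ Finset.Icc 1 N, (ρ ℓ:ℂ) - z ≠ 0) →
      (∀ ℓ ∈ Finset.Icc 1 Nh, (ρh ℓ:ℂ) + z ≠ 0) →
      P z⁻¹ = psi σ A N Nh aa ρ ah ρh z / z^2 := by
    intro z hz h1 h2
    have e1 : ∑ ℓ ∈ Finset.Icc 1 N, (aa ℓ:ℂ)/(z⁻¹*(ρ ℓ:ℂ) - 1)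
        = z * ∑ ℓ ∈ Finset.Icc 1 N, (aa ℓ:ℂ)/((ρ ℓ:ℂ) - z) := by
      rw [Finset.mul_sum]
      refine Finset.sum_congr rfl fun ℓ hℓ => ?_
      have hd := h1 ℓ hℓ
      have hd2 : z⁻¹*(ρ ℓ:ℂ) - 1 ≠ 0 := by
        have he : z⁻¹*(ρ ℓ:ℂ) - 1 = ((ρ ℓ:ℂ) - z)/z := by
          field_simp
        rw [he]
        exact div_ne_zero hd hz
      field_simp
    have e2 : ∑ ℓ ∈ Finset.Icc 1 Nh, (ah ℓ:ℂ)/(z⁻¹*(ρh ℓ:ℂ) + 1)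
        = z * ∑ ℓ ∈ Finset.Icc 1 Nh, (ah ℓ:ℂ)/((ρh ℓ:ℂ) + z) := by
      rw [Finset.mul_sum]
      refine Finset.sum_congr rfl fun ℓ hℓ => ?_
      have hd := h2 ℓ hℓ
      have hd2 : z⁻¹*(ρh ℓ:ℂ) + 1 ≠ 0 := by
        have he : z⁻¹*(ρh ℓ:ℂ) + 1 = ((ρh ℓ:ℂ) + z)/z := by
          field_simp
        rw [he]
        exact div_ne_zero hd hz
      field_simp
    show (σ:ℂ)^2/2 + (A:ℂ)*z⁻¹
        + (z⁻¹)^2 * ∑ ℓ ∈ Finset.Icc 1 N, (aa ℓ:ℂ)/(z⁻¹*(ρ ℓ:ℂ) - 1)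
        - (z⁻¹)^2 * ∑ ℓ ∈ Finset.Icc 1 Nh, (ah ℓ:ℂ)/(z⁻¹*(ρh ℓ:ℂ) + 1)
        = psi σ A N Nh aa ρ ah ρh z / z^2
    rw [e1, e2, psi]
    field_simp
  -- real form of psi at positive real points
  have hψpos : ∀ ζ : ℝ, ρ N < ζ → 0 < ζ ∧
      psi σ A N Nh aa ρ ah ρh (ζ:ℂ)
        = ((σ^2*ζ^2/2 + A*ζ + ζ*(∑ ℓ ∈ Finset.Icc 1 N, aa ℓ/(ρ ℓ - ζ))
            - ζ*(∑ ℓ ∈ Finset.Icc 1 Nh, ah ℓ/(ρh ℓ + ζ)) : ℝ) : ℂ) := by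
    intro ζ hζ
    refine ⟨lt_of_le_of_lt hρN0 hζ, ?_⟩
    simp only [psi]
    push_cast
    ring
  have hψneg : ∀ ζ : ℝ, ρh Nh < ζ → 0 < ζ ∧
      psi σ A N Nh aa ρ ah ρh (-(ζ:ℝ) : ℂ)
        = ((σ^2*ζ^2/2 - A*ζ - ζ*(∑ ℓ ∈ Finset.Icc 1 N, aa ℓ/(ρ ℓ + ζ))
            + ζ*(∑ ℓ ∈ Finset.Icc 1 Nh, ah ℓ/(ρh ℓ - ζ)) : ℝ) : ℂ) := by
    intro ζ hζ
    refine ⟨lt_of_le_of_lt hρhN0 hζ, ?_⟩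
    simp only [psi]
    push_cast [sub_neg_eq_add, ← sub_eq_add_neg]
    ring
  -- growth bound and tendsto for ζM
  have hbound : ∀ q : ℝ, 0 < q → 0 < ζM q ∧ q ≤ σ^2*(ζM q)^2/2 + |A| * ζM q := by
    intro q hq
    obtain ⟨hgt, heq⟩ := hζM q hq
    set ζ := ζM q with hζdef
    obtain ⟨hζpos, hcast⟩ := hψpos ζ hgt
    rw [hcast] at heq
    have heqr : σ^2*ζ^2/2 + A*ζ + ζ*(∑ ℓ ∈ Finset.Icc 1 N, aa ℓ/(ρ ℓ - ζ))
        - ζ*(∑ ℓ ∈ Finset.Icc 1 Nh, ah ℓ/(ρh ℓ + ζ)) = q := by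
      exact_mod_cast heq
    have hS1 : (∑ ℓ ∈ Finset.Icc 1 N, aa ℓ/(ρ ℓ - ζ)) ≤ 0 := by
      apply Finset.sum_nonpos
      intro ℓ hℓ
      apply div_nonpos_of_nonneg_of_nonpos (hpos ℓ hℓ).le
      have := lt_of_le_of_lt (hρle ℓ hℓ) hgt
      linarith
    have hS2 : 0 ≤ (∑ ℓ ∈ Finset.Icc 1 Nh, ah ℓ/(ρh ℓ + ζ)) := by
      apply Finset.sum_nonneg
      intro ℓ hℓ
      apply div_nonneg (hposh ℓ hℓ).le
      have := hρhpos ℓ hℓ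
      linarith
    have t1 : ζ*(∑ ℓ ∈ Finset.Icc 1 N, aa ℓ/(ρ ℓ - ζ)) ≤ 0 :=
      mul_nonpos_of_nonneg_of_nonpos hζpos.le hS1
    have t2 : 0 ≤ ζ*(∑ ℓ ∈ Finset.Icc 1 Nh, ah ℓ/(ρh ℓ + ζ)) :=
      mul_nonneg hζpos.le hS2
    have t3 : A*ζ ≤ |A| * ζ := mul_le_mul_of_nonneg_right (le_abs_self A) hζpos.le
    exact ⟨hζpos, by linarith⟩
  have hboundh : ∀ q : ℝ, 0 < q → 0 < ζhM q ∧ q ≤ σ^2*(ζhM q)^2/2 + |A| * ζhM q := by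
    intro q hq
    obtain ⟨hgt, heq⟩ := hζhM q hq
    set ζ := ζhM q with hζdef
    obtain ⟨hζpos, hcast⟩ := hψneg ζ hgt
    rw [hcast] at heq
    have heqr : σ^2*ζ^2/2 - A*ζ - ζ*(∑ ℓ ∈ Finset.Icc 1 N, aa ℓ/(ρ ℓ + ζ))
        + ζ*(∑ ℓ ∈ Finset.Icc 1 Nh, ah ℓ/(ρh ℓ - ζ)) = q := by
      exact_mod_cast heq
    have hS1 : 0 ≤ (∑ ℓ ∈ Finset.Icc 1 N, aa ℓ/(ρ ℓ + ζ)) := by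
      apply Finset.sum_nonneg
      intro ℓ hℓ
      apply div_nonneg (hpos ℓ hℓ).le
      have := hρpos ℓ hℓ
      linarith
    have hS2 : (∑ ℓ ∈ Finset.Icc 1 Nh, ah ℓ/(ρh ℓ - ζ)) ≤ 0 := by
      apply Finset.sum_nonpos
      intro ℓ hℓ
      apply div_nonpos_of_nonneg_of_nonpos (hposh ℓ hℓ).le
      have := lt_of_le_of_lt (hρhle ℓ hℓ) hgt
      linarith
    have t1 : 0 ≤ ζ*(∑ ℓ ∈ Finset.Icc 1 N, aa ℓ/(ρ ℓ + ζ)) := mul_nonneg hζpos.le hS1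
    have t2 : ζ*(∑ ℓ ∈ Finset.Icc 1 Nh, ah ℓ/(ρh ℓ - ζ)) ≤ 0 :=
      mul_nonpos_of_nonneg_of_nonpos hζpos.le hS2
    have t3 : -(A*ζ) ≤ |A| * ζ := by
      have := mul_le_mul_of_nonneg_right (neg_le_abs A) hζpos.le
      linarith [this]
    exact ⟨hζpos, by linarith⟩
  have htendsto : ∀ ζf : ℝ → ℝ, (∀ q : ℝ, 0 < q → 0 < ζf q ∧
      q ≤ σ^2*(ζf q)^2/2 + |A| * ζf q) → Filter.Tendsto ζf Filter.atTop Filter.atTop := by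
    intro ζf hb
    rw [Filter.tendsto_atTop]
    intro b
    set b' := max b 1 with hb'def
    have hb'pos : (0:ℝ) < b' := lt_of_lt_of_le one_pos (le_max_right _ _)
    filter_upwards [Filter.eventually_gt_atTop (max 0 (σ^2*b'^2/2 + |A| * b'))] with q hq
    have hq0 : 0 < q := lt_of_le_of_lt (le_max_left _ _) hq
    obtain ⟨hζpos, hle⟩ := hb q hq0
    by_contra hcon
    push_neg at hcon
    have hζb : ζf q < b' := lt_of_lt_of_le hcon (le_max_left _ _)
    have h1 : σ^2*(ζf q)^2/2 ≤ σ^2*b'^2/2 := by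
      nlinarith [mul_nonneg (sq_nonneg σ)
        (mul_pos (sub_pos.2 hζb) (add_pos hζpos hb'pos)).le]
    have h2 : |A| * ζf q ≤ |A| * b' := mul_le_mul_of_nonneg_left hζb.le (abs_nonneg A)
    have h3 : σ^2*b'^2/2 + |A| * b' < q := lt_of_le_of_lt (le_max_right _ _) hq
    linarith
  -- the eventual identities for side_series
  have hQζ1 : ∀ᶠ q in Filter.atTop, 0 < q ∧
      P ((((ζM q)⁻¹ : ℝ)) : ℂ) = ((q / (ζM q)^2 : ℝ) : ℂ) := by
    filter_upwards [Filter.eventually_gt_atTop 0] with q hq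
    refine ⟨hq, ?_⟩
    obtain ⟨hgt, heq⟩ := hζM q hq
    set ζ := ζM q with hζdef
    have hζpos : 0 < ζ := lt_of_le_of_lt hρN0 hgt
    have hζc : (ζ:ℂ) ≠ 0 := by exact_mod_cast hζpos.ne'
    have h1 : ∀ ℓ ∈ Finset.Icc 1 N, (ρ ℓ:ℂ) - (ζ:ℂ) ≠ 0 := by
      intro ℓ hℓ
      rw [show (ρ ℓ:ℂ) - (ζ:ℂ) = ((ρ ℓ - ζ : ℝ) : ℂ) by push_cast; ring]
      rw [Complex.ofReal_ne_zero]
      have := lt_of_le_of_lt (hρle ℓ hℓ) hgt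
      linarith
    have h2 : ∀ ℓ ∈ Finset.Icc 1 Nh, (ρh ℓ:ℂ) + (ζ:ℂ) ≠ 0 := by
      intro ℓ hℓ
      rw [show (ρh ℓ:ℂ) + (ζ:ℂ) = ((ρh ℓ + ζ : ℝ) : ℂ) by push_cast; ring]
      rw [Complex.ofReal_ne_zero]
      have := hρhpos ℓ hℓ
      linarith
    have hkey := key (ζ:ℂ) hζc h1 h2
    rw [Complex.ofReal_inv, hkey, heq]
    push_cast
    ring
  have hQζ2 : ∀ᶠ q in Filter.atTop, 0 < q ∧
      P (-(((ζhM q)⁻¹ : ℝ) : ℂ)) = ((q / (ζhM q)^2 : ℝ) : ℂ) := by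
    filter_upwards [Filter.eventually_gt_atTop 0] with q hq
    refine ⟨hq, ?_⟩
    obtain ⟨hgt, heq⟩ := hζhM q hq
    set ζ := ζhM q with hζdef
    have hζpos : 0 < ζ := lt_of_le_of_lt hρhN0 hgt
    have hζc : (-(ζ:ℂ)) ≠ 0 := by
      simp only [neg_ne_zero]
      exact_mod_cast hζpos.ne'
    have h1 : ∀ ℓ ∈ Finset.Icc 1 N, (ρ ℓ:ℂ) - (-(ζ:ℂ)) ≠ 0 := by
      intro ℓ hℓ
      rw [show (ρ ℓ:ℂ) - (-(ζ:ℂ)) = ((ρ ℓ + ζ : ℝ) : ℂ) by push_cast; ring]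
      rw [Complex.ofReal_ne_zero]
      have := hρpos ℓ hℓ
      linarith
    have h2 : ∀ ℓ ∈ Finset.Icc 1 Nh, (ρh ℓ:ℂ) + (-(ζ:ℂ)) ≠ 0 := by
      intro ℓ hℓ
      rw [show (ρh ℓ:ℂ) + (-(ζ:ℂ)) = ((ρh ℓ - ζ : ℝ) : ℂ) by push_cast; ring]
      rw [Complex.ofReal_ne_zero]
      have := lt_of_le_of_lt (hρhle ℓ hℓ) hgt
      linarith
    have hkey := key (-(ζ:ℂ)) hζc h1 h2
    have hinv : -(((ζ⁻¹ : ℝ)) : ℂ) = (-(ζ:ℂ))⁻¹ := by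
      push_cast
      rw [inv_neg]
    rw [hinv, hkey]
    have heq' : psi σ A N Nh aa ρ ah ρh (-(ζ:ℂ)) = (q:ℂ) := by
      rw [show -(ζ:ℂ) = (-(ζ:ℝ) : ℂ) by push_cast; ring]
      exact heq
    rw [heq']
    rw [show (-(ζ:ℂ))^2 = ((ζ:ℂ))^2 by ring]
    push_cast
    ring
  -- apply side_series twice
  obtain ⟨R1, hR1, d, hd0, hdsum, hdeq⟩ := side_series σ (-1) hσ P hP_an hP0 ζM
    (htendsto ζM fun q hq => hbound q hq) hQζ1
  obtain ⟨R2, hR2, e, he0, hesum, heeq⟩ := side_series σ 1 hσ (fun u => P (-u))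
    (by
      have h0 : AnalyticAt ℂ P (-(0:ℂ)) := by simpa using hP_an
      exact h0.comp (analyticAt_id.neg))
    (by simpa using hP0) ζhM (htendsto ζhM fun q hq => hboundh q hq) hQζ2
  refine ⟨max R1 R2, lt_of_lt_of_le hR1 (le_max_left _ _), d, e, hd0, he0, ?_, ?_⟩
  · intro q hq
    exact ⟨hdsum q (lt_of_le_of_lt (le_max_left _ _) hq),
      hesum q (lt_of_le_of_lt (le_max_right _ _) hq)⟩
  · intro q hq
    constructor
    · have := hdeq q (lt_of_le_of_lt (le_max_left _ _) hq)
      rw [show ζM q - 1 = ζM q + (-1) by ring]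
      exact this
    · exact heeq q (lt_of_le_of_lt (le_max_right _ _) hq)
end

section
/- Assume σ > 0 and let k > 0 be real. Then there exist R > 0 and sequences (p_n)_{n≥0}, (p̂_n)_{n≥0} of real numbers such that both series ∑_{n=0}^∞ p_n q^{−n/2} and ∑_{n=0}^∞ p̂_n q^{−n/2} converge absolutely for every q ∈ ℂ with |q| > R, and for every real q > R one has k^{−ζ_{N+1}(q)} = k^{−√(2q)/σ} · ∑_{n=0}^∞ p_n q^{−n/2} and k^{ζ̂_{N̂+1}(q)} = k^{√(2q)/σ} · ∑_{n=0}^∞ p̂_n q^{−n/2}. -/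
open Complex Filter Topology FormalMultilinearSeries Finset
open scoped ENNReal NNReal

namespace ExpRootsAux

noncomputable def psiR (σ A : ℝ) (N Nh : ℕ) (aa ρ ah ρh : ℕ → ℝ) (x : ℝ) : ℝ :=
  σ ^ 2 * x ^ 2 / 2 + A * x + x * ∑ ℓ ∈ Finset.Icc 1 N, aa ℓ / (ρ ℓ - x)
    - x * ∑ ℓ ∈ Finset.Icc 1 Nh, ah ℓ / (ρh ℓ + x)

lemma psi_ofReal (σ A : ℝ) (N Nh : ℕ) (aa ρ ah ρh : ℕ → ℝ) (x : ℝ) :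
    psi σ A N Nh aa ρ ah ρh (x : ℂ) = ((psiR σ A N Nh aa ρ ah ρh x : ℝ) : ℂ) := by
  simp only [psi, psiR]
  push_cast
  ring

noncomputable def uC (σ A : ℝ) (N Nh : ℕ) (aa ρ ah ρh : ℕ → ℝ) (t : ℂ) : ℂ :=
  (σ : ℂ) ^ 2 / 2 + (A : ℂ) * t
    + ∑ ℓ ∈ Finset.Icc 1 N, (aa ℓ : ℂ) * t ^ 2 / ((ρ ℓ : ℂ) * t - 1)
    - ∑ ℓ ∈ Finset.Icc 1 Nh, (ah ℓ : ℂ) * t ^ 2 / ((ρh ℓ : ℂ) * t + 1)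

lemma uC_spec (σ A : ℝ) (N Nh : ℕ) (aa ρ ah ρh : ℕ → ℝ) {t : ℂ} (ht : t ≠ 0) :
    uC σ A N Nh aa ρ ah ρh t = t ^ 2 * psi σ A N Nh aa ρ ah ρh t⁻¹ := by
  have hsum1 : ∀ (M : ℕ) (b c : ℕ → ℝ),
      t ^ 2 * (t⁻¹ * ∑ ℓ ∈ Finset.Icc 1 M, (b ℓ : ℂ) / ((c ℓ : ℂ) - t⁻¹))
        = ∑ ℓ ∈ Finset.Icc 1 M, (b ℓ : ℂ) * t ^ 2 / ((c ℓ : ℂ) * t - 1) := by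
    intro M b c
    rw [← mul_assoc, show t ^ 2 * t⁻¹ = t by field_simp, Finset.mul_sum]
    refine Finset.sum_congr rfl fun ℓ _ => ?_
    have : (c ℓ : ℂ) - t⁻¹ = ((c ℓ : ℂ) * t - 1) / t := by field_simp; try ring
    rw [this, div_div_eq_mul_div]
    field_simp
    try ring
  have hsum2 : ∀ (M : ℕ) (b c : ℕ → ℝ),
      t ^ 2 * (t⁻¹ * ∑ ℓ ∈ Finset.Icc 1 M, (b ℓ : ℂ) / ((c ℓ : ℂ) + t⁻¹))
        = ∑ ℓ ∈ Finset.Icc 1 M, (b ℓ : ℂ) * t ^ 2 / ((c ℓ : ℂ) * t + 1) := by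
    intro M b c
    rw [← mul_assoc, show t ^ 2 * t⁻¹ = t by field_simp, Finset.mul_sum]
    refine Finset.sum_congr rfl fun ℓ _ => ?_
    have : (c ℓ : ℂ) + t⁻¹ = ((c ℓ : ℂ) * t + 1) / t := by field_simp; try ring
    rw [this, div_div_eq_mul_div]
    field_simp
    try ring
  unfold uC psi
  rw [mul_sub, mul_add, mul_add, hsum1, hsum2,
    show t ^ 2 * ((σ : ℂ) ^ 2 * (t⁻¹) ^ 2 / 2) = (σ : ℂ) ^ 2 / 2 from by
      field_simp; try ring,
    show t ^ 2 * ((A : ℂ) * t⁻¹) = (A : ℂ) * t from by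
      field_simp; try ring]

lemma uC_zero (σ A : ℝ) (N Nh : ℕ) (aa ρ ah ρh : ℕ → ℝ) :
    uC σ A N Nh aa ρ ah ρh 0 = ((σ ^ 2 / 2 : ℝ) : ℂ) := by
  simp [uC]

lemma uC_analytic (σ A : ℝ) (N Nh : ℕ) (aa ρ ah ρh : ℕ → ℝ) :
    AnalyticAt ℂ (uC σ A N Nh aa ρ ah ρh) 0 := by
  unfold uC
  apply AnalyticAt.sub
  apply AnalyticAt.add
  apply AnalyticAt.add
  · exact analyticAt_const
  · exact analyticAt_const.mul analyticAt_id
  · refine Finset.analyticAt_fun_sum _ fun ℓ _ => ?_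
    refine AnalyticAt.div (analyticAt_const.mul (analyticAt_id.pow 2))
      ((analyticAt_const.mul analyticAt_id).sub analyticAt_const) (by simp)
  · refine Finset.analyticAt_fun_sum _ fun ℓ _ => ?_
    refine AnalyticAt.div (analyticAt_const.mul (analyticAt_id.pow 2))
      ((analyticAt_const.mul analyticAt_id).add analyticAt_const) (by simp)

end ExpRootsAux

section Test
variable (σ A : ℝ) (N Nh : ℕ) (aa ρ ah ρh : ℕ → ℝ)

noncomputable def vC (t : ℂ) : ℂ :=
  Complex.exp (-Complex.log (ExpRootsAux.uC σ A N Nh aa ρ ah ρh t) / 2)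

lemma vC_real {t : ℂ} {x : ℝ} (hx : 0 < x)
    (hu : ExpRootsAux.uC σ A N Nh aa ρ ah ρh t = (x : ℂ)) :
    vC σ A N Nh aa ρ ah ρh t = (((Real.sqrt x)⁻¹ : ℝ) : ℂ) := by
  rw [vC, hu, ← Complex.ofReal_log hx.le,
    show -((Real.log x : ℝ) : ℂ) / 2 = ((-Real.log x / 2 : ℝ) : ℂ) by push_cast; ring,
    ← Complex.ofReal_exp]
  norm_cast
  rw [Real.sqrt_eq_rpow, Real.rpow_def_of_pos hx, ← Real.exp_neg]
  ring_nf

lemma vC_analytic (hσ : 0 < σ) : AnalyticAt ℂ (vC σ A N Nh aa ρ ah ρh) 0 := by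
  have h1 : AnalyticAt ℂ (fun t => Complex.log (ExpRootsAux.uC σ A N Nh aa ρ ah ρh t)) 0 := by
    refine (ExpRootsAux.uC_analytic σ A N Nh aa ρ ah ρh).clog ?_
    rw [ExpRootsAux.uC_zero]
    rw [Complex.mem_slitPlane_iff]
    left
    simp only [Complex.ofReal_re]
    positivity
  exact ((h1.neg).div analyticAt_const (by norm_num)).cexp

lemma vC_sq {t : ℂ} (h : ExpRootsAux.uC σ A N Nh aa ρ ah ρh t ≠ 0) :
    vC σ A N Nh aa ρ ah ρh t ^ 2 = (ExpRootsAux.uC σ A N Nh aa ρ ah ρh t)⁻¹ := by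
  rw [vC, ← Complex.exp_nat_mul]
  rw [show (2 : ℕ) * (-Complex.log (ExpRootsAux.uC σ A N Nh aa ρ ah ρh t) / 2)
      = -Complex.log (ExpRootsAux.uC σ A N Nh aa ρ ah ρh t) by push_cast; ring]
  rw [Complex.exp_neg, Complex.exp_log h]

lemma vC_zero (hσ : 0 < σ) :
    vC σ A N Nh aa ρ ah ρh 0 = ((Real.sqrt 2 / σ : ℝ) : ℂ) := by
  rw [vC_real σ A N Nh aa ρ ah ρh (by positivity : (0:ℝ) < σ ^ 2 / 2)
    (ExpRootsAux.uC_zero σ A N Nh aa ρ ah ρh)]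
  norm_cast
  rw [show σ ^ 2 / 2 = σ ^ 2 / 2 from rfl, Real.sqrt_div (sq_nonneg σ), Real.sqrt_sq hσ.le,
    inv_div]

end Test

section Test2
variable (σ A : ℝ) (N Nh : ℕ) (aa ρ ah ρh : ℕ → ℝ)

noncomputable def phiC (t : ℂ) : ℂ := t * vC σ A N Nh aa ρ ah ρh t

lemma phiC_analytic (hσ : 0 < σ) : AnalyticAt ℂ (phiC σ A N Nh aa ρ ah ρh) 0 :=
  analyticAt_id.mul (vC_analytic σ A N Nh aa ρ ah ρh hσ)

lemma phiC_zero : phiC σ A N Nh aa ρ ah ρh 0 = 0 := by simp [phiC]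

lemma phiC_hasDerivAt (hσ : 0 < σ) :
    HasDerivAt (phiC σ A N Nh aa ρ ah ρh) ((Real.sqrt 2 / σ : ℝ) : ℂ) 0 := by
  have hv := (vC_analytic σ A N Nh aa ρ ah ρh hσ).differentiableAt.hasDerivAt
  have h := (hasDerivAt_id (0:ℂ)).mul hv
  refine h.congr_deriv ?_
  simp [vC_zero σ A N Nh aa ρ ah ρh hσ]

lemma phiC_strict (hσ : 0 < σ) :
    HasStrictDerivAt (phiC σ A N Nh aa ρ ah ρh) ((Real.sqrt 2 / σ : ℝ) : ℂ) 0 := by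
  have h := ((phiC_analytic σ A N Nh aa ρ ah ρh hσ).contDiffAt (n := 1)).hasStrictDerivAt
    one_ne_zero
  rwa [(phiC_hasDerivAt σ A N Nh aa ρ ah ρh hσ).deriv] at h

end Test2

namespace ExpRootsAux

lemma zeta_bound (σ A : ℝ) (N Nh : ℕ) (aa ρ ah ρh : ℕ → ℝ)
    (hpos : ∀ ℓ ∈ Finset.Icc 1 N, 0 < aa ℓ)
    (hposh : ∀ ℓ ∈ Finset.Icc 1 Nh, 0 < ah ℓ)
    (hρ0 : ρ 0 = 0) (hρh0 : ρh 0 = 0)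
    (hmono : ∀ i j, i < j → j ≤ N → ρ i < ρ j)
    (hmonoh : ∀ i j, i < j → j ≤ Nh → ρh i < ρh j)
    {x q C : ℝ} (hxρ : ρ N < x) (hxC : x ≤ C)
    (hv : psiR σ A N Nh aa ρ ah ρh x = q) :
    q ≤ σ ^ 2 * C ^ 2 / 2 + |A| * C := by
  have hρN0 : 0 ≤ ρ N := by
    rcases Nat.eq_zero_or_pos N with h | h
    · rw [h, hρ0]
    · rw [← hρ0]; exact (hmono 0 N h le_rfl).le
  have hx0 : 0 < x := lt_of_le_of_lt hρN0 hxρ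
  have hS1 : ∑ ℓ ∈ Finset.Icc 1 N, aa ℓ / (ρ ℓ - x) ≤ 0 := by
    refine Finset.sum_nonpos fun ℓ hℓ => ?_
    have hℓN : ℓ ≤ N := (Finset.mem_Icc.mp hℓ).2
    have hρℓ : ρ ℓ ≤ ρ N := by
      rcases eq_or_lt_of_le hℓN with h | h
      · rw [h]
      · exact (hmono ℓ N h le_rfl).le
    exact div_nonpos_of_nonneg_of_nonpos (hpos ℓ hℓ).le (by linarith)
  have hS2 : 0 ≤ ∑ ℓ ∈ Finset.Icc 1 Nh, ah ℓ / (ρh ℓ + x) := by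
    refine Finset.sum_nonneg fun ℓ hℓ => ?_
    have h1 : 1 ≤ ℓ := (Finset.mem_Icc.mp hℓ).1
    have hρhℓ : 0 < ρh ℓ := by
      rw [← hρh0]; exact hmonoh 0 ℓ h1 (Finset.mem_Icc.mp hℓ).2
    exact div_nonneg (hposh ℓ hℓ).le (by linarith)
  rw [psiR] at hv
  have h1 : x * ∑ ℓ ∈ Finset.Icc 1 N, aa ℓ / (ρ ℓ - x) ≤ 0 :=
    mul_nonpos_of_nonneg_of_nonpos hx0.le hS1
  have h2 : 0 ≤ x * ∑ ℓ ∈ Finset.Icc 1 Nh, ah ℓ / (ρh ℓ + x) :=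
    mul_nonneg hx0.le hS2
  have h3 : A * x ≤ |A| * C := by
    calc A * x ≤ |A| * x := mul_le_mul_of_nonneg_right (le_abs_self A) hx0.le
    _ ≤ |A| * C := mul_le_mul_of_nonneg_left hxC (abs_nonneg A)
  have h4 : σ ^ 2 * x ^ 2 / 2 ≤ σ ^ 2 * C ^ 2 / 2 := by
    nlinarith [mul_nonneg (sq_nonneg σ)
      (mul_nonneg (sub_nonneg.mpr hxC) (by linarith : (0:ℝ) ≤ C + x))]
  linarith

lemma rpow_neg_half_nat {y : ℝ} (hy : 0 < y) (n : ℕ) :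
    y ^ (-(n : ℝ) / 2) = ((Real.sqrt y)⁻¹) ^ n := by
  rw [show -(n : ℝ) / 2 = -(1 / 2 : ℝ) * (n : ℝ) by ring, Real.rpow_mul hy.le,
    Real.rpow_natCast, Real.rpow_neg hy.le, ← Real.sqrt_eq_rpow]

end ExpRootsAux

namespace ExpRootsAux

lemma core (σ A : ℝ) (N Nh : ℕ) (aa ρ ah ρh : ℕ → ℝ)
    (hσ : 0 < σ)
    (hpos : ∀ ℓ ∈ Finset.Icc 1 N, 0 < aa ℓ)
    (hposh : ∀ ℓ ∈ Finset.Icc 1 Nh, 0 < ah ℓ)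
    (hρ0 : ρ 0 = 0) (hρh0 : ρh 0 = 0)
    (hmono : ∀ i j, i < j → j ≤ N → ρ i < ρ j)
    (hmonoh : ∀ i j, i < j → j ≤ Nh → ρh i < ρh j)
    (k : ℝ) (hk : 0 < k) (ζ : ℝ → ℝ)
    (hζ : ∀ q : ℝ, 0 < q → ρ N < ζ q ∧ psi σ A N Nh aa ρ ah ρh (ζ q : ℂ) = (q : ℂ)) :
    ∃ R > (0 : ℝ), ∃ p : ℕ → ℝ,
      (∀ q : ℂ, R < ‖q‖ → Summable (fun n : ℕ => ‖(p n : ℂ) * q ^ (-(n : ℂ) / 2)‖)) ∧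
      (∀ q : ℝ, R < q →
        k ^ (-(ζ q)) = k ^ (-(Real.sqrt (2 * q)) / σ) * ∑' n : ℕ, p n * q ^ (-(n : ℝ) / 2)) := by
  classical
  -- basic real facts
  have hρN0 : 0 ≤ ρ N := by
    rcases Nat.eq_zero_or_pos N with h | h
    · rw [h, hρ0]
    · rw [← hρ0]; exact (hmono 0 N h le_rfl).le
  have hψval : ∀ q : ℝ, 0 < q → psiR σ A N Nh aa ρ ah ρh (ζ q) = q := by
    intro q hq
    have := (hζ q hq).2
    rw [psi_ofReal] at this
    exact_mod_cast this
  -- complex machinery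
  set d0 : ℂ := ((Real.sqrt 2 / σ : ℝ) : ℂ) with hd0def
  have hd0 : d0 ≠ 0 := by
    simp only [hd0def, ne_eq, Complex.ofReal_eq_zero]
    positivity
  have hstrict := phiC_strict σ A N Nh aa ρ ah ρh hσ
  set Φ := (hstrict.hasStrictFDerivAt_equiv hd0).toOpenPartialHomeomorph
    (phiC σ A N Nh aa ρ ah ρh) with hΦdef
  have h0src : (0:ℂ) ∈ Φ.source :=
    (hstrict.hasStrictFDerivAt_equiv hd0).mem_toOpenPartialHomeomorph_source
  have hΦcoe : (Φ : ℂ → ℂ) = phiC σ A N Nh aa ρ ah ρh := rfl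
  have hfderiv : fderiv ℂ (Φ : ℂ → ℂ) 0
      = ((ContinuousLinearEquiv.unitsEquivAut ℂ (Units.mk0 d0 hd0)) : ℂ →L[ℂ] ℂ) := by
    rw [hΦcoe, (phiC_hasDerivAt σ A N Nh aa ρ ah ρh hσ).hasFDerivAt.fderiv]
    refine ContinuousLinearMap.ext fun x => ?_
    simp only [ContinuousLinearMap.toSpanSingleton_apply, ContinuousLinearMap.smulRight_apply, ContinuousLinearMap.one_apply,
      ContinuousLinearEquiv.coe_coe, ContinuousLinearEquiv.unitsEquivAut_apply, Units.val_mk0,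
      smul_eq_mul]
    try rw [hd0def]
    try push_cast
    try ring
  set θ : ℂ → ℂ := (Φ.symm : ℂ → ℂ) with hθdef
  have hθa : AnalyticAt ℂ θ 0 := by
    have := Φ.analyticAt_symm' h0src
      (by rw [hΦcoe]; exact phiC_analytic σ A N Nh aa ρ ah ρh hσ) hfderiv
    rwa [hΦcoe, phiC_zero] at this
  have hθ0 : θ 0 = 0 := by
    have := Φ.left_inv h0src
    rwa [hΦcoe, phiC_zero] at this
  have hθderiv : deriv θ 0 = d0⁻¹ := by
    have h := hstrict.to_localInverse hd0
    have h2 : HasStrictDerivAt θ d0⁻¹ 0 := by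
      rw [show (0:ℂ) = phiC σ A N Nh aa ρ ah ρh 0 from (phiC_zero σ A N Nh aa ρ ah ρh).symm]
      exact h
    exact h2.hasDerivAt.deriv
  have hleftinv : ∀ᶠ t in 𝓝 (0:ℂ), θ (phiC σ A N Nh aa ρ ah ρh t) = t := by
    have := Φ.eventually_left_inverse h0src
    simpa [hΦcoe] using this
  rw [Metric.eventually_nhds_iff] at hleftinv
  obtain ⟨δ, hδ0, hδ⟩ := hleftinv
  -- dslope chain
  have hh : AnalyticAt ℂ (dslope θ 0) 0 := by
    obtain ⟨qs, hqs⟩ := hθa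
    exact ⟨qs.fslope, hqs.has_fpower_series_dslope_fslope⟩
  have hh0 : dslope θ 0 0 = d0⁻¹ := by rw [dslope_same]; exact hθderiv
  set r : ℂ → ℂ := fun w => d0 - (dslope θ 0 w)⁻¹ with hrdef
  have hra : AnalyticAt ℂ r 0 :=
    analyticAt_const.sub (hh.inv (by rw [hh0]; exact inv_ne_zero hd0))
  have hr0 : r 0 = 0 := by
    show d0 - (dslope θ 0 0)⁻¹ = 0
    rw [hh0, inv_inv, sub_self]
  have hFa : AnalyticAt ℂ (dslope r 0) 0 := by
    obtain ⟨rs, hrs⟩ := hra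
    exact ⟨rs.fslope, hrs.has_fpower_series_dslope_fslope⟩
  set f : ℂ → ℂ := fun w => Complex.exp ((Real.log k : ℂ) * dslope r 0 w) with hfdef
  have hfa : AnalyticAt ℂ f 0 := (analyticAt_const.mul hFa).cexp
  -- key pointwise formula
  have hdslope_eval : ∀ w : ℂ, w ≠ 0 → θ w ≠ 0 →
      dslope r 0 w = d0 / w - (θ w)⁻¹ := by
    intro w hw hθw
    have hθsl : dslope θ 0 w = θ w / w := by
      rw [dslope_of_ne _ hw, slope_def_field, hθ0, sub_zero, sub_zero]
    have hrsl : dslope r 0 w = r w / w := by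
      rw [dslope_of_ne _ hw, slope_def_field, hr0, sub_zero, sub_zero]
    rw [hrsl, hrdef]
    simp only
    rw [hθsl, inv_div, sub_div]
    congr 1
    rw [div_div, mul_comm (θ w) w, ← div_div, div_self hw, one_div]
  -- power series of f
  obtain ⟨P, hP⟩ := hfa
  obtain ⟨rad, hPb⟩ := hP
  obtain ⟨s, hs0E, hsrad⟩ := ENNReal.lt_iff_exists_nnreal_btwn.mp hPb.r_pos
  have hs0 : 0 < (s : ℝ) := by exact_mod_cast ENNReal.coe_pos.mp hs0E
  -- constants
  set Creal : ℝ := max (2 / δ) 1 with hCdef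
  have hC1 : (1:ℝ) ≤ Creal := le_max_right _ _
  have hC0 : 0 < Creal := lt_of_lt_of_le one_pos hC1
  set B : ℝ := σ ^ 2 * Creal ^ 2 / 2 + |A| * Creal + 1 with hBdef
  set R : ℝ := max B (((s : ℝ))⁻¹ ^ 2 + 1) with hRdef
  have hR1 : (1:ℝ) ≤ R := by
    refine le_trans ?_ (le_max_right _ _)
    nlinarith [sq_nonneg ((s:ℝ))⁻¹]
  have hR0 : 0 < R := lt_of_lt_of_le one_pos hR1
  -- the coefficients
  refine ⟨R, hR0, fun n => (P.coeff n).re, ?_, ?_⟩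
  · -- complex summability
    intro q hq
    have hq0 : q ≠ 0 := by
      intro h
      rw [h, norm_zero] at hq
      linarith
    have hmaj : Summable (fun n => ‖P n‖ * (s:ℝ) ^ n) :=
      P.summable_norm_mul_pow (lt_of_lt_of_le hsrad hPb.r_le)
    refine Summable.of_nonneg_of_le (fun n => norm_nonneg _) (fun n => ?_) hmaj
    have habs : ‖q ^ (-(n : ℂ) / 2)‖ = ‖q‖ ^ (-(n : ℝ) / 2) := by
      rw [Complex.norm_cpow_of_ne_zero hq0]
      have him : (-(n : ℂ) / 2).im = 0 := by simp
      have hre : (-(n : ℂ) / 2).re = -(n : ℝ) / 2 := by simp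
      rw [him, hre, mul_zero, Real.exp_zero, div_one]
    have hnq : 0 < ‖q‖ := lt_trans hR0 hq
    have hsq : ((s:ℝ))⁻¹ < Real.sqrt ‖q‖ := by
      refine (Real.lt_sqrt (by positivity)).mpr ?_
      have h5 : ((s:ℝ))⁻¹ ^ 2 + 1 ≤ R := le_max_right _ _
      linarith
    have hinv : (Real.sqrt ‖q‖)⁻¹ < (s:ℝ) := by
      have h1 : 0 < (s:ℝ)⁻¹ := by positivity
      calc (Real.sqrt ‖q‖)⁻¹ < ((s:ℝ)⁻¹)⁻¹ := by
            exact inv_strictAnti₀ h1 hsq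
        _ = (s:ℝ) := inv_inv _
    calc ‖((P.coeff n).re : ℂ) * q ^ (-(n : ℂ) / 2)‖
        = |(P.coeff n).re| * ‖q ^ (-(n : ℂ) / 2)‖ := by
          rw [norm_mul, Complex.norm_real, Real.norm_eq_abs]
      _ ≤ ‖P.coeff n‖ * (s:ℝ) ^ n := by
          rw [habs, rpow_neg_half_nat hnq n]
          refine mul_le_mul (Complex.abs_re_le_norm _) ?_ (by positivity) (norm_nonneg _)
          exact pow_le_pow_left₀ (by positivity) hinv.le n
      _ = ‖P n‖ * (s:ℝ) ^ n := by rw [P.norm_apply_eq_norm_coef]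
  · -- real identity
    intro q hq
    have hq1 : (1:ℝ) < q := lt_of_le_of_lt hR1 hq
    have hq0 : (0:ℝ) < q := lt_trans one_pos hq1
    set x : ℝ := ζ q with hxdef
    have hxρ : ρ N < x := (hζ q hq0).1
    have hxC : Creal < x := by
      by_contra hcon
      push_neg at hcon
      have := zeta_bound σ A N Nh aa ρ ah ρh hpos hposh hρ0 hρh0 hmono hmonoh
        hxρ hcon (hψval q hq0)
      have hBR : B ≤ R := le_max_left _ _
      rw [hBdef] at hBR
      linarith
    have hx0 : 0 < x := lt_trans hC0 hxC
    set t1 : ℝ := x⁻¹ with ht1def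
    have ht1pos : 0 < t1 := by positivity
    have ht1δ : t1 < δ := by
      have h2δ : 2 / δ < x := lt_of_le_of_lt (le_max_left _ _) hxC
      have hδpos : 0 < δ := hδ0
      have h2δ0 : 0 < 2 / δ := by positivity
      calc t1 = x⁻¹ := ht1def
        _ < (2 / δ)⁻¹ := inv_strictAnti₀ h2δ0 h2δ
        _ = δ / 2 := by rw [inv_div]
        _ < δ := by linarith
    -- uC value at t1
    have ht1ne : ((t1 : ℝ) : ℂ) ≠ 0 := by exact_mod_cast ht1pos.ne'
    have hinvt1 : (((t1 : ℝ) : ℂ))⁻¹ = ((x : ℝ) : ℂ) := by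
      rw [← Complex.ofReal_inv, ht1def, inv_inv]
    have hu : uC σ A N Nh aa ρ ah ρh (t1 : ℂ) = ((t1 ^ 2 * q : ℝ) : ℂ) := by
      rw [uC_spec σ A N Nh aa ρ ah ρh ht1ne, hinvt1, (hζ q hq0).2]
      push_cast
      ring
    have hposu : 0 < t1 ^ 2 * q := by positivity
    have hsqrtu : Real.sqrt (t1 ^ 2 * q) = t1 * Real.sqrt q := by
      rw [Real.sqrt_mul (sq_nonneg t1), Real.sqrt_sq ht1pos.le]
    have hsqq : 0 < Real.sqrt q := Real.sqrt_pos.mpr hq0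
    have hvt : vC σ A N Nh aa ρ ah ρh (t1 : ℂ) = (((t1 * Real.sqrt q)⁻¹ : ℝ) : ℂ) := by
      rw [vC_real σ A N Nh aa ρ ah ρh hposu hu, hsqrtu]
    set w : ℝ := (Real.sqrt q)⁻¹ with hwdef
    have hw0 : 0 < w := by positivity
    have hφt : phiC σ A N Nh aa ρ ah ρh (t1 : ℂ) = ((w : ℝ) : ℂ) := by
      rw [phiC, hvt, ← Complex.ofReal_mul]
      congr 1
      rw [hwdef]
      field_simp
    have hθw : θ ((w : ℝ) : ℂ) = ((t1 : ℝ) : ℂ) := by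
      rw [← hφt]
      exact hδ (by simpa [Complex.dist_eq, Complex.norm_real, abs_of_pos ht1pos] using ht1δ)
    have hwne : ((w : ℝ) : ℂ) ≠ 0 := by exact_mod_cast hw0.ne'
    have hwlt : ‖((w : ℝ) : ℂ)‖ < (s : ℝ) := by
      rw [Complex.norm_real, Real.norm_eq_abs, abs_of_pos hw0]
      have hsq : ((s:ℝ))⁻¹ < Real.sqrt q := by
        refine (Real.lt_sqrt (by positivity)).mpr ?_
        have : ((s:ℝ))⁻¹ ^ 2 + 1 ≤ R := le_max_right _ _
        linarith
      calc w = (Real.sqrt q)⁻¹ := hwdef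
        _ < ((s:ℝ)⁻¹)⁻¹ := inv_strictAnti₀ (by positivity) hsq
        _ = (s:ℝ) := inv_inv _
    set y : ℝ := Real.sqrt 2 / σ * Real.sqrt q - x with hydef
    have hFw : dslope r 0 ((w : ℝ) : ℂ) = ((y : ℝ) : ℂ) := by
      rw [hdslope_eval _ hwne (by rw [hθw]; exact ht1ne), hθw, hinvt1, hd0def, hydef]
      push_cast
      rw [hwdef]
      push_cast
      field_simp
    have hfw : f ((w : ℝ) : ℂ) = ((k ^ y : ℝ) : ℂ) := by
      rw [hfdef]
      simp only
      rw [hFw, ← Complex.ofReal_mul, ← Complex.ofReal_exp, Real.rpow_def_of_pos hk]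
    -- sum of the power series
    have hmem : ((w : ℝ) : ℂ) ∈ EMetric.ball (0 : ℂ) rad := by
      rw [EMetric.ball, Metric.mem_eball, edist_zero_right]
      calc (‖((w : ℝ) : ℂ)‖₊ : ℝ≥0∞) < (s : ℝ≥0∞) := by
            rw [ENNReal.coe_lt_coe]
            exact_mod_cast hwlt
        _ < rad := hsrad
    have hsumC : HasSum (fun n => P.coeff n * ((w : ℝ) : ℂ) ^ n) (f ((w : ℝ) : ℂ)) := by
      have hPb2 := hPb.hasSum hmem
      simp only [zero_add] at hPb2
      have hfg : (fun n => P.coeff n * ((w : ℝ) : ℂ) ^ n)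
          = fun n => P n fun _ => ((w : ℝ) : ℂ) := by
        funext n
        rw [FormalMultilinearSeries.apply_eq_pow_smul_coeff, smul_eq_mul, mul_comm]
      rw [hfg]
      exact hPb2
    have hsumR : HasSum (fun n => (P.coeff n).re * w ^ n) (k ^ y) := by
      have h2 := Complex.hasSum_re hsumC
      rw [hfw, Complex.ofReal_re] at h2
      have h3 : (fun n => (P.coeff n).re * w ^ n)
          = fun n => (P.coeff n * ((w : ℝ) : ℂ) ^ n).re := by
        funext n
        rw [← Complex.ofReal_pow, Complex.mul_re, Complex.ofReal_re, Complex.ofReal_im,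
          mul_zero, sub_zero]
      rw [h3]
      exact h2
    have htsum : ∑' n : ℕ, (P.coeff n).re * w ^ n = k ^ y := hsumR.tsum_eq
    have hqr : ∀ n : ℕ, q ^ (-(n : ℝ) / 2) = w ^ n := fun n => by
      rw [rpow_neg_half_nat hq0 n, hwdef]
    show k ^ (-(ζ q)) = k ^ (-(Real.sqrt (2 * q)) / σ) * ∑' n : ℕ, (P.coeff n).re * q ^ (-(n : ℝ) / 2)
    calc k ^ (-(ζ q)) = k ^ (-(Real.sqrt (2 * q)) / σ + y) := by
          congr 1
          rw [hydef, Real.sqrt_mul (by norm_num : (0:ℝ) ≤ 2), hxdef]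
          ring
      _ = k ^ (-(Real.sqrt (2 * q)) / σ) * k ^ y := Real.rpow_add hk _ _
      _ = k ^ (-(Real.sqrt (2 * q)) / σ) * ∑' n : ℕ, (P.coeff n).re * q ^ (-(n : ℝ) / 2) := by
          rw [show ∑' n : ℕ, (P.coeff n).re * q ^ (-(n : ℝ) / 2)
              = ∑' n : ℕ, (P.coeff n).re * w ^ n from tsum_congr fun n => by rw [hqr n], htsum]

end ExpRootsAux

namespace ExpRootsAux

lemma psi_neg (σ A : ℝ) (N Nh : ℕ) (aa ρ ah ρh : ℕ → ℝ) (z : ℂ) :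
    psi σ A N Nh aa ρ ah ρh (-z) = psi σ (-A) Nh N ah ρh aa ρ z := by
  have e1 : ∑ ℓ ∈ Finset.Icc 1 N, (aa ℓ : ℂ) / ((ρ ℓ : ℂ) - (-z))
      = ∑ ℓ ∈ Finset.Icc 1 N, (aa ℓ : ℂ) / ((ρ ℓ : ℂ) + z) :=
    Finset.sum_congr rfl fun ℓ _ => by rw [sub_neg_eq_add]
  have e2 : ∑ ℓ ∈ Finset.Icc 1 Nh, (ah ℓ : ℂ) / ((ρh ℓ : ℂ) + (-z))
      = ∑ ℓ ∈ Finset.Icc 1 Nh, (ah ℓ : ℂ) / ((ρh ℓ : ℂ) - z) :=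
    Finset.sum_congr rfl fun ℓ _ => by rw [← sub_eq_add_neg]
  unfold psi
  rw [e1, e2]
  push_cast
  ring

end ExpRootsAux


/-- For `σ > 0` and `k > 0`:
`k^{-ζ_{N+1}(q)} = k^{-√(2q)/σ} ∑_{n≥0} p_n q^{-n/2}` and
`k^{ζ̂_{N̂+1}(q)} = k^{√(2q)/σ} ∑_{n≥0} p̂_n q^{-n/2}`, the series converging absolutely for
every `q ∈ ℂ` with `|q| > R`. -/
theorem exponential_extra_roots_series_sigma_pos
    (σ A : ℝ) (N Nh : ℕ) (aa ρ ah ρh : ℕ → ℝ)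
    (hσ : 0 < σ)
    (hpos : ∀ ℓ ∈ Finset.Icc 1 N, 0 < aa ℓ)
    (hposh : ∀ ℓ ∈ Finset.Icc 1 Nh, 0 < ah ℓ)
    (hρ0 : ρ 0 = 0) (hρh0 : ρh 0 = 0)
    (hmono : ∀ i j, i < j → j ≤ N → ρ i < ρ j)
    (hmonoh : ∀ i j, i < j → j ≤ Nh → ρh i < ρh j)
    (k : ℝ) (hk : 0 < k)
    (ζM ζhM : ℝ → ℝ)
    (hζM : ∀ q : ℝ, 0 < q → ρ N < ζM q ∧ psi σ A N Nh aa ρ ah ρh (ζM q : ℂ) = (q : ℂ))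
    (hζhM : ∀ q : ℝ, 0 < q → ρh Nh < ζhM q ∧
        psi σ A N Nh aa ρ ah ρh (-(ζhM q : ℝ) : ℂ) = (q : ℂ)) :
    ∃ R > (0 : ℝ), ∃ p ph : ℕ → ℝ,
      (∀ q : ℂ, R < ‖q‖ →
        Summable (fun n : ℕ => ‖(p n : ℂ) * q ^ (-(n : ℂ) / 2)‖) ∧
        Summable (fun n : ℕ => ‖(ph n : ℂ) * q ^ (-(n : ℂ) / 2)‖)) ∧
      (∀ q : ℝ, R < q →
        k ^ (-(ζM q)) = k ^ (-(Real.sqrt (2 * q)) / σ) * ∑' n : ℕ, p n * q ^ (-(n : ℝ) / 2) ∧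
        k ^ (ζhM q) = k ^ (Real.sqrt (2 * q) / σ) * ∑' n : ℕ, ph n * q ^ (-(n : ℝ) / 2)) := by
  obtain ⟨R1, hR1, p, hp1, hp2⟩ := ExpRootsAux.core σ A N Nh aa ρ ah ρh hσ hpos hposh hρ0 hρh0
    hmono hmonoh k hk ζM hζM
  have hkinv : 0 < k⁻¹ := by positivity
  obtain ⟨R2, hR2, ph, hph1, hph2⟩ := ExpRootsAux.core σ (-A) Nh N ah ρh aa ρ hσ hposh hpos
    hρh0 hρ0 hmonoh hmono k⁻¹ hkinv ζhM (fun q hq => ⟨(hζhM q hq).1, by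
      rw [← ExpRootsAux.psi_neg]
      have h2 := (hζhM q hq).2
      push_cast at h2 ⊢
      exact h2⟩)
  have hrw : ∀ a : ℝ, k⁻¹ ^ (-a) = k ^ a := fun a => by
    rw [Real.inv_rpow hk.le, Real.rpow_neg hk.le, inv_inv]
  refine ⟨max R1 R2, lt_max_of_lt_left hR1, p, ph, fun q hq => ?_, fun q hq => ?_⟩
  · exact ⟨hp1 q (lt_of_le_of_lt (le_max_left _ _) hq),
      hph1 q (lt_of_le_of_lt (le_max_right _ _) hq)⟩
  · refine ⟨hp2 q (lt_of_le_of_lt (le_max_left _ _) hq), ?_⟩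
    have h := hph2 q (lt_of_le_of_lt (le_max_right _ _) hq)
    rw [neg_div, hrw, hrw] at h
    exact h
end

section
/- Assume σ = 0 and a > 0. Then there exist R > 0 and sequences (c_i)_{i≥1}, (d_n)_{n≥1} of real numbers with c_1 = d_1 = a such that both series ∑_{i=1}^∞ c_i q^{−i} and ∑_{n=1}^∞ d_n q^{−n} converge absolutely for every q ∈ ℂ with |q| > R, and for every real q > R one has 1/ζ_{N+1}(q) = ∑_{i=1}^∞ c_i q^{−i} and 1/(ζ_{N+1}(q) − 1) = ∑_{n=1}^∞ d_n q^{−n}. Analogously, if σ = 0 and a < 0, there exist R > 0 and real sequences (c_i)_{i≥1}, (d_n)_{n≥1} such that the corresponding series converge absolutely for |q| > R and for real q > R one has 1/ζ̂_{N̂+1}(q) = −∑_{i=1}^∞ c_i q^{−i} and 1/(ζ̂_{N̂+1}(q) + 1) = −∑_{n=1}^∞ d_n q^{−n}. -/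
open Finset
open scoped ENNReal NNReal Topology

noncomputable def psir (A : ℝ) (N Nh : ℕ) (aa ρ ah ρh : ℕ → ℝ) (x : ℝ) : ℝ :=
  A * x + x * ∑ ℓ ∈ Finset.Icc 1 N, aa ℓ / (ρ ℓ - x)
    - x * ∑ ℓ ∈ Finset.Icc 1 Nh, ah ℓ / (ρh ℓ + x)

set_option maxHeartbeats 2000000 in
lemma hyperexp_master (A : ℝ) (hA : 0 < A) (N Nh : ℕ) (aa ρ ah ρh : ℕ → ℝ)
    (hpos : ∀ ℓ ∈ Finset.Icc 1 N, 0 < aa ℓ)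
    (hposh : ∀ ℓ ∈ Finset.Icc 1 Nh, 0 < ah ℓ)
    (hρN : 0 ≤ ρ N)
    (hρle : ∀ ℓ ∈ Finset.Icc 1 N, ρ ℓ ≤ ρ N)
    (hρhpos : ∀ ℓ ∈ Finset.Icc 1 Nh, 0 ≤ ρh ℓ)
    (ζ : ℝ → ℝ) (s : ℝ)
    (hζ : ∀ q : ℝ, 0 < q → ρ N < ζ q ∧ psir A N Nh aa ρ ah ρh (ζ q) = q) :
    ∃ R > (0 : ℝ), ∃ c d : ℕ → ℝ, c 0 = A ∧ d 0 = A ∧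
      (∀ q : ℂ, R < ‖q‖ →
        Summable (fun n : ℕ => ‖(c n : ℂ) * q ^ (-(n : ℤ) - 1)‖) ∧
        Summable (fun n : ℕ => ‖(d n : ℂ) * q ^ (-(n : ℤ) - 1)‖)) ∧
      (∀ q : ℝ, R < q →
        1 / ζ q = ∑' n : ℕ, c n * q ^ (-(n : ℤ) - 1) ∧
        1 / (ζ q - s) = ∑' n : ℕ, d n * q ^ (-(n : ℤ) - 1)) := by
  have hA' : A ≠ 0 := ne_of_gt hA
  -- the function G
  set G : ℝ → ℝ := fun u => A + ∑ ℓ ∈ Finset.Icc 1 N, aa ℓ * u / (ρ ℓ * u - 1)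
      - ∑ ℓ ∈ Finset.Icc 1 Nh, ah ℓ * u / (ρh ℓ * u + 1) with hGdef
  have hGanal : AnalyticAt ℝ G 0 := by
    have h1 : AnalyticAt ℝ (fun u : ℝ => ∑ ℓ ∈ Finset.Icc 1 N, aa ℓ * u / (ρ ℓ * u - 1)) 0 := by
      refine Finset.analyticAt_fun_sum _ (fun ℓ _ => ?_)
      refine AnalyticAt.div (analyticAt_const.mul analyticAt_id) ?_ (by norm_num)
      exact (analyticAt_const.mul analyticAt_id).sub analyticAt_const
    have h2 : AnalyticAt ℝ (fun u : ℝ => ∑ ℓ ∈ Finset.Icc 1 Nh, ah ℓ * u / (ρh ℓ * u + 1)) 0 := by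
      refine Finset.analyticAt_fun_sum _ (fun ℓ _ => ?_)
      refine AnalyticAt.div (analyticAt_const.mul analyticAt_id) ?_ (by norm_num)
      exact (analyticAt_const.mul analyticAt_id).add analyticAt_const
    exact (analyticAt_const.add h1).sub h2
  have hG0 : G 0 = A := by simp [hGdef]
  have hG0' : G 0 ≠ 0 := by rw [hG0]; exact hA'
  set H : ℝ → ℝ := fun u => u / G u with hHdef
  have hHanal : AnalyticAt ℝ H 0 := analyticAt_id.div hGanal hG0'
  have hH0 : H 0 = 0 := by simp [hHdef]
  have hHderiv : HasDerivAt H A⁻¹ 0 := by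
    have h2 : HasDerivAt G (deriv G 0) 0 := hGanal.differentiableAt.hasDerivAt
    have h3 : HasDerivAt (fun u => u / G u) ((1 * G 0 - 0 * deriv G 0) / G 0 ^ 2) 0 :=
      (hasDerivAt_id (0:ℝ)).div h2 hG0'
    convert h3 using 1
    rw [hG0]
    field_simp
    ring
  obtain ⟨p, hp⟩ := hHanal
  have hp1 : p.coeff 1 = A⁻¹ := by
    rw [← hHderiv.deriv, hp.deriv]; rfl
  -- the local inverse
  have hsd : HasStrictDerivAt H A⁻¹ 0 := by
    have h := hp.hasStrictDerivAt
    have : (p 1 fun _ => (1:ℝ)) = A⁻¹ := hp1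
    rwa [this] at h
  have hAinv : (A⁻¹ : ℝ) ≠ 0 := inv_ne_zero hA'
  set i : ℝ ≃L[ℝ] ℝ := ContinuousLinearEquiv.unitsEquivAut ℝ (Units.mk0 A⁻¹ hAinv) with hidef
  have hstrictF : HasStrictFDerivAt H (i : ℝ →L[ℝ] ℝ) 0 := hsd.hasStrictFDerivAt_equiv hAinv
  set Φ := hstrictF.toOpenPartialHomeomorph H with hΦdef
  have hΦcoe : ⇑Φ = H := hstrictF.toOpenPartialHomeomorph_coe
  have h0mem : (0:ℝ) ∈ Φ.source := hstrictF.mem_toOpenPartialHomeomorph_source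
  have hpΦ : HasFPowerSeriesAt (⇑Φ) p 0 := by rw [hΦcoe]; exact hp
  have hfd : fderiv ℝ H 0 = (i : ℝ →L[ℝ] ℝ) := hstrictF.hasFDerivAt.fderiv
  have hp1' : p 1 = (continuousMultilinearCurryFin1 ℝ ℝ ℝ).symm (i : ℝ →L[ℝ] ℝ) := by
    rw [← hfd, hp.fderiv_eq]
    simp
  have hsymm := Φ.hasFPowerSeriesAt_symm h0mem hpΦ hp1'
  have hΦ0 : Φ 0 = 0 := by rw [hΦcoe]; exact hH0
  set pk := p.leftInv i 0 with hpkdef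
  have hK : HasFPowerSeriesAt (⇑Φ.symm) pk 0 := by rwa [hΦ0] at hsymm
  have hK0 : Φ.symm 0 = 0 := by
    have h := Φ.left_inv h0mem
    rwa [hΦ0] at h
  have hpk0 : pk.coeff 0 = 0 := by
    have h := hK.coeff_zero (fun _ => (1:ℝ))
    rw [← h] at hK0
    exact hK0
  have hpk1 : pk.coeff 1 = A := by
    have h := p.leftInv_coeff_one i 0
    rw [← hpkdef] at h
    rw [FormalMultilinearSeries.coeff, h]
    simp [hidef, ContinuousLinearEquiv.unitsEquivAut_apply_symm]
  -- the second function L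
  have hKanal : AnalyticAt ℝ (⇑Φ.symm) 0 := hK.analyticAt
  have hKD : HasDerivAt (⇑Φ.symm) A 0 := by
    have h : HasDerivAt (⇑Φ.symm) (pk.coeff 1) 0 := hK.hasDerivAt
    rwa [hpk1] at h
  set L : ℝ → ℝ := fun w => Φ.symm w / (1 - s * Φ.symm w) with hLdef
  have hden0 : (1 : ℝ) - s * Φ.symm 0 ≠ 0 := by rw [hK0]; norm_num
  have hLanal : AnalyticAt ℝ L 0 :=
    hKanal.div (analyticAt_const.sub (analyticAt_const.mul hKanal)) hden0
  have hLderiv : HasDerivAt L A 0 := by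
    have hden : HasDerivAt (fun w => 1 - s * Φ.symm w) (0 - s * A) 0 :=
      (hasDerivAt_const (0:ℝ) (1:ℝ)).sub ((hKD.const_mul s))
    have h3 : HasDerivAt (fun w => Φ.symm w / (1 - s * Φ.symm w))
        ((A * (1 - s * Φ.symm 0) - Φ.symm 0 * (0 - s * A)) / (1 - s * Φ.symm 0) ^ 2) 0 :=
      hKD.div hden hden0
    convert h3 using 1
    rw [hK0]
    field_simp
    ring
  obtain ⟨pl, hpl⟩ := hLanal
  have hpl0 : pl.coeff 0 = 0 := by
    have h := hpl.coeff_zero (fun _ => (1:ℝ))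
    have hL0 : L 0 = 0 := by simp [hLdef, hK0]
    rw [hL0] at h
    exact h
  have hpl1 : pl.coeff 1 = A := by
    rw [← hLderiv.deriv, hpl.deriv]; rfl
  -- radii
  obtain ⟨rk, hbk⟩ := hK
  obtain ⟨rl, hbl⟩ := hpl
  clear_value L pk Φ i
  obtain ⟨δ', hδ'0, hδ'lt⟩ := ENNReal.lt_iff_exists_nnreal_btwn.1 (lt_min hbk.r_pos hbl.r_pos)
  set δ : ℝ := (δ' : ℝ) with hδdef
  have hδ0 : 0 < δ := by exact_mod_cast hδ'0
  -- neighborhood in the source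
  obtain ⟨ε, hε0, hεsub⟩ := Metric.mem_nhds_iff.1 (Φ.open_source.mem_nhds h0mem)
  -- the radius R
  refine ⟨1 + δ⁻¹ + A / ε + A * (|s| + 2), by positivity, fun n => pk.coeff (n + 1),
    fun n => pl.coeff (n + 1), hpk1, hpl1, ?_, ?_⟩
  · -- summability
    intro q hq
    have hR0 : (0:ℝ) < 1 + δ⁻¹ + A / ε + A * (|s| + 2) := by positivity
    have hq0 : (0:ℝ) < ‖q‖ := lt_trans hR0 hq
    set t : ℝ := ‖q‖⁻¹ with htdef
    have ht0 : 0 < t := inv_pos.2 hq0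
    have htδ : t < δ := by
      have h1 : δ⁻¹ < ‖q‖ := by
        refine lt_trans ?_ hq
        have : (0:ℝ) < A / ε + A * (|s| + 2) := by positivity
        linarith
      calc t = ‖q‖⁻¹ := rfl
        _ < (δ⁻¹)⁻¹ := by
            exact inv_strictAnti₀ (by positivity) h1
        _ = δ := inv_inv δ
    have htnn : (‖(t:ℝ)‖₊ : ℝ≥0∞) < (δ' : ℝ≥0∞) := by
      rw [ENNReal.coe_lt_coe, ← NNReal.coe_lt_coe, coe_nnnorm, Real.norm_eq_abs,
        abs_of_pos ht0]
      exact htδ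
    have hmemk : (t:ℝ) ∈ Metric.eball (0:ℝ) pk.radius := by
      rw [mem_emetric_ball_zero_iff]
      exact lt_of_lt_of_le (lt_trans htnn (lt_of_lt_of_le hδ'lt (min_le_left _ _))) hbk.r_le
    have hmeml : (t:ℝ) ∈ Metric.eball (0:ℝ) pl.radius := by
      rw [mem_emetric_ball_zero_iff]
      exact lt_of_lt_of_le (lt_trans htnn (lt_of_lt_of_le hδ'lt (min_le_right _ _))) hbl.r_le
    have hzq : ∀ n : ℕ, ‖q ^ (-(n:ℤ) - 1)‖ = t ^ (n + 1) := by
      intro n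
      rw [show (-(n:ℤ) - 1) = -((n+1 : ℕ) : ℤ) by push_cast; ring, zpow_neg, zpow_natCast,
        norm_inv, norm_pow, htdef, inv_pow]
    constructor
    · have h1 := pk.summable_norm_apply hmemk
      have h2 : Summable (fun n : ℕ => ‖pk (n+1) fun _ => (t:ℝ)‖) :=
        (summable_nat_add_iff (f := fun m : ℕ => ‖pk m fun _ => (t:ℝ)‖) 1).2 h1
      refine h2.congr (fun n => ?_)
      rw [FormalMultilinearSeries.apply_eq_pow_smul_coeff, norm_mul, hzq n]
      rw [smul_eq_mul, Real.norm_eq_abs, abs_mul, abs_pow, abs_of_pos ht0]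
      rw [Complex.norm_real, Real.norm_eq_abs]
      ring
    · have h1 := pl.summable_norm_apply hmeml
      have h2 : Summable (fun n : ℕ => ‖pl (n+1) fun _ => (t:ℝ)‖) :=
        (summable_nat_add_iff (f := fun m : ℕ => ‖pl m fun _ => (t:ℝ)‖) 1).2 h1
      refine h2.congr (fun n => ?_)
      rw [FormalMultilinearSeries.apply_eq_pow_smul_coeff, norm_mul, hzq n]
      rw [smul_eq_mul, Real.norm_eq_abs, abs_mul, abs_pow, abs_of_pos ht0]
      rw [Complex.norm_real, Real.norm_eq_abs]
      ring
  · -- the series identities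
    intro q hq
    have hR0 : (0:ℝ) < 1 + δ⁻¹ + A / ε + A * (|s| + 2) := by positivity
    have hq0 : (0:ℝ) < q := lt_trans hR0 hq
    obtain ⟨hxρ, hψ⟩ := hζ q hq0
    set x : ℝ := ζ q with hxdef
    have hx0 : 0 < x := lt_of_le_of_lt hρN hxρ
    have hx' : x ≠ 0 := ne_of_gt hx0
    set u : ℝ := x⁻¹ with hudef
    have hu0 : 0 < u := inv_pos.2 hx0
    -- the bound q ≤ A * x
    have hqAx : q ≤ A * x := by
      have hsum1 : ∑ ℓ ∈ Finset.Icc 1 N, aa ℓ / (ρ ℓ - x) ≤ 0 := by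
        refine Finset.sum_nonpos (fun ℓ hℓ => ?_)
        have h1 : ρ ℓ - x < 0 := by
          have := hρle ℓ hℓ; linarith
        exact le_of_lt (div_neg_of_pos_of_neg (hpos ℓ hℓ) h1)
      have hsum2 : 0 ≤ ∑ ℓ ∈ Finset.Icc 1 Nh, ah ℓ / (ρh ℓ + x) := by
        refine Finset.sum_nonneg (fun ℓ hℓ => ?_)
        have h1 : 0 < ρh ℓ + x := by
          have := hρhpos ℓ hℓ; linarith
        exact le_of_lt (div_pos (hposh ℓ hℓ) h1)
      have hψ' : A * x + x * (∑ ℓ ∈ Finset.Icc 1 N, aa ℓ / (ρ ℓ - x))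
          - x * (∑ ℓ ∈ Finset.Icc 1 Nh, ah ℓ / (ρh ℓ + x)) = q := hψ
      nlinarith [mul_nonneg hx0.le hsum2, mul_nonpos_iff.2 (Or.inl ⟨hx0.le, hsum1⟩)]
    -- bounds on u and x
    have hqA : q / A ≤ x := (div_le_iff₀ hA).2 (by linarith)
    have huAq : u ≤ A / q := by
      rw [hudef]
      rw [show A / q = (q / A)⁻¹ by rw [inv_div]]
      exact inv_anti₀ (by positivity) hqA
    have huε : u < ε := by
      have h1 : A / q < ε := by
        rw [div_lt_iff₀ hq0]
        have h2 : A / ε < q := by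
          refine lt_trans ?_ hq
          have : (0:ℝ) < 1 + δ⁻¹ + A * (|s| + 2) := by positivity
          linarith
        calc A = (A / ε) * ε := by field_simp
          _ < q * ε := by exact mul_lt_mul_of_pos_right h2 hε0
          _ = ε * q := mul_comm _ _
      linarith
    have hxs : |s| + 1 < x := by
      have h1 : A * (|s| + 2) < q := by
        refine lt_trans ?_ hq
        have : (0:ℝ) < 1 + δ⁻¹ + A / ε := by positivity
        linarith
      nlinarith
    have hxs' : x - s ≠ 0 := by
      have : s ≤ |s| := le_abs_self s
      have : 0 < x - s := by linarith
      linarith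
    set w : ℝ := q⁻¹ with hwdef
    have hw0 : 0 < w := inv_pos.2 hq0
    have hwδ : w < δ := by
      have h1 : δ⁻¹ < q := by
        refine lt_trans ?_ hq
        have : (0:ℝ) < A / ε + A * (|s| + 2) := by positivity
        linarith
      calc w = q⁻¹ := rfl
        _ < (δ⁻¹)⁻¹ := inv_strictAnti₀ (by positivity) h1
        _ = δ := inv_inv δ
    -- H u = w
    have hGu : G u = q * u := by
      have hs1 : ∀ ℓ ∈ Finset.Icc 1 N, aa ℓ * u / (ρ ℓ * u - 1) = aa ℓ / (ρ ℓ - x) := by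
        intro ℓ hℓ
        have h1 : ρ ℓ - x < 0 := by have := hρle ℓ hℓ; linarith
        have h1' : ρ ℓ - x ≠ 0 := ne_of_lt h1
        rw [hudef]
        field_simp
      have hs2 : ∀ ℓ ∈ Finset.Icc 1 Nh, ah ℓ * u / (ρh ℓ * u + 1) = ah ℓ / (ρh ℓ + x) := by
        intro ℓ hℓ
        have h1 : 0 < ρh ℓ + x := by have := hρhpos ℓ hℓ; linarith
        have h1' : ρh ℓ + x ≠ 0 := ne_of_gt h1
        rw [hudef]
        field_simp
      have : G u = A + ∑ ℓ ∈ Finset.Icc 1 N, aa ℓ / (ρ ℓ - x)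
          - ∑ ℓ ∈ Finset.Icc 1 Nh, ah ℓ / (ρh ℓ + x) := by
        rw [hGdef]
        simp only
        rw [Finset.sum_congr rfl hs1, Finset.sum_congr rfl hs2]
      rw [this, hudef, eq_comm, mul_comm, inv_mul_eq_div, div_eq_iff hx']
      have hψ' : A * x + x * (∑ ℓ ∈ Finset.Icc 1 N, aa ℓ / (ρ ℓ - x))
          - x * (∑ ℓ ∈ Finset.Icc 1 Nh, ah ℓ / (ρh ℓ + x)) = q := hψ
      linarith [hψ']
      -- (A + S1 - S2) * x = q
    have hHu : H u = w := by
      rw [hHdef]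
      simp only
      rw [hGu, hwdef]
      rw [div_eq_iff (by positivity : q * u ≠ 0)]
      field_simp
    -- u is in the source, so Φ.symm w = u
    have husrc : u ∈ Φ.source := by
      apply hεsub
      rw [Metric.mem_ball, Real.dist_eq, sub_zero, abs_of_pos hu0]
      exact huε
    have hKw : Φ.symm w = u := by
      have h := Φ.left_inv husrc
      rw [show Φ u = H u from congrFun hΦcoe u, hHu] at h
      exact h
    -- membership in balls
    have hwmemk : w ∈ Metric.eball (0:ℝ) rk := by
      rw [mem_emetric_ball_zero_iff]
      refine lt_of_lt_of_le ?_ (le_of_lt (lt_of_lt_of_le hδ'lt (min_le_left _ _)))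
      rw [enorm_eq_nnnorm]
      rw [ENNReal.coe_lt_coe, ← NNReal.coe_lt_coe, coe_nnnorm, Real.norm_eq_abs,
        abs_of_pos hw0]
      exact hwδ
    have hwmeml : w ∈ Metric.eball (0:ℝ) rl := by
      rw [mem_emetric_ball_zero_iff]
      refine lt_of_lt_of_le ?_ (le_of_lt (lt_of_lt_of_le hδ'lt (min_le_right _ _)))
      rw [enorm_eq_nnnorm]
      rw [ENNReal.coe_lt_coe, ← NNReal.coe_lt_coe, coe_nnnorm, Real.norm_eq_abs,
        abs_of_pos hw0]
      exact hwδ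
    have hzpow : ∀ n : ℕ, (q:ℝ) ^ (-(n:ℤ) - 1) = w ^ (n + 1) := by
      intro n
      rw [show (-(n:ℤ) - 1) = -((n+1 : ℕ) : ℤ) by push_cast; ring, zpow_neg, zpow_natCast,
        hwdef, inv_pow]
    constructor
    · -- 1 / ζ q
      have hsum : HasSum (fun n : ℕ => pk n fun _ => w) (Φ.symm (0 + w)) := hbk.hasSum hwmemk
      rw [zero_add, hKw] at hsum
      have hsum' : HasSum (fun n : ℕ => pk.coeff n * w ^ n) u := by
        have heq : (fun n : ℕ => pk n fun _ => w) = fun n : ℕ => pk.coeff n * w ^ n := by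
          funext n
          rw [FormalMultilinearSeries.apply_eq_pow_smul_coeff, smul_eq_mul, mul_comm]
        rwa [heq] at hsum
      have hsum'' : HasSum (fun n : ℕ => pk.coeff (n+1) * w ^ (n+1)) u := by
        have h := (hasSum_nat_add_iff' (f := fun m : ℕ => pk.coeff m * w ^ m) 1).mpr hsum'
        simpa [hpk0] using h
      simp only [hzpow]
      rw [one_div]
      exact hsum''.tsum_eq.symm
    · -- 1 / (ζ q - s)
      have hsum : HasSum (fun n : ℕ => pl n fun _ => w) (L (0 + w)) := hbl.hasSum hwmeml
      rw [zero_add] at hsum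
      have hLw : L w = (x - s)⁻¹ := by
        rw [hLdef]
        simp only
        rw [hKw, hudef]
        have hd : (1:ℝ) - s * x⁻¹ = (x - s) / x := by field_simp
        rw [hd, div_div_eq_mul_div, inv_mul_cancel₀ hx', one_div]
      rw [hLw] at hsum
      have hsum' : HasSum (fun n : ℕ => pl.coeff n * w ^ n) (x - s)⁻¹ := by
        have heq : (fun n : ℕ => pl n fun _ => w) = fun n : ℕ => pl.coeff n * w ^ n := by
          funext n
          rw [FormalMultilinearSeries.apply_eq_pow_smul_coeff, smul_eq_mul, mul_comm]
        rwa [heq] at hsum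
      have hsum'' : HasSum (fun n : ℕ => pl.coeff (n+1) * w ^ (n+1)) (x - s)⁻¹ := by
        have h := (hasSum_nat_add_iff' (f := fun m : ℕ => pl.coeff m * w ^ m) 1).mpr hsum'
        simpa [hpl0] using h
      simp only [hzpow]
      rw [one_div]
      exact hsum''.tsum_eq.symm

lemma psi_ofReal (A : ℝ) (N Nh : ℕ) (aa ρ ah ρh : ℕ → ℝ) (x : ℝ) :
    psi 0 A N Nh aa ρ ah ρh (x : ℂ) = (psir A N Nh aa ρ ah ρh x : ℂ) := by
  simp only [psi, psir]
  push_cast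
  ring

lemma psi_neg_ofReal (A : ℝ) (N Nh : ℕ) (aa ρ ah ρh : ℕ → ℝ) (x : ℝ) :
    psi 0 A N Nh aa ρ ah ρh (-(x : ℂ)) = (psir (-A) Nh N ah ρh aa ρ x : ℂ) := by
  simp only [psi, psir]
  push_cast
  simp only [sub_neg_eq_add, ← sub_eq_add_neg]
  ring

/-- For `σ = 0` and `a > 0` (resp. `a < 0`): expansions of `1/ζ_{N+1}` and
`1/(ζ_{N+1} - 1)` (resp. `1/ζ̂_{N̂+1}` and `1/(ζ̂_{N̂+1} + 1)`) in powers of `q^{-1}`,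
converging absolutely for `|q| > R`, with leading coefficients `c_1 = d_1 = a` in the
first case.  Here `c n, d n` denote the paper's `c_{n+1}, d_{n+1}`. -/
theorem reciprocal_extra_root_series_sigma_zero
    (σ A : ℝ) (N Nh : ℕ) (aa ρ ah ρh : ℕ → ℝ)
    (hσ : σ = 0)
    (hpos : ∀ ℓ ∈ Finset.Icc 1 N, 0 < aa ℓ)
    (hposh : ∀ ℓ ∈ Finset.Icc 1 Nh, 0 < ah ℓ)
    (hρ0 : ρ 0 = 0) (hρh0 : ρh 0 = 0)
    (hmono : ∀ i j, i < j → j ≤ N → ρ i < ρ j)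
    (hmonoh : ∀ i j, i < j → j ≤ Nh → ρh i < ρh j)
    (ζM ζhM : ℝ → ℝ)
    (hζM : 0 < A → ∀ q : ℝ, 0 < q → ρ N < ζM q ∧
        psi σ A N Nh aa ρ ah ρh (ζM q : ℂ) = (q : ℂ))
    (hζhM : A < 0 → ∀ q : ℝ, 0 < q → ρh Nh < ζhM q ∧
        psi σ A N Nh aa ρ ah ρh (-(ζhM q : ℝ) : ℂ) = (q : ℂ)) :
    (0 < A →
      ∃ R > (0 : ℝ), ∃ c d : ℕ → ℝ, c 0 = A ∧ d 0 = A ∧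
        (∀ q : ℂ, R < ‖q‖ →
          Summable (fun n : ℕ => ‖(c n : ℂ) * q ^ (-(n : ℤ) - 1)‖) ∧
          Summable (fun n : ℕ => ‖(d n : ℂ) * q ^ (-(n : ℤ) - 1)‖)) ∧
        (∀ q : ℝ, R < q →
          1 / ζM q = ∑' n : ℕ, c n * q ^ (-(n : ℤ) - 1) ∧
          1 / (ζM q - 1) = ∑' n : ℕ, d n * q ^ (-(n : ℤ) - 1))) ∧
    (A < 0 →
      ∃ R > (0 : ℝ), ∃ c d : ℕ → ℝ,
        (∀ q : ℂ, R < ‖q‖ →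
          Summable (fun n : ℕ => ‖(c n : ℂ) * q ^ (-(n : ℤ) - 1)‖) ∧
          Summable (fun n : ℕ => ‖(d n : ℂ) * q ^ (-(n : ℤ) - 1)‖)) ∧
        (∀ q : ℝ, R < q →
          1 / ζhM q = -∑' n : ℕ, c n * q ^ (-(n : ℤ) - 1) ∧
          1 / (ζhM q + 1) = -∑' n : ℕ, d n * q ^ (-(n : ℤ) - 1))) := by
  subst hσ
  constructor
  · intro hA
    have hρN : 0 ≤ ρ N := by
      rcases Nat.eq_zero_or_pos N with h | h
      · rw [h, hρ0]
      · exact le_of_lt (hρ0 ▸ hmono 0 N h le_rfl)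
    have hρle : ∀ ℓ ∈ Finset.Icc 1 N, ρ ℓ ≤ ρ N := by
      intro ℓ hℓ
      rw [Finset.mem_Icc] at hℓ
      rcases eq_or_lt_of_le hℓ.2 with h | h
      · rw [h]
      · exact le_of_lt (hmono ℓ N h le_rfl)
    have hρhpos : ∀ ℓ ∈ Finset.Icc 1 Nh, 0 ≤ ρh ℓ := by
      intro ℓ hℓ
      rw [Finset.mem_Icc] at hℓ
      have h0 : (0:ℕ) < ℓ := hℓ.1
      exact le_of_lt (hρh0 ▸ hmonoh 0 ℓ h0 hℓ.2)
    have hζ : ∀ q : ℝ, 0 < q → ρ N < ζM q ∧ psir A N Nh aa ρ ah ρh (ζM q) = q := by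
      intro q hq
      obtain ⟨h1, h2⟩ := hζM hA q hq
      refine ⟨h1, ?_⟩
      rw [psi_ofReal] at h2
      exact_mod_cast h2
    obtain ⟨R, hR, c, d, hc0, hd0, hsummable, hseries⟩ :=
      hyperexp_master A hA N Nh aa ρ ah ρh hpos hposh hρN hρle hρhpos ζM 1 hζ
    exact ⟨R, hR, c, d, hc0, hd0, hsummable, hseries⟩
  · intro hA
    have hA' : 0 < -A := by linarith
    have hρN : 0 ≤ ρh Nh := by
      rcases Nat.eq_zero_or_pos Nh with h | h
      · rw [h, hρh0]
      · exact le_of_lt (hρh0 ▸ hmonoh 0 Nh h le_rfl)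
    have hρle : ∀ ℓ ∈ Finset.Icc 1 Nh, ρh ℓ ≤ ρh Nh := by
      intro ℓ hℓ
      rw [Finset.mem_Icc] at hℓ
      rcases eq_or_lt_of_le hℓ.2 with h | h
      · rw [h]
      · exact le_of_lt (hmonoh ℓ Nh h le_rfl)
    have hρhpos : ∀ ℓ ∈ Finset.Icc 1 N, 0 ≤ ρ ℓ := by
      intro ℓ hℓ
      rw [Finset.mem_Icc] at hℓ
      have h0 : (0:ℕ) < ℓ := hℓ.1
      exact le_of_lt (hρ0 ▸ hmono 0 ℓ h0 hℓ.2)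
    have hζ : ∀ q : ℝ, 0 < q → ρh Nh < ζhM q ∧ psir (-A) Nh N ah ρh aa ρ (ζhM q) = q := by
      intro q hq
      obtain ⟨h1, h2⟩ := hζhM hA q hq
      refine ⟨h1, ?_⟩
      rw [show (-(ζhM q : ℝ) : ℂ) = -((ζhM q : ℝ) : ℂ) by push_cast; ring,
        psi_neg_ofReal] at h2
      exact_mod_cast h2
    obtain ⟨R, hR, c, d, hc0, hd0, hsummable, hseries⟩ :=
      hyperexp_master (-A) hA' Nh N ah ρh aa ρ hposh hpos hρN hρle hρhpos ζhM (-1) hζ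
    refine ⟨R, hR, fun n => -(c n), fun n => -(d n), ?_, ?_⟩
    · intro q hq
      obtain ⟨h1, h2⟩ := hsummable q hq
      constructor
      · refine h1.congr fun n => ?_
        have hcast : ((-(c n) : ℝ) : ℂ) = -((c n : ℝ) : ℂ) := by push_cast; ring
        rw [hcast, neg_mul, norm_neg]
      · refine h2.congr fun n => ?_
        have hcast : ((-(d n) : ℝ) : ℂ) = -((d n : ℝ) : ℂ) := by push_cast; ring
        rw [hcast, neg_mul, norm_neg]
    · intro q hq
      obtain ⟨h1, h2⟩ := hseries q hq
      constructor
      · rw [h1, ← tsum_neg]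
        exact tsum_congr fun n => by ring
      · rw [show ζhM q + 1 = ζhM q - (-1) by ring, h2, ← tsum_neg]
        exact tsum_congr fun n => by ring
end
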